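/- arXiv:1403.2616 — 9 statements merged into one kernel-verified Lean document; each statement's English description precedes it below -/
import Mathlib

section
/- Let S: X → X and T: Y → Y be bijections of sets X and Y, and suppose f: X → Y and g: Y → X are injective maps satisfying f ∘ S = T ∘ f and g ∘ T = S ∘ g. If moreover S(X) = X and T(Y) = Y, then there exists a bijection h: X → Y with h ∘ S = T ∘ h, given on a suitable S-invariant subset A ⊆ X by h = f on A and h = g⁻¹ on X \ A. -/
/-- Dynamical (equivariant) Cantor–Bernstein: mutual equivariant injections
between two invertible systems yield an equivariant bijection, equal to `f`
on a suitable `S`-invariant set `A` and to `g⁻¹` off `A`. -/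
theorem stmt0 {X Y : Type*} (S : X → X) (T : Y → Y) (f : X → Y) (g : Y → X)
    (hS : Function.Bijective S) (hT : Function.Bijective T)
    (hf : Function.Injective f) (hg : Function.Injective g)
    (hfS : ∀ x, f (S x) = T (f x)) (hgT : ∀ y, g (T y) = S (g y)) :
    ∃ (A : Set X) (h : X → Y), (∀ x ∈ A, S x ∈ A) ∧ Function.Bijective h ∧
      (∀ x, h (S x) = T (h x)) ∧ (∀ x ∈ A, h x = f x) ∧ (∀ x ∉ A, g (h x) = x) := by
  classical
  set C : Set X := (Set.range g)ᶜ with hC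
  set A : Set X := ⋃ n, (g ∘ f)^[n] '' C with hA
  -- S commutes with g ∘ f
  have hGF : ∀ x, (g ∘ f) (S x) = S ((g ∘ f) x) := by
    intro x; simp only [Function.comp_apply]; rw [hfS, hgT]
  have hcomm : ∀ n x, (g ∘ f)^[n] (S x) = S ((g ∘ f)^[n] x) := by
    intro n
    induction n with
    | zero => intro x; simp
    | succ n ih =>
      intro x
      rw [Function.iterate_succ_apply', Function.iterate_succ_apply', ih, hGF]
  -- S preserves range g both ways
  have hrange : ∀ x, S x ∈ Set.range g ↔ x ∈ Set.range g := by
    intro x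
    constructor
    · rintro ⟨y, hy⟩
      obtain ⟨y', rfl⟩ := hT.2 y
      exact ⟨y', hS.1 (by rw [← hgT, hy])⟩
    · rintro ⟨y, rfl⟩
      exact ⟨T y, (hgT y).symm ▸ rfl⟩
  have hCmem : ∀ x, S x ∈ C ↔ x ∈ C := by
    intro x; simp only [hC, Set.mem_compl_iff, hrange]
  -- A is invariant both ways
  have hAS : ∀ x, S x ∈ A ↔ x ∈ A := by
    intro x
    constructor
    · intro hx
      obtain ⟨_, ⟨n, rfl⟩, c, hc, hcx⟩ := hx
      obtain ⟨c', rfl⟩ := hS.2 c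
      rw [hcomm] at hcx
      have : x = (g ∘ f)^[n] c' := (hS.1 hcx).symm
      exact Set.mem_iUnion.2 ⟨n, ⟨c', (hCmem c').1 hc, this.symm⟩⟩
    · intro hx
      obtain ⟨_, ⟨n, rfl⟩, c, hc, hcx⟩ := hx
      exact Set.mem_iUnion.2 ⟨n, ⟨S c, (hCmem c).2 hc, by rw [hcomm, hcx]⟩⟩
  have hgfA : ∀ x ∈ A, g (f x) ∈ A := by
    intro x hx
    obtain ⟨_, ⟨n, rfl⟩, c, hc, hcx⟩ := hx
    refine Set.mem_iUnion.2 ⟨n + 1, ⟨c, hc, ?_⟩⟩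
    rw [Function.iterate_succ_apply', hcx]; rfl
  have hnotA : ∀ x ∉ A, x ∈ Set.range g := by
    intro x hx
    by_contra hr
    exact hx (Set.mem_iUnion.2 ⟨0, ⟨x, hr, rfl⟩⟩)
  set h : X → Y := fun x => if hx : x ∈ A then f x else (hnotA x hx).choose with hh
  have hgh : ∀ x ∉ A, g (h x) = x := by
    intro x hx
    simp only [hh, dif_neg hx]
    exact (hnotA x hx).choose_spec
  have hhA : ∀ x ∈ A, h x = f x := fun x hx => dif_pos hx
  refine ⟨A, h, fun x hx => (hAS x).2 hx, ⟨?_, ?_⟩, ?_, hhA, hgh⟩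
  · -- injective
    intro a b hab
    by_cases ha : a ∈ A <;> by_cases hb : b ∈ A
    · rw [hhA a ha, hhA b hb] at hab; exact hf hab
    · exfalso
      have : g (f a) = b := by rw [← hhA a ha, hab]; exact hgh b hb
      exact hb (this ▸ hgfA a ha)
    · exfalso
      have : g (f b) = a := by rw [← hhA b hb, ← hab]; exact hgh a ha
      exact ha (this ▸ hgfA b hb)
    · have := congrArg g hab
      rwa [hgh a ha, hgh b hb] at this
  · -- surjective
    intro y
    by_cases hgy : g y ∈ A
    · obtain ⟨_, ⟨n, rfl⟩, c, hc, hcx⟩ := hgy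
      cases n with
      | zero => exact absurd ⟨y, hcx.symm⟩ hc
      | succ m =>
        rw [Function.iterate_succ_apply'] at hcx
        set x₀ := (g ∘ f)^[m] c with hx₀
        have hx₀A : x₀ ∈ A := Set.mem_iUnion.2 ⟨m, ⟨c, hc, rfl⟩⟩
        have : f x₀ = y := hg hcx
        exact ⟨x₀, by rw [hhA x₀ hx₀A, this]⟩
    · refine ⟨g y, ?_⟩
      have := hgh (g y) hgy
      exact hg this
  · -- equivariance
    intro x
    by_cases hx : x ∈ A
    · rw [hhA x hx, hhA (S x) ((hAS x).2 hx), hfS]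
    · have hx' : S x ∉ A := fun h' => hx ((hAS x).1 h')
      apply hg
      rw [hgh (S x) hx', hgT, hgh x hx]
end

section
/- Let (X, S, μ) be an ergodic measure-preserving invertible system and A a measurable set with μ(A) > 0. Let τ_A(x) = inf{n ≥ 1 : Sⁿx ∈ A} be the first return time. If every return time of points of A to A is a multiple of p (i.e., τ_A(x) ∈ pℕ for a.e. x ∈ A), then p is a period of (S, μ): there exist measurable sets A₀, …, A_{p−1} partitioning X modulo μ with S(Aᵢ) = A_{i+1 mod p} modulo μ. -/
open MeasureTheory symmDiff

/-- If all first-return times of an ergodic invertible system to a positive-measure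
set `A` are multiples of `p`, then `p` is a period: there is a `p`-cyclically moving
measurable partition modulo `μ`. -/
theorem stmt1 {X : Type*} [MeasurableSpace X] (S : X → X) (μ : Measure X)
    [IsProbabilityMeasure μ] (hS : Function.Bijective S) (hErg : Ergodic S μ)
    (A : Set X) (hA : MeasurableSet A) (hpos : 0 < μ A) (p : ℕ) (hp : 1 ≤ p)
    (hret : ∀ᵐ x ∂μ, x ∈ A → ∀ n, 1 ≤ n → S^[n] x ∈ A →
      (∀ m, 1 ≤ m → m < n → S^[m] x ∉ A) → p ∣ n) :
    ∃ B : ℕ → Set X, (∀ i, MeasurableSet (B i)) ∧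
      μ (Set.univ \ ⋃ i ∈ Finset.range p, B i) = 0 ∧
      (∀ i < p, ∀ j < p, i ≠ j → μ (B i ∩ B j) = 0) ∧
      ∀ i < p, μ ((S '' B i) ∆ (B ((i + 1) % p))) = 0 := by
  classical
  have hSm : Measurable S := hErg.measurable
  have hpre : MeasurePreserving S μ μ := hErg.toMeasurePreserving
  set H : Set X := {x | ∃ n, 0 < n ∧ S^[n] x ∈ A} with hHdef
  set τ : X → ℕ := fun x => sInf {n | 0 < n ∧ S^[n] x ∈ A} with hτdef
  have hτ_mem : ∀ x ∈ H, 0 < τ x ∧ S^[τ x] x ∈ A := by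
    intro x hx
    exact Nat.sInf_mem hx
  have hτ_min : ∀ x, ∀ m, 0 < m → m < τ x → S^[m] x ∉ A := by
    intro x m hm hlt hmem
    exact Nat.notMem_of_lt_sInf hlt ⟨hm, hmem⟩
  have hτ_eq : ∀ x, ∀ n, 0 < n → S^[n] x ∈ A →
      (∀ m, 0 < m → m < n → S^[m] x ∉ A) → τ x = n := by
    intro x n hn hmem hmin
    have hx : x ∈ H := ⟨n, hn, hmem⟩
    obtain ⟨h1, h2⟩ := hτ_mem x hx
    rcases lt_trichotomy (τ x) n with h | h | h
    · exact absurd h2 (hmin _ h1 h)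
    · exact h
    · exact absurd hmem (hτ_min x n hn h)
  set D : ℕ → Set X := fun i => {x | x ∈ H ∧ (τ x + i) % p = 0} with hDdef
  -- measurability
  have hDmeas : ∀ i, MeasurableSet (D i) := by
    intro i
    have heq : D i = ⋃ n, ⋃ _ : 0 < n ∧ (n + i) % p = 0,
        (S^[n] ⁻¹' A ∩ ⋂ m ∈ Finset.Ico 1 n, S^[m] ⁻¹' Aᶜ) := by
      ext x
      simp only [hDdef, Set.mem_setOf_eq, Set.mem_iUnion, Set.mem_inter_iff,
        Set.mem_preimage, Set.mem_iInter, Finset.mem_Ico, Set.mem_compl_iff]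
      constructor
      · rintro ⟨hx, hmod⟩
        obtain ⟨h1, h2⟩ := hτ_mem x hx
        exact ⟨τ x, ⟨h1, hmod⟩, h2, fun m hm => hτ_min x m hm.1 hm.2⟩
      · rintro ⟨n, ⟨hn, hmod⟩, hmem, hmin⟩
        have hτn : τ x = n := hτ_eq x n hn hmem (fun m h1 h2 => hmin m ⟨h1, h2⟩)
        exact ⟨⟨n, hn, hmem⟩, by rw [hτn]; exact hmod⟩
    rw [heq]
    refine MeasurableSet.iUnion fun n => MeasurableSet.iUnion fun _ => ?_
    exact ((hSm.iterate n) hA).inter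
      (MeasurableSet.biInter (Set.to_countable _) fun m _ => (hSm.iterate m) hA.compl)
  have hHmeas : MeasurableSet H := by
    have heq : H = ⋃ n, ⋃ _ : 0 < n, S^[n] ⁻¹' A := by
      ext x
      simp only [hHdef, Set.mem_setOf_eq, Set.mem_iUnion, Set.mem_preimage]
      constructor
      · rintro ⟨n, h1, h2⟩; exact ⟨n, h1, h2⟩
      · rintro ⟨n, h1, h2⟩; exact ⟨n, h1, h2⟩
    rw [heq]
    exact MeasurableSet.iUnion fun n => MeasurableSet.iUnion fun _ => (hSm.iterate n) hA
  -- H has full measure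
  have hsub : S ⁻¹' H ⊆ H := by
    rintro x ⟨n, hn, hmem⟩
    refine ⟨n + 1, n.succ_pos, ?_⟩
    rwa [Function.iterate_succ_apply]
  have hμH : μ H = 1 := by
    have hpreH : μ (S ⁻¹' H) = μ H := hpre.measure_preimage hHmeas.nullMeasurableSet
    have hae : S ⁻¹' H =ᵐ[μ] H :=
      ae_eq_of_subset_of_measure_ge hsub hpreH.ge (hSm hHmeas).nullMeasurableSet (measure_ne_top μ H)
    rcases hErg.quasiErgodic.ae_empty_or_univ₀ hHmeas.nullMeasurableSet hae with h | h
    · exfalso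
      have hsub' : S ⁻¹' A ⊆ H := by
        intro x hx
        exact ⟨1, one_pos, by simpa using hx⟩
      have : μ (S ⁻¹' A) = 0 := measure_mono_null hsub' (measure_congr h ▸ measure_empty)
      rw [hpre.measure_preimage hA.nullMeasurableSet] at this
      exact hpos.ne' this
    · rw [measure_congr h, measure_univ]
  -- pushing a.e. statements through S
  have push : ∀ (P : X → Prop), (∀ᵐ y ∂μ, P y) → ∀ᵐ x ∂μ, P (S x) := by
    intro P hP
    rw [ae_iff] at hP ⊢
    obtain ⟨T, hT1, hT2, hT3⟩ := exists_measurable_superset_of_null hP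
    refine measure_mono_null (t := S ⁻¹' T) (fun x hx => hT1 hx) ?_
    rw [hpre.measure_preimage hT2.nullMeasurableSet]
    exact hT3
  have hHae : ∀ᵐ x ∂μ, x ∈ H := by
    rw [ae_iff]
    have : {x | ¬ x ∈ H} = Hᶜ := rfl
    rw [this, prob_compl_eq_zero_iff hHmeas]
    exact hμH
  have base : ∀ᵐ y ∂μ, y ∈ H ∧ (y ∈ A → ∀ n, 1 ≤ n → S^[n] y ∈ A →
      (∀ m, 1 ≤ m → m < n → S^[m] y ∉ A) → p ∣ n) := hHae.and hret
  have good : ∀ᵐ x ∂μ, x ∈ H ∧ (S x ∈ H ∧ (S x ∈ A → ∀ n, 1 ≤ n → S^[n] (S x) ∈ A →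
      (∀ m, 1 ≤ m → m < n → S^[m] (S x) ∉ A) → p ∣ n)) :=
    hHae.and (push _ base)
  -- the key a.e. equivalence
  have key : ∀ᵐ x ∂μ, ∀ j : ℕ, (x ∈ D j ↔ S x ∈ D (j + 1)) := by
    filter_upwards [good] with x hx j
    obtain ⟨hxH, hSxH, hQSx⟩ := hx
    obtain ⟨ht1, htA⟩ := hτ_mem x hxH
    rcases eq_or_lt_of_le (show 1 ≤ τ x from ht1) with h1 | h2
    · -- τ x = 1
      have hτx : τ x = 1 := h1.symm
      have hSxA : S x ∈ A := by
        have := htA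
        rw [hτx] at this
        simpa using this
      obtain ⟨hs1, hsA⟩ := hτ_mem (S x) hSxH
      have hdvd : p ∣ τ (S x) :=
        hQSx hSxA (τ (S x)) hs1 hsA (fun m hm1 hm2 => hτ_min (S x) m hm1 hm2)
      obtain ⟨k, hk⟩ := hdvd
      constructor
      · rintro ⟨-, hmod⟩
        refine ⟨hSxH, ?_⟩
        rw [hτx] at hmod
        rw [hk, Nat.mul_add_mod]
        rwa [Nat.add_comm] at hmod
      · rintro ⟨-, hmod⟩
        refine ⟨hxH, ?_⟩
        rw [hτx]
        rw [hk, Nat.mul_add_mod] at hmod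
        rwa [Nat.add_comm]
    · -- τ x ≥ 2
      have hτSx : τ (S x) = τ x - 1 := by
        refine hτ_eq (S x) (τ x - 1) (by omega) ?_ ?_
        · have : S^[(τ x - 1) + 1] x ∈ A := by
            rw [Nat.sub_add_cancel ht1]; exact htA
          rwa [Function.iterate_succ_apply] at this
        · intro m hm hlt hmem
          rw [← Function.iterate_succ_apply] at hmem
          exact hτ_min x (m + 1) (by omega) (by omega) hmem
      constructor
      · rintro ⟨-, hmod⟩
        refine ⟨hSxH, ?_⟩
        rw [hτSx]
        have : τ x - 1 + (j + 1) = τ x + j := by omega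
        rw [this]; exact hmod
      · rintro ⟨-, hmod⟩
        refine ⟨hxH, ?_⟩
        rw [hτSx] at hmod
        have : τ x - 1 + (j + 1) = τ x + j := by omega
        rwa [this] at hmod
  -- periodicity of D
  have hDper : ∀ j k : ℕ, j % p = k % p → D j = D k := by
    intro j k h
    ext x
    simp only [hDdef, Set.mem_setOf_eq]
    have : (τ x + j) % p = (τ x + k) % p := by
      rw [Nat.add_mod, h, ← Nat.add_mod]
    rw [this]
  -- a.e. equality D j =ᵐ S⁻¹' D (j+1)
  have hae : ∀ j : ℕ, μ (D j ∆ (S ⁻¹' D (j + 1))) = 0 := by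
    intro j
    have : ∀ᵐ x ∂μ, x ∈ D j ↔ x ∈ S ⁻¹' D (j + 1) := by
      filter_upwards [key] with x hx
      exact hx j
    rw [measure_symmDiff_eq_zero_iff]
    exact Filter.eventuallyEq_set.mpr this
  have haeset : ∀ j : ℕ, D j =ᵐ[μ] S ⁻¹' D (j + 1) := by
    intro j
    exact measure_symmDiff_eq_zero_iff.mp (hae j)
  refine ⟨fun i => S ⁻¹' D (i + 1), fun i => hSm (hDmeas (i + 1)), ?_, ?_, ?_⟩
  · -- covering
    have hcov : ∀ᵐ x ∂μ, x ∈ ⋃ i ∈ Finset.range p, S ⁻¹' D (i + 1) := by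
      filter_upwards [hHae, key] with x hxH hkey
      -- find i < p with x ∈ D i
      set r := τ x % p with hr
      have hrlt : r < p := Nat.mod_lt _ hp
      have : ∃ i < p, x ∈ D i := by
        rcases Nat.eq_zero_or_pos r with h0 | hpos'
        · refine ⟨0, hp, hxH, ?_⟩
          simpa using h0
        · refine ⟨p - r, by omega, hxH, ?_⟩
          rw [Nat.add_mod, ← hr, Nat.mod_eq_of_lt (by omega : p - r < p)]
          have : r + (p - r) = p := by omega
          rw [this, Nat.mod_self]
      obtain ⟨i, hip, hxD⟩ := this
      have : x ∈ S ⁻¹' D (i + 1) := (hkey i).mp hxD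
      exact Set.mem_biUnion (Finset.mem_range.mpr hip) this
    rw [ae_iff] at hcov
    refine measure_mono_null ?_ hcov
    intro x hx
    simp only [Set.mem_diff] at hx
    exact hx.2
  · -- disjointness
    intro i hi j hj hij
    have : ∀ᵐ x ∂μ, ¬ (x ∈ S ⁻¹' D (i + 1) ∧ x ∈ S ⁻¹' D (j + 1)) := by
      filter_upwards [key] with x hkey
      rintro ⟨hxi, hxj⟩
      have hDi : x ∈ D i := (hkey i).mpr hxi
      have hDj : x ∈ D j := (hkey j).mpr hxj
      obtain ⟨-, hmi⟩ := hDi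
      obtain ⟨-, hmj⟩ := hDj
      have d1 : p ∣ τ x + i := Nat.dvd_of_mod_eq_zero hmi
      have d2 : p ∣ τ x + j := Nat.dvd_of_mod_eq_zero hmj
      rcases le_or_gt i j with h | h
      · have : p ∣ j - i := by
          have := Nat.dvd_sub d2 d1
          simpa [Nat.add_sub_add_left] using this
        have := Nat.eq_zero_of_dvd_of_lt this (by omega)
        omega
      · have : p ∣ i - j := by
          have := Nat.dvd_sub d1 d2
          simpa [Nat.add_sub_add_left] using this
        have := Nat.eq_zero_of_dvd_of_lt this (by omega)
        omega
    rw [ae_iff] at this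
    refine measure_mono_null ?_ this
    intro x hx
    simp only [Set.mem_inter_iff] at hx
    exact fun h => h hx
  · -- cyclicity
    intro i hi
    have himg : S '' (S ⁻¹' D (i + 1)) = D (i + 1) := Set.image_preimage_eq _ hS.surjective
    rw [himg]
    have hper : D ((i + 1) % p + 1) = D (i + 2) := by
      apply hDper
      rw [Nat.mod_add_mod]
    show μ (D (i + 1) ∆ (S ⁻¹' D ((i + 1) % p + 1))) = 0
    rw [hper]
    exact hae (i + 1)
end

section
/- Let (X, S, μ) be an ergodic invertible measure-preserving system with period q (i.e., there is a measurable X₀ with S^q(X₀) = X₀ and X₀, S(X₀), …, S^{q−1}(X₀) disjoint with union of full measure). Then any measurable set A with μ(A) > 0 contains a measurable subset B with μ(B) > 0 such that the greatest common divisor of the return times τ_B(B) is a multiple of q and is itself a period of (S, μ). -/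
open MeasureTheory symmDiff

private lemma symmDiff_subset_of_sandwich {X : Type*} {P N U V : Set X} (h1 : P ⊆ U) (h2 : U ⊆ P ∪ N)
    (h3 : P ⊆ V) (h4 : V ⊆ P ∪ N) : U ∆ V ⊆ N := by
  intro x hx
  rcases hx with ⟨hxU, hxV⟩ | ⟨hxV, hxU⟩
  · rcases h2 hxU with h | h
    · exact absurd (h3 h) hxV
    · exact h
  · rcases h4 hxV with h | h
    · exact absurd (h1 h) hxU
    · exact h

private lemma preimage_iterate_image {X : Type*} {S : X → X} (hS : Function.Injective S)
    (E : Set X) (n m : ℕ) : S^[n + m] ⁻¹' (S^[m] '' E) = S^[n] ⁻¹' E := by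
  ext x
  simp only [Set.mem_preimage]
  rw [show n + m = m + n from Nat.add_comm n m, Function.iterate_add_apply]
  exact (hS.iterate m).mem_set_image

private lemma dvd_of_dvd_first_return {X : Type*} {S : X → X} {B : Set X} {c : ℕ}
    (hc : ∀ n, 1 ≤ n → (∃ x ∈ B, S^[n] x ∈ B ∧ ∀ m, 1 ≤ m → m < n → S^[m] x ∉ B) → c ∣ n) :
    ∀ n, 1 ≤ n → ∀ x ∈ B, S^[n] x ∈ B → c ∣ n := by
  intro n
  induction n using Nat.strong_induction_on with
  | _ n ih =>
    intro hn x hx hxn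
    classical
    have hex : ∃ m, 1 ≤ m ∧ S^[m] x ∈ B := ⟨n, hn, hxn⟩
    set m := Nat.find hex with hm
    obtain ⟨hm1, hmB⟩ := Nat.find_spec hex
    have hmle : m ≤ n := Nat.find_le ⟨hn, hxn⟩
    have hcm : c ∣ m := by
      refine hc m hm1 ⟨x, hx, hmB, fun k hk1 hkm hkB => ?_⟩
      exact Nat.find_min hex (by omega) ⟨hk1, hkB⟩
    rcases eq_or_lt_of_le hmle with rfl | hlt
    · exact hcm
    · have h2 : S^[n - m] (S^[m] x) ∈ B := by
        rw [← Function.iterate_add_apply, Nat.sub_add_cancel hmle]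
        exact hxn
      have := ih (n - m) (by omega) (by omega) (S^[m] x) hmB h2
      have : c ∣ (n - m) + m := Nat.dvd_add this hcm
      rwa [Nat.sub_add_cancel hmle] at this


/-- In an ergodic invertible system with period `q`, every positive-measure set `A`
contains a positive-measure subset `B` whose gcd `d` of first-return times is a
multiple of `q` and is itself a period of the system. -/
theorem stmt2 {X : Type*} [MeasurableSpace X] (S : X → X) (μ : Measure X)
    [IsProbabilityMeasure μ] (hS : Function.Bijective S) (hErg : Ergodic S μ)
    (q : ℕ) (hq : 1 ≤ q) (X₀ : Set X) (hX₀ : MeasurableSet X₀)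
    (hcyc : μ ((S^[q] '' X₀) ∆ X₀) = 0)
    (hdisj : ∀ i < q, ∀ j < q, i ≠ j → μ (S^[i] '' X₀ ∩ S^[j] '' X₀) = 0)
    (hfull : μ (Set.univ \ ⋃ i ∈ Finset.range q, S^[i] '' X₀) = 0)
    (A : Set X) (hA : MeasurableSet A) (hpos : 0 < μ A) :
    ∃ B : Set X, B ⊆ A ∧ MeasurableSet B ∧ 0 < μ B ∧ ∃ d : ℕ, 1 ≤ d ∧
      (∀ n, 1 ≤ n → (∃ x ∈ B, S^[n] x ∈ B ∧ ∀ m, 1 ≤ m → m < n → S^[m] x ∉ B) → d ∣ n) ∧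
      (∀ c : ℕ, (∀ n, 1 ≤ n →
          (∃ x ∈ B, S^[n] x ∈ B ∧ ∀ m, 1 ≤ m → m < n → S^[m] x ∉ B) → c ∣ n) → c ∣ d) ∧
      q ∣ d ∧
      ∃ C : ℕ → Set X, (∀ i, MeasurableSet (C i)) ∧
        μ (Set.univ \ ⋃ i ∈ Finset.range d, C i) = 0 ∧
        (∀ i < d, ∀ j < d, i ≠ j → μ (C i ∩ C j) = 0) ∧
        ∀ i < d, μ ((S '' C i) ∆ (C ((i + 1) % d))) = 0 := by
  classical
  have hMP : ∀ n : ℕ, MeasurePreserving S^[n] μ μ := fun n => hErg.toMeasurePreserving.iterate n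
  have hnull : ∀ (n : ℕ) (E : Set X), μ E = 0 → μ (S^[n] ⁻¹' E) = 0 :=
    fun n E hE => (hMP n).quasiMeasurePreserving.preimage_null hE
  have hpii : ∀ (E : Set X) (n m : ℕ), S^[n + m] ⁻¹' (S^[m] '' E) = S^[n] ⁻¹' E :=
    fun E n m => preimage_iterate_image hS.injective E n m
  set Z : ℕ → Set X := fun n => S^[n] ⁻¹' X₀ with hZdef
  have hZm : ∀ n, MeasurableSet (Z n) := fun n => (hMP n).measurable hX₀
  -- (a) step
  have hstep : ∀ n, μ (Z (n + q) ∆ Z n) = 0 := by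
    intro n
    have h0 := hnull (n + q) _ hcyc
    rw [Set.preimage_symmDiff, hpii X₀ n q] at h0
    rwa [symmDiff_comm]
  -- reduce exponent mod q
  have hZmod : ∀ n, μ (Z n ∆ Z (n % q)) = 0 := by
    intro n
    induction n using Nat.strong_induction_on with
    | _ n ih =>
      rcases lt_or_ge n q with h | h
      · rw [Nat.mod_eq_of_lt h]; simp
      · have h1 : n - q + q = n := Nat.sub_add_cancel h
        have h2 := hstep (n - q)
        rw [h1] at h2
        have h3 := ih (n - q) (by omega)
        have h4 : (n - q) % q = n % q := by
          conv_rhs => rw [← h1]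
          rw [Nat.add_mod_right]
        rw [h4] at h3
        have : μ (Z n ∆ Z (n % q)) ≤ μ (Z n ∆ Z (n - q)) + μ (Z (n - q) ∆ Z (n % q)) :=
          measure_symmDiff_le _ _ _
        rw [h2, h3, add_zero] at this
        exact le_antisymm this zero_le
  -- base disjointness
  have hZdisj0 : ∀ i < q, ∀ j < q, i ≠ j → μ (Z i ∩ Z j) = 0 := by
    intro i hi j hj hij
    have h0 := hnull (i + j) _ (hdisj i hi j hj hij)
    rw [Set.preimage_inter] at h0
    rw [show i + j = j + i from Nat.add_comm i j] at h0
    rw [hpii X₀ j i] at h0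
    rw [show j + i = i + j from Nat.add_comm j i, hpii X₀ i j] at h0
    rwa [Set.inter_comm] at h0
  -- general disjointness
  have hZdisj : ∀ a b, a % q ≠ b % q → μ (Z a ∩ Z b) = 0 := by
    intro a b hab
    have hsub : Z a ∩ Z b ⊆ (Z a ∆ Z (a % q)) ∪ ((Z b ∆ Z (b % q)) ∪ (Z (a % q) ∩ Z (b % q))) := by
      intro x ⟨hxa, hxb⟩
      by_cases h1 : x ∈ Z (a % q)
      · by_cases h2 : x ∈ Z (b % q)
        · exact Or.inr (Or.inr ⟨h1, h2⟩)
        · exact Or.inr (Or.inl (Or.inl ⟨hxb, h2⟩))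
      · exact Or.inl (Or.inl ⟨hxa, h1⟩)
    have hdq : μ (Z (a % q) ∩ Z (b % q)) = 0 :=
      hZdisj0 _ (Nat.mod_lt _ (by omega)) _ (Nat.mod_lt _ (by omega)) hab
    have h5 : μ (Z a ∩ Z b) ≤ μ (Z a ∆ Z (a % q)) + (μ (Z b ∆ Z (b % q)) + μ (Z (a % q) ∩ Z (b % q))) :=
      (measure_mono hsub).trans ((measure_union_le _ _).trans
        (add_le_add le_rfl (measure_union_le _ _)))
    rw [hZmod a, hZmod b, hdq] at h5
    simpa using le_antisymm (by simpa using h5) zero_le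
  -- fullness
  have hZfull : μ (Set.univ \ ⋃ k ∈ Finset.range q, Z k) = 0 := by
    have h0 := hnull (q - 1) _ hfull
    refine measure_mono_null ?_ h0
    intro x hx
    simp only [Set.mem_diff, Set.mem_preimage, Set.mem_univ, true_and, Set.mem_iUnion,
      Finset.mem_range] at hx ⊢
    rintro ⟨i, hi, hmem⟩
    have hsplit : S^[q - 1] x = S^[i] (S^[q - 1 - i] x) := by
      rw [← Function.iterate_add_apply]
      congr 1
      omega
    rw [hsplit] at hmem
    have : S^[q - 1 - i] x ∈ X₀ := (hS.injective.iterate i).mem_set_image.mp hmem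
    exact hx ⟨q - 1 - i, by omega, this⟩

  -- pick a piece of the cycle meeting A with positive measure
  have hk : ∃ k, k < q ∧ 0 < μ (A ∩ Z k) := by
    by_contra hcon
    push_neg at hcon
    have hzero : ∀ k < q, μ (A ∩ Z k) = 0 := fun k hkq => le_antisymm (hcon k hkq) zero_le
    have hsub : A ⊆ (Set.univ \ ⋃ k ∈ Finset.range q, Z k) ∪ ⋃ k ∈ Finset.range q, (A ∩ Z k) := by
      intro x hx
      by_cases h : x ∈ ⋃ k ∈ Finset.range q, Z k
      · simp only [Set.mem_iUnion, Finset.mem_range] at h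
        obtain ⟨k, hkq, hk⟩ := h
        exact Or.inr (Set.mem_biUnion (Finset.mem_range.2 hkq) ⟨hx, hk⟩)
      · exact Or.inl ⟨trivial, h⟩
    have hle : μ A ≤ 0 + ∑ k ∈ Finset.range q, μ (A ∩ Z k) := by
      refine (measure_mono hsub).trans ((measure_union_le _ _).trans ?_)
      rw [hZfull]
      exact add_le_add le_rfl (measure_biUnion_finset_le _ _)
    have : μ A = 0 := by
      refine le_antisymm ?_ zero_le
      refine hle.trans ?_
      rw [zero_add]
      refine le_of_eq (Finset.sum_eq_zero ?_)
      exact fun k hkq => hzero k (Finset.mem_range.1 hkq)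
    exact hpos.ne' this
  obtain ⟨k, hkq, hkpos⟩ := hk
  set B₁ : Set X := A ∩ Z k with hB₁def
  have hB₁m : MeasurableSet B₁ := hA.inter (hZm k)
  have hB₁A : B₁ ⊆ A := Set.inter_subset_left
  -- essential return times
  set R : Set ℕ := {n | 1 ≤ n ∧ 0 < μ (B₁ ∩ S^[n] ⁻¹' B₁)} with hRdef
  -- returns are multiples of q
  have hRq : ∀ n ∈ R, q ∣ n := by
    rintro n ⟨hn1, hnpos⟩
    by_contra hndvd
    have hsub : B₁ ∩ S^[n] ⁻¹' B₁ ⊆ Z k ∩ Z (k + n) := by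
      rintro x ⟨⟨-, hx2⟩, hx3⟩
      refine ⟨hx2, ?_⟩
      have : S^[n] x ∈ Z k := hx3.2
      show x ∈ S^[k + n] ⁻¹' X₀
      rw [show k + n = k + n from rfl, Function.iterate_add, Set.preimage_comp]
      exact this
    have hmod : k % q ≠ (k + n) % q := by
      intro h
      have : q ∣ (k + n) - k := (Nat.modEq_iff_dvd' (Nat.le_add_right k n)).1 h
      rw [Nat.add_sub_cancel_left] at this
      exact hndvd this
    have := (measure_mono hsub).trans_eq (hZdisj k (k + n) hmod)
    exact hnpos.ne' (le_antisymm this zero_le)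
  -- R is nonempty
  have hRne : R.Nonempty := by
    by_contra hcon
    have hzero : ∀ n, 1 ≤ n → μ (B₁ ∩ S^[n] ⁻¹' B₁) = 0 := by
      intro n hn
      by_contra h
      exact hcon ⟨n, hn, pos_iff_ne_zero.2 h⟩
    have hAE : Pairwise (Function.onFun (AEDisjoint μ) fun n : ℕ => S^[n] ⁻¹' B₁) := by
      have key : ∀ a b : ℕ, a < b → μ (S^[a] ⁻¹' B₁ ∩ S^[b] ⁻¹' B₁) = 0 := by
        intro a b hab
        have heq : S^[a] ⁻¹' (B₁ ∩ S^[b - a] ⁻¹' B₁) = S^[a] ⁻¹' B₁ ∩ S^[b] ⁻¹' B₁ := by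
          rw [Set.preimage_inter, ← Set.preimage_comp, ← Function.iterate_add,
            Nat.sub_add_cancel hab.le]
        rw [← heq]
        exact hnull a _ (hzero (b - a) (by omega))
      intro a b hab
      rcases lt_or_gt_of_ne hab with h | h
      · exact key a b h
      · have := key b a h
        rwa [Set.inter_comm] at this
    have hsum : ∑' n : ℕ, μ (S^[n] ⁻¹' B₁) = μ (⋃ n : ℕ, S^[n] ⁻¹' B₁) :=
      (measure_iUnion₀ hAE (fun n => ((hMP n).measurable hB₁m).nullMeasurableSet)).symm
    have hconst : ∀ n : ℕ, μ (S^[n] ⁻¹' B₁) = μ B₁ := fun n => (hMP n).measure_preimage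
      hB₁m.nullMeasurableSet
    have htop : ∑' n : ℕ, μ (S^[n] ⁻¹' B₁) = ⊤ := by
      simp only [hconst]
      exact ENNReal.tsum_const_eq_top_of_ne_zero hkpos.ne'
    rw [htop] at hsum
    have : μ (⋃ n : ℕ, S^[n] ⁻¹' B₁) ≤ 1 := prob_le_one
    rw [← hsum] at this
    simp at this
  -- the gcd d of R
  set M : Set ℕ := {m | 0 < m ∧ ∃ T : Finset ℕ, ↑T ⊆ R ∧ T.gcd id = m} with hMdef
  obtain ⟨n₀, hn₀⟩ := hRne
  have hMne : M.Nonempty := by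
    refine ⟨n₀, hn₀.1, {n₀}, by simpa using hn₀, by simp⟩
  set d : ℕ := sInf M with hddef
  obtain ⟨hdpos, T₀, hT₀R, hT₀g⟩ := Nat.sInf_mem hMne
  have hd_dvd_R : ∀ n ∈ R, d ∣ n := by
    intro n hn
    have hgins : (insert n T₀).gcd id = Nat.gcd n d := by
      rw [Finset.gcd_insert, hT₀g]; rfl
    have hgpos : 0 < Nat.gcd n d := Nat.gcd_pos_of_pos_right _ hdpos
    have hgM : Nat.gcd n d ∈ M := ⟨hgpos, insert n T₀, by
      intro x hx
      simp only [Finset.coe_insert, Set.mem_insert_iff] at hx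
      rcases hx with rfl | hx
      · exact hn
      · exact hT₀R hx, hgins⟩
    have hdg : d ≤ Nat.gcd n d := Nat.sInf_le hgM
    have hgd : Nat.gcd n d ∣ d := Nat.gcd_dvd_right n d
    have hEq : Nat.gcd n d = d := le_antisymm (Nat.le_of_dvd hdpos hgd) hdg
    rw [← hEq]
    exact Nat.gcd_dvd_left n d
  have hcommon_dvd_d : ∀ c : ℕ, (∀ n ∈ R, c ∣ n) → c ∣ d := by
    intro c hc
    rw [hddef, ← hT₀g]
    exact Finset.dvd_gcd fun b hb => hc b (hT₀R hb)
  have hqd : q ∣ d := hcommon_dvd_d q hRq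

  -- remove null bad returns from B₁
  set f : ℕ → Set X := fun n => if 1 ≤ n ∧ ¬ d ∣ n then S^[n] ⁻¹' B₁ else ∅ with hfdef
  have hfm : ∀ n, MeasurableSet (f n) := by
    intro n
    simp only [hfdef]
    split
    · exact (hMP n).measurable hB₁m
    · exact MeasurableSet.empty
  set Bad : Set X := ⋃ n : ℕ, f n with hBaddef
  have hBadm : MeasurableSet Bad := MeasurableSet.iUnion hfm
  set B : Set X := B₁ \ Bad with hBdef
  have hBm : MeasurableSet B := hB₁m.diff hBadm
  have hBA : B ⊆ A := fun x hx => hB₁A hx.1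
  have hBB₁ : B ⊆ B₁ := Set.diff_subset
  have hN₁ : μ (B₁ ∩ Bad) = 0 := by
    have : B₁ ∩ Bad = ⋃ n : ℕ, (B₁ ∩ f n) := by
      rw [hBaddef, Set.inter_iUnion]
    rw [this]
    refine le_antisymm ((measure_iUnion_le _).trans (le_of_eq (ENNReal.tsum_eq_zero.mpr
      fun n => ?_))) zero_le
    show μ (B₁ ∩ f n) = 0
    simp only [hfdef]
    split
    · rename_i hcond
      by_contra h
      have hnR : n ∈ R := ⟨hcond.1, pos_iff_ne_zero.2 h⟩
      exact hcond.2 (hd_dvd_R n hnR)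
    · simp
  have hBpos : 0 < μ B := by
    have hsub : B₁ ⊆ B ∪ (B₁ ∩ Bad) := by
      intro x hx
      by_cases h : x ∈ Bad
      · exact Or.inr ⟨hx, h⟩
      · exact Or.inl ⟨hx, h⟩
    have h6 : μ B₁ ≤ μ B + μ (B₁ ∩ Bad) :=
      (measure_mono hsub).trans (measure_union_le _ _)
    rw [hN₁, add_zero] at h6
    exact lt_of_lt_of_le hkpos h6
  -- pointwise: all return times of B are multiples of d
  have hBpt : ∀ x ∈ B, ∀ n, 1 ≤ n → S^[n] x ∈ B → d ∣ n := by
    intro x hx n hn hxn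
    by_contra h
    refine hx.2 ?_
    refine Set.mem_iUnion.2 ⟨n, ?_⟩
    simp only [hfdef]
    rw [if_pos ⟨hn, h⟩]
    exact hBB₁ hxn
  have cond1 : ∀ n, 1 ≤ n → (∃ x ∈ B, S^[n] x ∈ B ∧ ∀ m, 1 ≤ m → m < n → S^[m] x ∉ B) → d ∣ n :=
    fun n hn ⟨x, hx, hxn, _⟩ => hBpt x hx n hn hxn
  have cond2 : ∀ c : ℕ, (∀ n, 1 ≤ n →
      (∃ x ∈ B, S^[n] x ∈ B ∧ ∀ m, 1 ≤ m → m < n → S^[m] x ∉ B) → c ∣ n) → c ∣ d := by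
    intro c hc
    have hc' := dvd_of_dvd_first_return hc
    refine hcommon_dvd_d c ?_
    rintro n hn
    have hpos' : 0 < μ (B ∩ S^[n] ⁻¹' B) := by
      have hsub : B₁ ∩ S^[n] ⁻¹' B₁ ⊆
          (B ∩ S^[n] ⁻¹' B) ∪ ((B₁ ∩ Bad) ∪ S^[n] ⁻¹' (B₁ ∩ Bad)) := by
        rintro x ⟨hx1, hx2⟩
        by_cases h1 : x ∈ Bad
        · exact Or.inr (Or.inl ⟨hx1, h1⟩)
        by_cases h2 : S^[n] x ∈ Bad
        · exact Or.inr (Or.inr ⟨hx2, h2⟩)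
        · exact Or.inl ⟨⟨hx1, h1⟩, ⟨hx2, h2⟩⟩
      have hle : μ (B₁ ∩ S^[n] ⁻¹' B₁) ≤
          μ (B ∩ S^[n] ⁻¹' B) + (μ (B₁ ∩ Bad) + μ (S^[n] ⁻¹' (B₁ ∩ Bad))) :=
        (measure_mono hsub).trans ((measure_union_le _ _).trans
          (add_le_add le_rfl (measure_union_le _ _)))
      rw [hN₁, hnull n _ hN₁, add_zero, add_zero] at hle
      exact lt_of_lt_of_le hn.2 hle
    obtain ⟨x, hx⟩ := nonempty_of_measure_ne_zero hpos'.ne'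
    exact hc' n hn.1 x hx.1 hx.2

  -- U: points that eventually hit B
  set U : Set X := ⋃ n : ℕ, S^[n] ⁻¹' B with hUdef
  have hUm : MeasurableSet U := MeasurableSet.iUnion fun n => (hMP n).measurable hBm
  have hBU : B ⊆ U := fun x hx => Set.mem_iUnion.2 ⟨0, by simpa using hx⟩
  have hUinv : S ⁻¹' U ⊆ U := by
    intro x hx
    obtain ⟨n, hn⟩ := Set.mem_iUnion.1 hx
    refine Set.mem_iUnion.2 ⟨n + 1, ?_⟩
    simp only [Set.mem_preimage] at hn ⊢
    rw [Function.iterate_succ_apply]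
    exact hn
  have hUc : μ Uᶜ = 0 := by
    rcases hErg.ae_empty_or_univ_of_preimage_ae_le hUm.nullMeasurableSet
        (HasSubset.Subset.eventuallyLE hUinv) with h | h
    · exfalso
      have h0 : μ U = 0 := ae_eq_empty.mp h
      exact hBpos.ne' (le_antisymm ((measure_mono hBU).trans h0.le) zero_le)
    · exact ae_eq_univ.mp h
  -- H: points that hit B infinitely often
  set H : Set X := {x | ∀ N : ℕ, ∃ n, N ≤ n ∧ S^[n] x ∈ B} with hHdef
  have hHm : MeasurableSet H := by
    have hHeq : H = ⋂ N : ℕ, ⋃ n : ℕ, ⋃ _ : N ≤ n, S^[n] ⁻¹' B := by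
      ext x
      simp [hHdef, Set.mem_iInter, Set.mem_iUnion, Set.mem_preimage]
    rw [hHeq]
    exact MeasurableSet.iInter fun N => MeasurableSet.iUnion fun n =>
      MeasurableSet.iUnion fun _ => (hMP n).measurable hBm
  have hHc : μ Hᶜ = 0 := by
    have hsub : Hᶜ ⊆ ⋃ N : ℕ, S^[N] ⁻¹' Uᶜ := by
      intro x hx
      simp only [hHdef, Set.mem_compl_iff, Set.mem_setOf_eq, not_forall] at hx
      obtain ⟨N, hN⟩ := hx
      push_neg at hN
      refine Set.mem_iUnion.2 ⟨N, ?_⟩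
      simp only [Set.mem_preimage, Set.mem_compl_iff, hUdef, Set.mem_iUnion, not_exists]
      intro m hm
      rw [← Function.iterate_add_apply] at hm
      exact hN (m + N) (by omega) hm
    have h7 : μ (⋃ N : ℕ, S^[N] ⁻¹' Uᶜ) ≤ ∑' N : ℕ, μ (S^[N] ⁻¹' Uᶜ) := measure_iUnion_le _
    have h8 : ∑' N : ℕ, μ (S^[N] ⁻¹' Uᶜ) = 0 :=
      ENNReal.tsum_eq_zero.mpr fun N => hnull N _ hUc
    exact le_antisymm ((measure_mono hsub).trans (h7.trans h8.le)) zero_le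
  have hHinv : ∀ x, S x ∈ H ↔ x ∈ H := by
    intro x
    simp only [hHdef, Set.mem_setOf_eq]
    constructor
    · intro hx N
      obtain ⟨n, hn1, hn2⟩ := hx N
      refine ⟨n + 1, by omega, ?_⟩
      rw [Function.iterate_succ_apply]
      exact hn2
    · intro hx N
      obtain ⟨n, hn1, hn2⟩ := hx (N + 1)
      refine ⟨n - 1, by omega, ?_⟩
      have h8 : S^[n - 1] (S x) = S^[n] x := by
        rw [← Function.iterate_succ_apply]
        congr 1
        omega
      rw [h8]
      exact hn2
  -- gaps between hits are multiples of d
  have hgap : ∀ (x : X) (n₁ n₂ : ℕ), n₁ ≤ n₂ → S^[n₁] x ∈ B → S^[n₂] x ∈ B → d ∣ (n₂ - n₁) := by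
    intro x n₁ n₂ hle h1 h2
    rcases eq_or_lt_of_le hle with rfl | hlt
    · simp
    · have h3 : S^[n₂ - n₁] (S^[n₁] x) ∈ B := by
        rw [← Function.iterate_add_apply, Nat.sub_add_cancel hle]
        exact h2
      exact hBpt _ h1 _ (by omega) h3
  -- congruence classes
  set pcl : ℕ → Set X := fun j => H ∩ {x | ∃ n, S^[n] x ∈ B ∧ (n + j) % d = 0} with hpcldef
  have hpclm : ∀ j, MeasurableSet (pcl j) := by
    intro j
    have heq : pcl j = H ∩ ⋃ n : ℕ, ⋃ _ : (n + j) % d = 0, S^[n] ⁻¹' B := by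
      ext x
      simp only [hpcldef, Set.mem_inter_iff, Set.mem_setOf_eq, Set.mem_iUnion, Set.mem_preimage]
      tauto
    rw [heq]
    exact hHm.inter (MeasurableSet.iUnion fun n => MeasurableSet.iUnion fun _ =>
      (hMP n).measurable hBm)
  have hpclH : ∀ j, pcl j ⊆ H := fun j => Set.inter_subset_left
  have huniq : ∀ (x : X) (i j : ℕ), x ∈ pcl i → x ∈ pcl j → i % d = j % d := by
    have key : ∀ (x : X) (i j ni nj : ℕ), ni ≤ nj → S^[ni] x ∈ B → S^[nj] x ∈ B →
        (ni + i) % d = 0 → (nj + j) % d = 0 → i % d = j % d := by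
      intro x i j ni nj hle hBi hBj hi hj
      have h1 : (ni + i) % d = (nj + j) % d := by rw [hi, hj]
      have h3 : Nat.ModEq d ni nj := (Nat.modEq_iff_dvd' hle).2 (hgap x ni nj hle hBi hBj)
      exact h3.add_left_cancel h1
    rintro x i j ⟨hxH, ni, hBi, hi⟩ ⟨-, nj, hBj, hj⟩
    rcases le_total ni nj with h | h
    · exact key x i j ni nj h hBi hBj hi hj
    · exact (key x j i nj ni h hBj hBi hj hi).symm
  have hexists : ∀ x ∈ H, ∃ j, j < d ∧ x ∈ pcl j := by
    intro x hx
    obtain ⟨n, -, hn⟩ := hx 0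
    refine ⟨(d - n % d) % d, Nat.mod_lt _ hdpos, hx, n, hn, ?_⟩
    have h1 : n % d < d := Nat.mod_lt _ hdpos
    by_cases h : n % d = 0
    · have h2 : (d - n % d) % d = 0 := by rw [h, Nat.sub_zero, Nat.mod_self]
      rw [h2, Nat.add_zero]
      exact h
    · have h2 : (d - n % d) % d = d - n % d := Nat.mod_eq_of_lt (by omega)
      rw [h2, Nat.add_mod, h2, show n % d + (d - n % d) = d by omega, Nat.mod_self]

  have hshiftp : ∀ (x : X) (j : ℕ), x ∈ pcl j → S x ∈ pcl (j + 1) := by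
    rintro x j ⟨hxH, n, hnB, hnj⟩
    obtain ⟨n', hn'1, hn'B⟩ := hxH 1
    have hn'j : (n' + j) % d = 0 := by
      rcases le_total n n' with h | h
      · have h3 : Nat.ModEq d n n' := (Nat.modEq_iff_dvd' h).2 (hgap x n n' h hnB hn'B)
        have h5 : (n' + j) % d = (n + j) % d := (h3.add_right j).symm
        rw [h5, hnj]
      · have h3 : Nat.ModEq d n' n := (Nat.modEq_iff_dvd' h).2 (hgap x n' n h hn'B hnB)
        have h5 : (n' + j) % d = (n + j) % d := h3.add_right j
        rw [h5, hnj]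
    refine ⟨(hHinv x).2 hxH, n' - 1, ?_, ?_⟩
    · have h8 : S^[n' - 1] (S x) = S^[n'] x := by
        rw [← Function.iterate_succ_apply]
        congr 1
        omega
      rw [h8]
      exact hn'B
    · rw [show n' - 1 + (j + 1) = n' + j by omega]
      exact hn'j
  have hpclmod : ∀ j, pcl j = pcl (j % d) := by
    intro j
    have hmm : (j % d) % d = j % d := Nat.mod_eq_of_lt (Nat.mod_lt _ hdpos)
    have harith : ∀ n : ℕ, (n + j) % d = (n + j % d) % d := by
      intro n
      conv_lhs => rw [Nat.add_mod]
      conv_rhs => rw [Nat.add_mod, hmm]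
    ext x
    simp only [hpcldef, Set.mem_inter_iff, Set.mem_setOf_eq]
    refine and_congr_right fun _ => exists_congr fun n => and_congr_right fun _ => ?_
    rw [harith n]
  -- the cyclic partition
  set C : ℕ → Set X := fun i => (if i % d = 0 then Hᶜ else (∅ : Set X)) ∪ pcl (i % d) with hCdef
  have hCm : ∀ i, MeasurableSet (C i) := by
    intro i
    refine MeasurableSet.union ?_ (hpclm _)
    split
    · exact hHm.compl
    · exact MeasurableSet.empty
  have hCfull : μ (Set.univ \ ⋃ i ∈ Finset.range d, C i) = 0 := by
    have hem : Set.univ \ ⋃ i ∈ Finset.range d, C i = ∅ := by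
      rw [Set.diff_eq_empty]
      intro x _
      by_cases hx : x ∈ H
      · obtain ⟨j, hjd, hj⟩ := hexists x hx
        refine Set.mem_biUnion (Finset.mem_range.2 hjd) (Or.inr ?_)
        rw [Nat.mod_eq_of_lt hjd]
        exact hj
      · refine Set.mem_biUnion (Finset.mem_range.2 (show 0 < d from hdpos)) (Or.inl ?_)
        rw [if_pos (by simp)]
        exact hx
    rw [hem, measure_empty]
  have hCdisj : ∀ i < d, ∀ j < d, i ≠ j → μ (C i ∩ C j) = 0 := by
    intro i hi j hj hij
    have hem : C i ∩ C j = ∅ := by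
      ext x
      simp only [hCdef, Set.mem_inter_iff, Set.mem_union, Set.mem_empty_iff_false, iff_false,
        not_and]
      rintro (hxi | hxi) (hxj | hxj)
      · by_cases h1 : i % d = 0
        · by_cases h2 : j % d = 0
          · refine absurd ?_ hij
            rw [Nat.mod_eq_of_lt hi] at h1
            rw [Nat.mod_eq_of_lt hj] at h2
            omega
          · rw [if_neg h2] at hxj; exact hxj
        · rw [if_neg h1] at hxi; exact hxi
      · by_cases h1 : i % d = 0
        · rw [if_pos h1] at hxi; exact hxi (hpclH _ hxj)
        · rw [if_neg h1] at hxi; exact hxi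
      · by_cases h2 : j % d = 0
        · rw [if_pos h2] at hxj; exact hxj (hpclH _ hxi)
        · rw [if_neg h2] at hxj; exact hxj
      · have hu := huniq x (i % d) (j % d) hxi hxj
        simp only [Nat.mod_eq_of_lt hi, Nat.mod_eq_of_lt hj] at hu
        exact hij hu
    rw [hem, measure_empty]
  have hCshift : ∀ i < d, μ ((S '' C i) ∆ C ((i + 1) % d)) = 0 := by
    intro i hi
    have hmm : ((i + 1) % d) % d = (i + 1) % d := Nat.mod_eq_of_lt (Nat.mod_lt _ hdpos)
    have h1 : pcl ((i + 1) % d) ⊆ S '' C i := by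
      intro y hy
      obtain ⟨x, rfl⟩ := hS.surjective y
      have hxH : x ∈ H := (hHinv x).1 (hpclH _ hy)
      obtain ⟨j, hjd, hxj⟩ := hexists x hxH
      have hSx : S x ∈ pcl ((j + 1) % d) := by
        rw [← hpclmod]
        exact hshiftp x j hxj
      have hu := huniq _ _ _ hSx hy
      rw [hmm, Nat.mod_eq_of_lt (Nat.mod_lt _ hdpos)] at hu
      have hji : j = i := by
        have hmodeq : Nat.ModEq d (j + 1) (i + 1) := hu
        have h9 : Nat.ModEq d j i := Nat.ModEq.add_right_cancel' 1 hmodeq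
        have h10 : j % d = i % d := h9
        rw [Nat.mod_eq_of_lt hjd, Nat.mod_eq_of_lt hi] at h10
        exact h10
      refine ⟨x, Or.inr ?_, rfl⟩
      rw [Nat.mod_eq_of_lt hi, ← hji]
      exact hxj
    have h2 : S '' C i ⊆ pcl ((i + 1) % d) ∪ Hᶜ := by
      rintro y ⟨x, hx, rfl⟩
      rcases hx with hx | hx
      · have hxHc : x ∉ H := by
          by_cases h : i % d = 0
          · rw [if_pos h] at hx; exact hx
          · rw [if_neg h] at hx; exact hx.elim
        exact Or.inr fun hSH => hxHc ((hHinv x).1 hSH)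
      · rw [Nat.mod_eq_of_lt hi] at hx
        have h11 := hshiftp x i hx
        rw [hpclmod (i + 1)] at h11
        exact Or.inl h11
    have h3 : pcl ((i + 1) % d) ⊆ C ((i + 1) % d) := by
      intro y hy
      refine Or.inr ?_
      rw [hmm]
      exact hy
    have h4 : C ((i + 1) % d) ⊆ pcl ((i + 1) % d) ∪ Hᶜ := by
      rintro y (hy | hy)
      · by_cases h : ((i + 1) % d) % d = 0
        · rw [if_pos h] at hy; exact Or.inr hy
        · rw [if_neg h] at hy; exact hy.elim
      · rw [hmm] at hy
        exact Or.inl hy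
    have h5 : (S '' C i) ∆ C ((i + 1) % d) ⊆ Hᶜ := symmDiff_subset_of_sandwich h1 h2 h3 h4
    exact le_antisymm ((measure_mono h5).trans hHc.le) zero_le
  exact ⟨B, hBA, hBm, hBpos, d, hdpos, cond1, cond2, hqd, C, hCm, hCfull, hCdisj, hCshift⟩
end

section
/- Let (X, T) be an aperiodic Borel dynamical system (Borel automorphism of a standard Borel space with no periodic points on the relevant set). For any Borel set A ⊆ X with first-return function τ_A(x) = inf{n ≥ 1 : Tⁿx ∈ A} and any n ≥ 1, the set B := {x ∈ X : τ_A(x) ∈ nℕ⁺} satisfies: B, TB, …, T^{n−1}B are pairwise disjoint, and for every ergodic T-invariant probability measure μ, μ(O(A) \ ⋃_{j=0}^{n−1} TʲB) ≤ n / min_{x∈A} τ_A(x), where O(A) = ⋃_{p∈ℤ} T^p A. -/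
open MeasureTheory

/-- Key claim of the Borel Rokhlin tower construction (Glasner–Weiss): for an
aperiodic Borel automorphism `T`, a Borel set `A` whose first-return times are all
`≥ N`, and `B := {x : τ_A(x) ∈ nℕ⁺}`, the sets `B, TB, …, T^{n−1}B` are pairwise
disjoint and every ergodic invariant probability measure gives
`O(A) \ ⋃_{j<n} TʲB` measure at most `n / N`. -/
theorem stmt5 {X : Type*} [MeasurableSpace X] [StandardBorelSpace X]
    (T : Equiv.Perm X) (hT : Measurable T) (hT' : Measurable T.symm)
    (haper : ∀ x : X, ∀ m, 1 ≤ m → (⇑T)^[m] x ≠ x)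
    (A : Set X) (hA : MeasurableSet A) (n N : ℕ) (hn : 1 ≤ n) (hN : 1 ≤ N)
    (hmin : ∀ x ∈ A, ∀ m, 1 ≤ m → m < N → (⇑T)^[m] x ∉ A)
    (B : Set X)
    (hB : B = {x | ∃ m, 1 ≤ m ∧ n ∣ m ∧ (⇑T)^[m] x ∈ A ∧
      ∀ j, 1 ≤ j → j < m → (⇑T)^[j] x ∉ A}) :
    (∀ i < n, ∀ j < n, i ≠ j → ((⇑T)^[i] '' B) ∩ ((⇑T)^[j] '' B) = ∅) ∧
    ∀ μ : Measure X, IsProbabilityMeasure μ → Ergodic T μ →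
      μ ((⋃ p : ℤ, ⇑(T ^ p) '' A) \ ⋃ j ∈ Finset.range n, (⇑T)^[j] '' B)
        ≤ (n : ENNReal) / (N : ENNReal) := by
  -- basic inverse facts
  have hTs : ∀ (j : ℕ) (x : X), (⇑T)^[j] ((⇑T.symm)^[j] x) = x :=
    fun j x => (T.right_inv.iterate j) x
  have hsT : ∀ (j : ℕ) (x : X), (⇑T.symm)^[j] ((⇑T)^[j] x) = x :=
    fun j x => (T.left_inv.iterate j) x
  have himg : ∀ (k : ℕ) (S : Set X), (⇑T)^[k] '' S = (⇑T.symm)^[k] ⁻¹' S :=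
    fun k S => congrFun
      (Set.image_eq_preimage_of_inverse (T.left_inv.iterate k) (T.right_inv.iterate k)) S
  have himg' : ∀ (k : ℕ) (S : Set X), (⇑T.symm)^[k] '' S = (⇑T)^[k] ⁻¹' S :=
    fun k S => congrFun
      (Set.image_eq_preimage_of_inverse (T.right_inv.iterate k) (T.left_inv.iterate k)) S
  -- Part 1 : disjointness
  have key : ∀ i j, i < j → j < n → ((⇑T)^[i] '' B) ∩ ((⇑T)^[j] '' B) = ∅ := by
    intro i j hij hjn
    rw [Set.eq_empty_iff_forall_notMem]
    rintro z ⟨⟨x, hx, hxz⟩, ⟨y, hy, hyz⟩⟩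
    have hxy : x = (⇑T)^[j - i] y := by
      have h1 : (⇑T)^[i] x = (⇑T)^[i] ((⇑T)^[j - i] y) := by
        rw [← Function.iterate_add_apply]
        rw [hxz, ← hyz]
        congr 1
        omega
      exact (T.injective.iterate i) h1
    rw [hB] at hx hy
    obtain ⟨m, hm1, hmd, hmA, hmmin⟩ := hx
    obtain ⟨m', hm'1, hm'd, hm'A, hm'min⟩ := hy
    set d := j - i with hd
    have hd1 : 1 ≤ d := by omega
    have hdn : d < n := by omega
    have hnm' : n ≤ m' := Nat.le_of_dvd (by omega) hm'd
    -- T^[m' - d] x = T^[m'] y ∈ A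
    have h2 : (⇑T)^[m' - d] x = (⇑T)^[m'] y := by
      rw [hxy, ← Function.iterate_add_apply]
      congr 1
      omega
    have h3 : m + d ≤ m' := by
      by_contra hcon
      have h4 : m' - d < m := by omega
      have h5 : 1 ≤ m' - d := by omega
      exact hmmin _ h5 h4 (by rw [h2]; exact hm'A)
    -- T^[m + d] y = T^[m] x ∈ A
    have h6 : (⇑T)^[m + d] y = (⇑T)^[m] x := by
      rw [hxy, ← Function.iterate_add_apply]
    have h7 : m' ≤ m + d := by
      by_contra hcon
      exact hm'min (m + d) (by omega) (by omega) (h6 ▸ hmA)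
    have h8 : m' = m + d := by omega
    have h9 : n ∣ d := by
      have := Nat.dvd_sub hm'd hmd
      rwa [h8, Nat.add_sub_cancel_left] at this
    exact absurd (Nat.le_of_dvd (by omega) h9) (by omega)
  constructor
  · intro i hi j hj hij
    rcases lt_or_gt_of_ne hij with h | h
    · exact key i j h hj
    · rw [Set.inter_comm]; exact key j i h hi
  -- Part 2 : the measure estimate
  intro μ hμ hE
  classical
  have mp : MeasurePreserving (⇑T) μ μ := hE.toMeasurePreserving
  have mps : MeasurePreserving (⇑T.symm) μ μ := by
    let e : X ≃ᵐ X := ⟨T, hT, hT'⟩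
    exact MeasurePreserving.symm e mp
  have himgA : ∀ k : ℕ, μ ((⇑T)^[k] '' A) = μ A := by
    intro k
    rw [himg]
    exact (mps.iterate k).measure_preimage hA.nullMeasurableSet
  have himgA' : ∀ k : ℕ, μ ((⇑T.symm)^[k] '' A) = μ A := by
    intro k
    rw [himg']
    exact (mp.iterate k).measure_preimage hA.nullMeasurableSet
  have hpowA : ∀ p : ℤ, μ (⇑(T ^ p) '' A) = μ A := by
    intro p
    rcases p with k | k
    · have : (T ^ (Int.ofNat k) : Equiv.Perm X) = T ^ k := by
        rw [Int.ofNat_eq_coe, zpow_natCast]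
      rw [this, ← Equiv.Perm.iterate_eq_pow]
      exact himgA k
    · have h1 : (T ^ (Int.negSucc k) : Equiv.Perm X) = (T⁻¹) ^ (k + 1) := by
        rw [zpow_negSucc, inv_pow]
      have h2 : ⇑(T⁻¹ : Equiv.Perm X) = ⇑T.symm := rfl
      rw [h1, ← Equiv.Perm.iterate_eq_pow, h2]
      exact himgA' (k + 1)
  -- μ A ≤ 1/N
  have hANle : μ A ≤ (N : ENNReal)⁻¹ := by
    have hdisjN : ∀ i j, i < j → j < N →
        Disjoint ((⇑T)^[i] ⁻¹' A) ((⇑T)^[j] ⁻¹' A) := by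
      intro i j hij hjN
      rw [Set.disjoint_left]
      intro x hxi hxj
      have : (⇑T)^[j] x = (⇑T)^[j - i] ((⇑T)^[i] x) := by
        rw [← Function.iterate_add_apply]
        congr 1
        omega
      exact hmin _ hxi (j - i) (by omega) (by omega) (this ▸ hxj)
    have hsum : ∑ i ∈ Finset.range N, μ ((⇑T)^[i] ⁻¹' A)
        = μ (⋃ i ∈ Finset.range N, (⇑T)^[i] ⁻¹' A) := by
      refine (measure_biUnion_finset ?_ ?_).symm
      · intro i hi j hj hij
        rcases lt_or_gt_of_ne hij with h | h
        · exact hdisjN i j h (Finset.mem_range.mp hj)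
        · exact (hdisjN j i h (Finset.mem_range.mp hi)).symm
      · intro i _
        exact (hT.iterate i) hA
    have hval : ∀ i : ℕ, μ ((⇑T)^[i] ⁻¹' A) = μ A :=
      fun i => (mp.iterate i).measure_preimage hA.nullMeasurableSet
    have hle1 : (N : ENNReal) * μ A ≤ 1 := by
      calc (N : ENNReal) * μ A = ∑ _i ∈ Finset.range N, μ A := by
            rw [Finset.sum_const, Finset.card_range, nsmul_eq_mul]
        _ = ∑ i ∈ Finset.range N, μ ((⇑T)^[i] ⁻¹' A) :=
            Finset.sum_congr rfl fun i _ => (hval i).symm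
        _ = μ (⋃ i ∈ Finset.range N, (⇑T)^[i] ⁻¹' A) := hsum
        _ ≤ 1 := prob_le_one
    exact ENNReal.le_inv_iff_mul_le.mpr (by rwa [mul_comm])
  by_cases hA0 : μ A = 0
  · -- orbit of A is null
    have hnull : μ (⋃ p : ℤ, ⇑(T ^ p) '' A) = 0 :=
      measure_iUnion_null fun p => by rw [hpowA p]; exact hA0
    calc μ ((⋃ p : ℤ, ⇑(T ^ p) '' A) \ ⋃ j ∈ Finset.range n, (⇑T)^[j] '' B)
        ≤ μ (⋃ p : ℤ, ⇑(T ^ p) '' A) := measure_mono Set.diff_subset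
      _ = 0 := hnull
      _ ≤ (n : ENNReal) / (N : ENNReal) := zero_le
  · -- set of points whose forward orbit hits A
    set G : Set X := ⋃ m : ℕ, (⇑T)^[m + 1] ⁻¹' A with hG
    have hGmeas : MeasurableSet G :=
      MeasurableSet.iUnion fun m => (hT.iterate (m + 1)) hA
    have hsubG : ⇑T ⁻¹' G ⊆ G := by
      rintro x hx
      simp only [hG, Set.mem_preimage, Set.mem_iUnion] at hx ⊢
      obtain ⟨m, hm⟩ := hx
      exact ⟨m + 1, by rwa [Function.iterate_succ_apply]⟩
    have hGc : μ Gᶜ = 0 := by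
      rcases hE.ae_empty_or_univ_of_preimage_ae_le' hGmeas.nullMeasurableSet
          (HasSubset.Subset.eventuallyLE hsubG) (measure_ne_top μ G) with h | h
      · exfalso
        have h1 : μ ((⇑T)^[0 + 1] ⁻¹' A) = μ A :=
          (mp.iterate (0 + 1)).measure_preimage hA.nullMeasurableSet
        have h2 : (⇑T)^[0 + 1] ⁻¹' A ⊆ G :=
          Set.subset_iUnion (fun m : ℕ => (⇑T)^[m + 1] ⁻¹' A) 0
        have h3 : μ G = 0 := ae_eq_empty.mp h
        exact hA0 (le_antisymm (h1 ▸ (h3 ▸ measure_mono h2)) zero_le)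
      · exact ae_eq_univ.mp h
    -- key inclusion
    have hincl : (⋃ p : ℤ, ⇑(T ^ p) '' A) \ (⋃ j ∈ Finset.range n, (⇑T)^[j] '' B)
        ⊆ Gᶜ ∪ ⋃ j ∈ Finset.range n, (⇑T)^[j] '' A := by
      rintro x ⟨_, hxB⟩
      by_cases hxG : x ∈ G
      swap
      · exact Or.inl hxG
      right
      by_contra hnoA
      simp only [Set.mem_iUnion, Finset.mem_range, not_exists] at hnoA
      have hnoA' : ∀ i, i < n → (⇑T.symm)^[i] x ∉ A := by
        intro i hi hmem
        exact hnoA i hi ⟨(⇑T.symm)^[i] x, hmem, hTs i x⟩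
      simp only [hG, Set.mem_iUnion, Set.mem_preimage] at hxG
      -- minimal return time m
      have hex : ∃ k, (⇑T)^[k + 1] x ∈ A := hxG
      set m : ℕ := Nat.find hex + 1 with hm
      have hmA : (⇑T)^[m] x ∈ A := Nat.find_spec hex
      have hmmin : ∀ k, 1 ≤ k → k < m → (⇑T)^[k] x ∉ A := by
        intro k hk1 hk2 hmem
        refine Nat.find_min hex (m := k - 1) (by omega) ?_
        have : k - 1 + 1 = k := by omega
        rwa [this]
      set j : ℕ := if m % n = 0 then 0 else n - m % n with hj
      have hmodlt : m % n < n := Nat.mod_lt _ (by omega)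
      have hjn : j < n := by
        by_cases h0 : m % n = 0
        · rw [hj, if_pos h0]; omega
        · rw [hj, if_neg h0]; omega
      have hdvdmj : n ∣ m + j := by
        by_cases h0 : m % n = 0
        · rw [hj, if_pos h0, Nat.add_zero]
          exact Nat.dvd_of_mod_eq_zero h0
        · rw [hj, if_neg h0]
          have h1 : n ∣ m - m % n := Nat.dvd_sub_mod m
          have h2 : m % n ≤ m := Nat.mod_le m n
          have h3 : m + (n - m % n) = (m - m % n) + n := by omega
          rw [h3]
          exact dvd_add h1 dvd_rfl
      set y : X := (⇑T.symm)^[j] x with hy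
      have hyB : y ∈ B := by
        rw [hB]
        refine ⟨m + j, by omega, hdvdmj, ?_, ?_⟩
        · rw [hy, Function.iterate_add_apply, hTs j x]
          exact hmA
        · intro k hk1 hk2
          rcases lt_trichotomy k j with hkj | hkj | hkj
          · -- T^[k] y = T.symm^[j-k] x
            have h1 : (⇑T)^[k] y = (⇑T.symm)^[j - k] x := by
              rw [hy]
              have h2 : (⇑T.symm)^[j] x = (⇑T.symm)^[k] ((⇑T.symm)^[j - k] x) := by
                rw [← Function.iterate_add_apply]
                congr 1
                omega
              rw [h2, hTs k]
            rw [h1]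
            exact hnoA' (j - k) (by omega)
          · have h1 : (⇑T)^[k] y = x := by rw [hy, hkj]; exact hTs j x
            rw [h1]
            simpa using hnoA' 0 (by omega)
          · have h1 : (⇑T)^[k] y = (⇑T)^[k - j] x := by
              rw [hy]
              have : (⇑T)^[k] ((⇑T.symm)^[j] x)
                  = (⇑T)^[k - j] ((⇑T)^[j] ((⇑T.symm)^[j] x)) := by
                rw [← Function.iterate_add_apply]
                congr 1
                omega
              rw [this, hTs j x]
            rw [h1]
            exact hmmin (k - j) (by omega) (by omega)
      exact hxB (Set.mem_biUnion (Finset.mem_range.mpr hjn) ⟨y, hyB, hTs j x⟩)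
    calc μ ((⋃ p : ℤ, ⇑(T ^ p) '' A) \ ⋃ j ∈ Finset.range n, (⇑T)^[j] '' B)
        ≤ μ (Gᶜ ∪ ⋃ j ∈ Finset.range n, (⇑T)^[j] '' A) := measure_mono hincl
      _ ≤ μ Gᶜ + μ (⋃ j ∈ Finset.range n, (⇑T)^[j] '' A) := measure_union_le _ _
      _ = μ (⋃ j ∈ Finset.range n, (⇑T)^[j] '' A) := by rw [hGc, zero_add]
      _ ≤ ∑ j ∈ Finset.range n, μ ((⇑T)^[j] '' A) := measure_biUnion_finset_le _ _
      _ = ∑ _j ∈ Finset.range n, μ A := Finset.sum_congr rfl fun j _ => himgA j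
      _ = (n : ENNReal) * μ A := by rw [Finset.sum_const, Finset.card_range, nsmul_eq_mul]
      _ ≤ (n : ENNReal) * (N : ENNReal)⁻¹ := mul_le_mul_right hANle _
      _ = (n : ENNReal) / (N : ENNReal) := by rw [div_eq_mul_inv]
end

section
/- Let (X, T) be an aperiodic Borel dynamical system on a standard Borel space. For every n ≥ 1 and δ > 0 there exists a Borel set B ⊆ X such that B, TB, …, T^{n−1}B are pairwise disjoint and μ(⋃_{k=0}^{n−1} TᵏB) > 1 − δ for every aperiodic ergodic T-invariant probability measure μ. -/
open MeasureTheory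
open scoped ENNReal NNReal

open MeasureTheory Set

namespace RokhlinAux

variable {X : Type*} (T : Equiv.Perm X)

lemma symm_iter_iter (a : ℕ) (x : X) : (⇑T.symm)^[a] ((⇑T)^[a] x) = x :=
  (T.left_inv.iterate a) x

lemma iter_symm_iter (a : ℕ) (x : X) : (⇑T)^[a] ((⇑T.symm)^[a] x) = x :=
  (T.right_inv.iterate a) x

lemma iter_symm_iter_of_le {a b : ℕ} (h : a ≤ b) (x : X) :
    (⇑T)^[a] ((⇑T.symm)^[b] x) = (⇑T.symm)^[b - a] x := by
  conv_lhs => rw [show b = a + (b - a) by omega, Function.iterate_add_apply]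
  rw [iter_symm_iter]

lemma iter_symm_iter_of_ge {a b : ℕ} (h : b ≤ a) (x : X) :
    (⇑T)^[a] ((⇑T.symm)^[b] x) = (⇑T)^[a - b] x := by
  conv_lhs => rw [show a = (a - b) + b by omega, Function.iterate_add_apply]
  rw [iter_symm_iter]

lemma symm_iter_iter_of_le {a b : ℕ} (h : a ≤ b) (x : X) :
    (⇑T.symm)^[a] ((⇑T)^[b] x) = (⇑T)^[b - a] x := by
  conv_lhs => rw [show b = a + (b - a) by omega, Function.iterate_add_apply]
  rw [symm_iter_iter]

lemma image_iter_eq_preimage (k : ℕ) (S : Set X) :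
    (⇑T)^[k] '' S = (⇑T.symm)^[k] ⁻¹' S := by
  ext y
  constructor
  · rintro ⟨x, hx, rfl⟩
    show (⇑T.symm)^[k] ((⇑T)^[k] x) ∈ S
    rw [symm_iter_iter]; exact hx
  · intro hy
    exact ⟨(⇑T.symm)^[k] y, hy, iter_symm_iter T k y⟩

/-- The aperiodic part. -/
def Aper : Set X := {x | ∀ m, 1 ≤ m → (⇑T)^[m] x ≠ x}

variable (e : X → ℝ) (N : ℕ)

def Vset (pq : ℚ × ℚ) : Set X := e ⁻¹' Set.Ioo (pq.1 : ℝ) (pq.2 : ℝ)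

def Aset (pq : ℚ × ℚ) : Set X :=
  {x | x ∈ Aper T ∧ x ∈ Vset e pq ∧ ∀ k, 1 ≤ k → k < N → (⇑T)^[k] x ∉ Vset e pq}

def AsetO : Option (ℚ × ℚ) → Set X
  | none => ∅
  | some pq => Aset T e N pq

/-- `spread j` is the union of all forward/backward translates (within distance `< N`)
of the marker pieces `Bset i`, `i < j`. -/
def spread : ℕ → Set X
  | 0 => ∅
  | (j+1) => spread j ∪ ⋃ k ∈ Finset.range N,
      ((⇑T.symm)^[k] ⁻¹' (AsetO T e N (Encodable.decode j) \ spread j) ∪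
       (⇑T)^[k] ⁻¹' (AsetO T e N (Encodable.decode j) \ spread j))

def Bset (j : ℕ) : Set X := AsetO T e N (Encodable.decode j) \ spread T e N j

lemma spread_succ (j : ℕ) : spread T e N (j+1) = spread T e N j ∪ ⋃ k ∈ Finset.range N,
    ((⇑T.symm)^[k] ⁻¹' (Bset T e N j) ∪ (⇑T)^[k] ⁻¹' (Bset T e N j)) := rfl

lemma spread_mono : Monotone (spread T e N) := by
  apply monotone_nat_of_le_succ
  intro j
  rw [spread_succ]
  exact subset_union_left

/-- The full marker set. -/
def Amark : Set X := ⋃ j : ℕ, Bset T e N j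

lemma Bset_subset_Aset {j : ℕ} : Bset T e N j ⊆ AsetO T e N (Encodable.decode j) :=
  diff_subset

lemma AsetO_subset_Aper {o : Option (ℚ × ℚ)} : AsetO T e N o ⊆ Aper T := by
  cases o with
  | none => exact empty_subset _
  | some pq => exact fun x hx => hx.1

/-- Gap property: two points of `Amark` on the same orbit are at distance `≥ N`. -/
lemma Amark_gap {x : X} {m : ℕ} (hx : x ∈ Amark T e N)
    (hx' : (⇑T)^[m] x ∈ Amark T e N) (h1 : 1 ≤ m) (h2 : m < N) : False := by
  obtain ⟨_, ⟨i, rfl⟩, hxi⟩ := hx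
  obtain ⟨_, ⟨j, rfl⟩, hxj⟩ := hx'
  rcases lt_trichotomy i j with hij | rfl | hij
  · -- T^m x ∈ Bset j avoids spread j ⊇ translates of Bset i
    refine hxj.2 ?_
    have : (⇑T)^[m] x ∈ (⇑T.symm)^[m] ⁻¹' (Bset T e N i) := by
      show (⇑T.symm)^[m] ((⇑T)^[m] x) ∈ Bset T e N i
      rw [symm_iter_iter]; exact hxi
    have h' : (⇑T)^[m] x ∈ spread T e N (i+1) := by
      rw [spread_succ]
      refine Or.inr ?_
      refine Set.mem_biUnion (Finset.mem_range.2 h2) (Or.inl this)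
    exact spread_mono T e N (by omega : i + 1 ≤ j) h'
  · -- same index: contradicts the Vset avoidance in Aset
    have h1' := Bset_subset_Aset T e N hxi
    have h2' := Bset_subset_Aset T e N hxj
    cases hd : (Encodable.decode i : Option (ℚ × ℚ)) with
    | none => rw [hd] at h1'; exact h1'
    | some pq =>
        rw [hd] at h1' h2'
        exact h1'.2.2 m h1 h2 h2'.2.1
  · -- x ∈ Bset i avoids spread i ⊇ translates of Bset j
    refine hxi.2 ?_
    have : x ∈ (⇑T)^[m] ⁻¹' (Bset T e N j) := hxj
    have h' : x ∈ spread T e N (j+1) := by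
      rw [spread_succ]
      exact Or.inr (Set.mem_biUnion (Finset.mem_range.2 h2) (Or.inr this))
    exact spread_mono T e N (by omega : j + 1 ≤ i) h'

/-- Every point of `spread` has a translate in `Amark`. -/
lemma spread_complete {x : X} {j : ℕ} (hx : x ∈ spread T e N j) :
    ∃ k, (⇑T)^[k] x ∈ Amark T e N ∨ (⇑T.symm)^[k] x ∈ Amark T e N := by
  induction j with
  | zero => exact absurd hx (by simp [spread])
  | succ j ih =>
      rw [spread_succ] at hx
      rcases hx with hx | hx
      · exact ih hx
      · obtain ⟨k, hk, hx⟩ := Set.mem_iUnion₂.1 hx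
        rcases hx with hx | hx
        · exact ⟨k, Or.inr (Set.mem_iUnion.2 ⟨j, hx⟩)⟩
        · exact ⟨k, Or.inl (Set.mem_iUnion.2 ⟨j, hx⟩)⟩


/-- Separation: every aperiodic point lies in some `Aset`. -/
lemma exists_mem_Aset (hinj : Function.Injective e) {x : X} (hx : x ∈ Aper T) :
    ∃ pq : ℚ × ℚ, x ∈ Aset T e N pq := by
  classical
  set F : Finset ℝ := (Finset.Ico 1 N).image (fun k => e ((⇑T)^[k] x)) with hF
  set Fl : Finset ℝ := insert (e x - 1) (F.filter (· < e x)) with hFl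
  set Fu : Finset ℝ := insert (e x + 1) (F.filter (e x < ·)) with hFu
  have hFl' : Fl.Nonempty := Finset.insert_nonempty _ _
  have hFu' : Fu.Nonempty := Finset.insert_nonempty _ _
  have hmax : Fl.max' hFl' < e x := by
    rw [Finset.max'_lt_iff]
    intro y hy
    rcases Finset.mem_insert.1 hy with rfl | hy
    · linarith
    · exact (Finset.mem_filter.1 hy).2
  have hmin : e x < Fu.min' hFu' := by
    rw [Finset.lt_min'_iff]
    intro y hy
    rcases Finset.mem_insert.1 hy with rfl | hy
    · linarith
    · exact (Finset.mem_filter.1 hy).2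
  obtain ⟨p, hp1, hp2⟩ := exists_rat_btwn hmax
  obtain ⟨q, hq1, hq2⟩ := exists_rat_btwn hmin
  refine ⟨(p, q), hx, ⟨hp2, hq1⟩, ?_⟩
  intro k hk1 hk2 hmem
  have hne : e ((⇑T)^[k] x) ≠ e x := fun h => hx k hk1 (hinj h)
  have hmemF : e ((⇑T)^[k] x) ∈ F := by
    rw [hF]
    exact Finset.mem_image.2 ⟨k, Finset.mem_Ico.2 ⟨hk1, hk2⟩, rfl⟩
  obtain ⟨h1, h2⟩ := hmem
  rcases lt_or_gt_of_ne hne with hlt | hgt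
  · have hin : e ((⇑T)^[k] x) ∈ Fl := by
      rw [hFl]
      exact Finset.mem_insert_of_mem (Finset.mem_filter.mpr ⟨hmemF, hlt⟩)
    have := Finset.le_max' Fl _ hin
    simp only [Vset, Set.mem_preimage] at h1
    linarith
  · have hin : e ((⇑T)^[k] x) ∈ Fu := by
      rw [hFu]
      exact Finset.mem_insert_of_mem (Finset.mem_filter.mpr ⟨hmemF, hgt⟩)
    have := Finset.min'_le Fu _ hin
    simp only [Vset, Set.mem_preimage] at h2
    linarith

/-- Completeness: the orbit of every aperiodic point meets `Amark`. -/
lemma Amark_complete (hinj : Function.Injective e) {x : X} (hx : x ∈ Aper T) :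
    ∃ k, (⇑T)^[k] x ∈ Amark T e N ∨ (⇑T.symm)^[k] x ∈ Amark T e N := by
  obtain ⟨pq, hpq⟩ := exists_mem_Aset T e N hinj hx
  set j := Encodable.encode pq with hj
  have hd : (Encodable.decode j : Option (ℚ × ℚ)) = some pq := Encodable.encodek pq
  have hxA : x ∈ AsetO T e N (Encodable.decode j) := by rw [hd]; exact hpq
  by_cases hs : x ∈ spread T e N j
  · exact spread_complete T e N hs
  · exact ⟨0, Or.inl (Set.mem_iUnion.2 ⟨j, hxA, hs⟩)⟩

section Meas

variable [MeasurableSpace X] (hT : Measurable T) (hT' : Measurable ⇑T.symm)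
  (he : Measurable e) (hinj : Function.Injective e)

include hT in
lemma meas_iter (k : ℕ) : Measurable ((⇑T)^[k]) := hT.iterate k
include hT' in
lemma meas_iter' (k : ℕ) : Measurable ((⇑T.symm)^[k]) := hT'.iterate k

include hT he hinj in
lemma meas_Aper : MeasurableSet (Aper T) := by
  have : Aper T = ⋂ m, ⋂ _ : 1 ≤ m, {x | e ((⇑T)^[m] x) = e x}ᶜ := by
    ext x
    simp only [Aper, Set.mem_iInter, Set.mem_setOf_eq, Set.mem_compl_iff]
    exact ⟨fun h m hm hme => h m hm (hinj hme), fun h m hm hme => h m hm (by rw [hme])⟩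
  rw [this]
  exact MeasurableSet.iInter fun m => MeasurableSet.iInter fun _ =>
    (measurableSet_eq_fun (he.comp (meas_iter T hT m)) he).compl

include he in
lemma meas_Vset (pq : ℚ × ℚ) : MeasurableSet (Vset e pq) :=
  he measurableSet_Ioo

include hT he hinj in
lemma meas_Aset (pq : ℚ × ℚ) : MeasurableSet (Aset T e N pq) := by
  have : Aset T e N pq = Aper T ∩ Vset e pq ∩
      ⋂ k, ⋂ _ : 1 ≤ k, ⋂ _ : k < N, ((⇑T)^[k]) ⁻¹' (Vset e pq)ᶜ := by
    ext x
    simp only [Aset, Set.mem_inter_iff, Set.mem_iInter, Set.mem_setOf_eq, Set.mem_preimage,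
      Set.mem_compl_iff]
    tauto
  rw [this]
  exact ((meas_Aper T e hT he hinj).inter (meas_Vset e he pq)).inter
    (MeasurableSet.iInter fun k => MeasurableSet.iInter fun _ => MeasurableSet.iInter fun _ =>
      (meas_iter T hT k) (meas_Vset e he pq).compl)

include hT he hinj in
include hT he hinj in
lemma meas_AsetO (o : Option (ℚ × ℚ)) : MeasurableSet (AsetO T e N o) := by
  cases o with
  | none => exact MeasurableSet.empty
  | some pq => exact meas_Aset T e N hT he hinj pq

include hT hT' he hinj in
lemma meas_spread (j : ℕ) : MeasurableSet (spread T e N j) := by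
  induction j with
  | zero => exact MeasurableSet.empty
  | succ j ih =>
      rw [spread_succ]
      refine ih.union (MeasurableSet.biUnion (Finset.countable_toSet _) fun k _ => ?_)
      exact ((meas_iter' T hT' k) ((meas_AsetO T e N hT he hinj _).diff ih)).union
        ((meas_iter T hT k) ((meas_AsetO T e N hT he hinj _).diff ih))

include hT hT' he hinj in
lemma meas_Bset (j : ℕ) : MeasurableSet (Bset T e N j) :=
  (meas_AsetO T e N hT he hinj _).diff (meas_spread T e N hT hT' he hinj j)

include hT hT' he hinj in
lemma meas_Amark : MeasurableSet (Amark T e N) :=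
  MeasurableSet.iUnion fun j => meas_Bset T e N hT hT' he hinj j

end Meas

/-- The base of the Rokhlin tower built over the marker set `A`. -/
def Btow (A : Set X) (n : ℕ) : Set X :=
  {x | (∃ q, (⇑T.symm)^[q*n] x ∈ A ∧ ∀ j < q*n, (⇑T.symm)^[j] x ∉ A) ∧
       ∀ k, 1 ≤ k → k < n → (⇑T)^[k] x ∉ A}

lemma meas_Btow [MeasurableSpace X] (hT : Measurable T) (hT' : Measurable ⇑T.symm)
    {A : Set X} (hA : MeasurableSet A) (n : ℕ) : MeasurableSet (Btow T A n) := by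
  have : Btow T A n = (⋃ q, (((⇑T.symm)^[q*n]) ⁻¹' A ∩
        ⋂ j, ⋂ _ : j < q*n, ((⇑T.symm)^[j]) ⁻¹' Aᶜ)) ∩
      ⋂ k, ⋂ _ : 1 ≤ k, ⋂ _ : k < n, ((⇑T)^[k]) ⁻¹' Aᶜ := by
    ext x
    simp only [Btow, Set.mem_setOf_eq, Set.mem_inter_iff, Set.mem_iUnion, Set.mem_iInter,
      Set.mem_preimage, Set.mem_compl_iff]
  rw [this]
  exact (MeasurableSet.iUnion fun q => ((hT'.iterate _) hA).inter
    (MeasurableSet.iInter fun j => MeasurableSet.iInter fun _ => (hT'.iterate _) hA.compl)).inter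
    (MeasurableSet.iInter fun k => MeasurableSet.iInter fun _ => MeasurableSet.iInter fun _ =>
      (hT.iterate _) hA.compl)


/-- Disjointness of the levels of the tower. -/
lemma Btow_disj (A : Set X) {n i j : ℕ} (hij : i < j) (hjn : j < n) :
    ((⇑T)^[i] '' Btow T A n) ∩ ((⇑T)^[j] '' Btow T A n) = ∅ := by
  rw [Set.eq_empty_iff_forall_notMem]
  rintro y ⟨⟨x1, hx1, he1⟩, ⟨x2, hx2, he2⟩⟩
  set m := j - i with hm
  have hm1 : 1 ≤ m := by omega
  have hmn : m < n := by omega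
  have hx1x2 : x1 = (⇑T)^[m] x2 := by
    have : (⇑T.symm)^[i] ((⇑T)^[i] x1) = (⇑T.symm)^[i] ((⇑T)^[j] x2) := by rw [he1, he2]
    rwa [symm_iter_iter, symm_iter_iter_of_le T (le_of_lt hij)] at this
  have hx2back : (⇑T.symm)^[m] x1 = x2 := by rw [hx1x2, symm_iter_iter]
  obtain ⟨⟨q1, hq1A, hq1min⟩, hH1⟩ := hx1
  obtain ⟨⟨q2, hq2A, hq2min⟩, hH2⟩ := hx2
  have key : q1 * n = m + q2 * n := by
    rcases lt_trichotomy (q1*n) (m + q2*n) with h | h | h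
    · exfalso
      rcases lt_or_ge (q1*n) m with h' | h'
      · -- `T.symm^[q1*n] x1 = T^[m - q1*n] x2 ∉ A`
        have heq : (⇑T.symm)^[q1*n] x1 = (⇑T)^[m - q1*n] x2 := by
          rw [hx1x2, symm_iter_iter_of_le T (le_of_lt h')]
        rw [heq] at hq1A
        exact hH2 (m - q1*n) (by omega) (by omega) hq1A
      · -- `T.symm^[q1*n] x1 = T.symm^[q1*n - m] x2 ∉ A`
        have heq : (⇑T.symm)^[q1*n] x1 = (⇑T.symm)^[q1*n - m] x2 := by
          conv_lhs => rw [show q1*n = (q1*n - m) + m by omega, Function.iterate_add_apply,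
            hx2back]
        rw [heq] at hq1A
        exact hq2min (q1*n - m) (by omega) hq1A
    · exact h
    · exfalso
      have heq : (⇑T.symm)^[m + q2*n] x1 = (⇑T.symm)^[q2*n] x2 := by
        rw [Nat.add_comm, Function.iterate_add_apply, hx2back]
      have := hq1min (m + q2*n) h
      rw [heq] at this
      exact this hq2A
  -- `q1 * n = m + q2 * n` with `1 ≤ m < n` is impossible
  have hq2q1 : q2 < q1 := by
    by_contra hc
    push_neg at hc
    have := Nat.mul_le_mul_right n hc
    omega
  have h1 : Nat.succ q2 * n ≤ q1 * n := Nat.mul_le_mul_right n hq2q1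
  have h2 : Nat.succ q2 * n = q2 * n + n := Nat.succ_mul q2 n
  omega

/-- Coverage: every point whose past meets `A` is either in the tower or
within `< n` steps before `A`. -/
lemma Btow_cover (A : Set X) {n : ℕ} (hn : 1 ≤ n) {y : X}
    (hy : ∃ jj, (⇑T.symm)^[jj] y ∈ A) :
    (∃ i < n, ∃ x ∈ Btow T A n, (⇑T)^[i] x = y) ∨
      ∃ k, 1 ≤ k ∧ k < n ∧ (⇑T)^[k] y ∈ A := by
  classical
  set f := Nat.find hy with hf
  have hfA : (⇑T.symm)^[f] y ∈ A := Nat.find_spec hy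
  have hfmin : ∀ j < f, (⇑T.symm)^[j] y ∉ A := fun j hj => Nat.find_min hy hj
  set i := f % n with hi
  set q := f / n with hq
  have hin : i < n := Nat.mod_lt _ hn
  have hfi : q * n + i = f := by rw [hi, hq, Nat.mul_comm, Nat.div_add_mod]
  set x := (⇑T.symm)^[i] y with hx
  have hxy : (⇑T)^[i] x = y := iter_symm_iter T i y
  have hxf : (⇑T.symm)^[q*n] x ∈ A := by
    rw [hx, ← Function.iterate_add_apply, hfi]
    exact hfA
  have hxmin : ∀ j < q*n, (⇑T.symm)^[j] x ∉ A := by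
    intro j hj
    rw [hx, ← Function.iterate_add_apply]
    exact hfmin (j + i) (by omega)
  by_cases hcond : ∀ k, 1 ≤ k → k < n → (⇑T)^[k] x ∉ A
  · exact Or.inl ⟨i, hin, x, ⟨⟨q, hxf, hxmin⟩, hcond⟩, hxy⟩
  · push_neg at hcond
    obtain ⟨k, hk1, hkn, hkA⟩ := hcond
    rcases le_or_gt i k with hik | hik
    · have heq : (⇑T)^[k] x = (⇑T)^[k - i] y := iter_symm_iter_of_ge T hik y
      rcases Nat.eq_or_lt_of_le hik with rfl | hik'
      · -- k = i : then y ∈ A so f = 0, i = 0, contradicting 1 ≤ k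
        exfalso
        rw [heq, Nat.sub_self] at hkA
        have hf0 : f = 0 := by
          by_contra hne
          exact hfmin 0 (Nat.pos_of_ne_zero hne) hkA
        omega
      · right
        exact ⟨k - i, by omega, by omega, by rw [← heq]; exact hkA⟩
    · exfalso
      have heq : (⇑T)^[k] x = (⇑T.symm)^[i - k] y := iter_symm_iter_of_le T (le_of_lt hik) y
      rw [heq] at hkA
      have hif : i ≤ f := by omega
      exact hfmin (i - k) (by omega) hkA

end RokhlinAux


/-- Borel Rokhlin lemma (Glasner–Weiss): for a Borel automorphism `T` of a standard
Borel space, `n ≥ 1` and `δ > 0`, there is a single Borel set `B` with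
`B, TB, …, T^{n−1}B` pairwise disjoint whose tower has measure `> 1 − δ` for every
aperiodic ergodic `T`-invariant probability measure. -/
theorem stmt6 {X : Type*} [MeasurableSpace X] [StandardBorelSpace X]
    (T : Equiv.Perm X) (hT : Measurable T) (hT' : Measurable T.symm)
    (n : ℕ) (hn : 1 ≤ n) (δ : ENNReal) (hδ : 0 < δ) :
    ∃ B : Set X, MeasurableSet B ∧
      (∀ i < n, ∀ j < n, i ≠ j → ((⇑T)^[i] '' B) ∩ ((⇑T)^[j] '' B) = ∅) ∧
      ∀ μ : Measure X, IsProbabilityMeasure μ → Ergodic T μ →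
        μ {x | ∃ m, 1 ≤ m ∧ (⇑T)^[m] x = x} = 0 →
        1 - δ < μ (⋃ k ∈ Finset.range n, (⇑T)^[k] '' B) := by
  classical
  open RokhlinAux in
  obtain ⟨e, he⟩ := exists_measurableEmbedding_real X
  obtain ⟨K, hK⟩ := ENNReal.exists_inv_nat_lt hδ.ne'
  have hK1 : 1 ≤ K := by
    by_contra hc
    push_neg at hc
    interval_cases K
    simp at hK
  set N := n * (K + 1) with hN
  have hN1 : 1 ≤ N := by
    have : 1 * 1 ≤ n * (K + 1) := Nat.mul_le_mul hn (by omega)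
    omega
  set A := RokhlinAux.Amark T e N with hA
  have hAmeas : MeasurableSet A :=
    RokhlinAux.meas_Amark T e N hT hT' he.measurable he.injective
  set B := RokhlinAux.Btow T A n with hB
  refine ⟨B, RokhlinAux.meas_Btow T hT hT' hAmeas n, ?_, ?_⟩
  · intro i hi j hj hij
    rcases lt_or_gt_of_ne hij with h | h
    · exact RokhlinAux.Btow_disj T A h hj
    · rw [Set.inter_comm]
      exact RokhlinAux.Btow_disj T A h hi
  · intro μ hμprob hμerg hμaper
    have hMP : MeasurePreserving (⇑T) μ μ := hμerg.toMeasurePreserving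
    set Teq : X ≃ᵐ X := ⟨T, hT, hT'⟩ with hTeq
    have hMPs : MeasurePreserving (⇑T.symm) μ μ := MeasurePreserving.symm Teq hMP
    have hiter : ∀ (k : ℕ) (S : Set X), MeasurableSet S → μ (((⇑T)^[k]) ⁻¹' S) = μ S :=
      fun k S hS => (hMP.iterate k).measure_preimage hS.nullMeasurableSet
    have hiter' : ∀ (k : ℕ) (S : Set X), MeasurableSet S → μ (((⇑T.symm)^[k]) ⁻¹' S) = μ S :=
      fun k S hS => (hMPs.iterate k).measure_preimage hS.nullMeasurableSet
    -- μ A ≤ N⁻¹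
    have hAle : (N : ℝ≥0∞) * μ A ≤ 1 := by
      have hdis : (↑(Finset.range N) : Set ℕ).Pairwise
          (Function.onFun Disjoint (fun k : ℕ => ((⇑T)^[k]) ⁻¹' A)) := by
        intro k hk l hl hkl
        simp only [Finset.coe_range, Set.mem_Iio] at hk hl
        rw [Function.onFun, Set.disjoint_left]
        intro x hxk hxl
        rcases lt_or_gt_of_ne hkl with h | h
        · refine RokhlinAux.Amark_gap T e N (m := l - k) hxk ?_ (by omega) (by omega)
          rw [← Function.iterate_add_apply, Nat.sub_add_cancel h.le]
          exact hxl
        · refine RokhlinAux.Amark_gap T e N (m := k - l) hxl ?_ (by omega) (by omega)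
          rw [← Function.iterate_add_apply, Nat.sub_add_cancel h.le]
          exact hxk
      have hsum := measure_biUnion_finset (μ := μ) hdis
        (fun k _ => (hT.iterate k) hAmeas)
      have hle : μ (⋃ k ∈ Finset.range N, ((⇑T)^[k]) ⁻¹' A) ≤ 1 := by
        rw [← measure_univ (μ := μ)]
        exact measure_mono (Set.subset_univ _)
      rw [hsum] at hle
      calc (N : ℝ≥0∞) * μ A = ∑ k ∈ Finset.range N, μ (((⇑T)^[k]) ⁻¹' A) := by
            rw [Finset.sum_congr rfl fun k _ => hiter k A hAmeas, Finset.sum_const,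
              Finset.card_range, nsmul_eq_mul]
        _ ≤ 1 := hle
    -- μ A > 0
    have hAperc : (RokhlinAux.Aper T)ᶜ = {x | ∃ m, 1 ≤ m ∧ (⇑T)^[m] x = x} := by
      ext x
      simp only [RokhlinAux.Aper, Set.mem_compl_iff, Set.mem_setOf_eq]
      push_neg
      constructor
      · rintro ⟨m, hm1, hm2⟩; exact ⟨m, hm1, hm2⟩
      · rintro ⟨m, hm1, hm2⟩; exact ⟨m, hm1, hm2⟩
    have hAperMeas := RokhlinAux.meas_Aper T e hT he.measurable he.injective
    have hAper1 : μ (RokhlinAux.Aper T) = 1 := by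
      rw [← prob_compl_eq_zero_iff hAperMeas, hAperc]
      exact hμaper
    have hApos : 0 < μ A := by
      rcases eq_or_lt_of_le (zero_le : 0 ≤ μ A) with h0 | h0
      · exfalso
        set W := ⋃ k : ℕ, (((⇑T)^[k]) ⁻¹' A ∪ ((⇑T.symm)^[k]) ⁻¹' A) with hW
        have hWnull : μ W = 0 := by
          refine measure_iUnion_null fun k => ?_
          refine measure_union_null ?_ ?_
          · rw [hiter k A hAmeas]; exact h0.symm
          · rw [hiter' k A hAmeas]; exact h0.symm
        have hsub : RokhlinAux.Aper T ⊆ W := by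
          intro x hx
          obtain ⟨k, hk⟩ := RokhlinAux.Amark_complete T e N he.injective hx
          exact Set.mem_iUnion.2 ⟨k, by rcases hk with h | h; exacts [Or.inl h, Or.inr h]⟩
        have hmono := measure_mono (μ := μ) hsub
        rw [hAper1, hWnull] at hmono
        simp at hmono
      · exact h0
    -- G has full measure
    set G := ⋃ jj : ℕ, ((⇑T.symm)^[jj]) ⁻¹' A with hG
    have hGmeas : MeasurableSet G :=
      MeasurableSet.iUnion fun jj => (hT'.iterate jj) hAmeas
    have hGsub : G ⊆ (⇑T) ⁻¹' G := by
      intro x hx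
      obtain ⟨_, ⟨jj, rfl⟩, hxj⟩ := hx
      refine Set.mem_iUnion.2 ⟨jj + 1, ?_⟩
      show (⇑T.symm)^[jj + 1] (T x) ∈ A
      rw [Function.iterate_succ_apply]
      simpa using hxj
    have hG1 : μ G = 1 := by
      rcases hμerg.ae_empty_or_univ_of_ae_le_preimage' hGmeas.nullMeasurableSet
          hGsub.eventuallyLE (measure_ne_top μ G) with h | h
      · exfalso
        have h0 : μ G = 0 := by
          have := measure_congr h
          simpa using this
        have hAG : A ⊆ G := by
          intro x hx
          exact Set.mem_iUnion.2 ⟨0, by simpa using hx⟩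
        have hmono := measure_mono (μ := μ) hAG
        rw [h0] at hmono
        exact absurd (le_antisymm hmono zero_le) hApos.ne'
      · have := measure_congr h
        simpa using this
    -- the small exceptional set M
    set M := ⋃ k ∈ Finset.Ico 1 n, ((⇑T)^[k]) ⁻¹' A with hM
    have hMmeas : MeasurableSet M :=
      MeasurableSet.biUnion (Finset.countable_toSet _) fun k _ => (hT.iterate k) hAmeas
    have hMle : μ M ≤ (↑(n - 1) : ℝ≥0∞) * μ A := by
      calc μ M ≤ ∑ k ∈ Finset.Ico 1 n, μ (((⇑T)^[k]) ⁻¹' A) := measure_biUnion_finset_le _ _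
        _ = (↑(n - 1) : ℝ≥0∞) * μ A := by
            rw [Finset.sum_congr rfl fun k _ => hiter k A hAmeas]
            simp [Nat.card_Ico, mul_comm]
    have hMsmall : μ M ≤ ((K : ℝ≥0∞) + 1)⁻¹ := by
      have h1 : μ A ≤ ((N : ℕ) : ℝ≥0∞)⁻¹ := by
        rw [mul_comm] at hAle
        exact ENNReal.le_inv_iff_mul_le.2 hAle
      calc μ M ≤ (↑(n - 1) : ℝ≥0∞) * μ A := hMle
        _ ≤ (n : ℝ≥0∞) * ((N : ℕ) : ℝ≥0∞)⁻¹ := by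
            refine mul_le_mul' ?_ h1
            exact_mod_cast Nat.cast_le.2 (Nat.sub_le n 1)
        _ = ((K : ℝ≥0∞) + 1)⁻¹ := by
            rw [hN]
            push_cast
            rw [ENNReal.mul_inv (Or.inl (Nat.cast_ne_zero.2 (by omega)))
              (Or.inl (ENNReal.natCast_ne_top n)), ← mul_assoc,
              ENNReal.mul_inv_cancel (Nat.cast_ne_zero.2 (by omega))
                (ENNReal.natCast_ne_top n), one_mul]
    have hMlt : μ M < δ := by
      refine lt_of_le_of_lt hMsmall (lt_of_le_of_lt ?_ hK)
      exact ENNReal.inv_le_inv.2 le_self_add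
    have hMone : μ M < 1 := by
      refine lt_of_le_of_lt hMsmall ?_
      rw [ENNReal.inv_lt_one]
      have : (1 : ℝ≥0∞) ≤ (K : ℝ≥0∞) := by exact_mod_cast hK1
      calc (1 : ℝ≥0∞) < 1 + 1 := by norm_num
        _ ≤ (K : ℝ≥0∞) + 1 := by exact add_le_add_left this 1
    have hMtop : μ M ≠ ⊤ := (lt_of_lt_of_le hMone le_top).ne
    -- coverage
    set U := ⋃ k ∈ Finset.range n, (⇑T)^[k] '' B with hU
    have hGUM : G ⊆ U ∪ M := by
      intro y hy
      obtain ⟨_, ⟨jj, rfl⟩, hyj⟩ := hy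
      rcases RokhlinAux.Btow_cover T A hn ⟨jj, hyj⟩ with ⟨i, hi, x, hxB, hxy⟩ | ⟨k, hk1, hkn, hkA⟩
      · left
        exact Set.mem_biUnion (Finset.mem_range.2 hi) ⟨x, hxB, hxy⟩
      · right
        exact Set.mem_biUnion (Finset.mem_Ico.2 ⟨hk1, hkn⟩) hkA
    have h1le : 1 ≤ μ U + μ M := by
      calc (1 : ℝ≥0∞) = μ G := hG1.symm
        _ ≤ μ (U ∪ M) := measure_mono hGUM
        _ ≤ μ U + μ M := measure_union_le _ _
    -- conclude
    rcases le_or_gt δ 1 with hδ1 | hδ1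
    · have hone : (1 : ℝ≥0∞) - δ ≠ ⊤ :=
        (lt_of_le_of_lt tsub_le_self (by norm_num : (1:ℝ≥0∞) < ⊤)).ne
      have hlt : (1 - δ) + μ M < 1 := by
        have h2 : (1 - δ) + μ M < (1 - δ) + δ := ENNReal.add_lt_add_left hone hMlt
        rwa [tsub_add_cancel_of_le hδ1] at h2
      have h3 : (1 - δ) + μ M < μ U + μ M := lt_of_lt_of_le hlt h1le
      exact (ENNReal.add_lt_add_iff_right hMtop).1 h3
    · have h0 : (1 : ℝ≥0∞) - δ = 0 := tsub_eq_zero_of_le hδ1.le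
      rw [h0]
      exact lt_of_lt_of_le (tsub_pos_of_lt hMone) (tsub_le_iff_right.2 h1le)
end

section
/- Let Y be a standard Borel space and P(Y) the space of Borel probability measures on Y with its standard Borel structure. There exists a Borel function F: [0,1] × P(Y) × Y → {0,1} such that for every t ∈ [0,1] and every non-atomic μ ∈ P(Y), μ({y ∈ Y : F(t, μ, y) = 1}) = t. -/
open MeasureTheory

/-- The Borel structure on the space of Borel probability measures, inherited from
the Giry-monad Borel structure on measures (generated by the evaluation maps). -/
instance probabilityMeasureMeasurableSpace {Y : Type*} [MeasurableSpace Y] :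
    MeasurableSpace (ProbabilityMeasure Y) :=
  inferInstanceAs (MeasurableSpace {μ : Measure Y // IsProbabilityMeasure μ})

section Aux

variable {Y : Type*} [MeasurableSpace Y]

/-- Right-continuity: the "CDF" value at `a` is the infimum over rationals above `a`. -/
lemma stmt7_aux_iInf (e : Y → ℝ) (he : MeasurableEmbedding e)
    (μ : Measure Y) [IsProbabilityMeasure μ] (a : ℝ) :
    μ (e ⁻¹' Set.Iic a) =
      ⨅ q : ℚ, if a < (q : ℝ) then μ (e ⁻¹' Set.Iic ((q : ℝ))) else 1 := by
  classical
  refine le_antisymm (le_iInf fun q => ?_) ?_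
  · split_ifs with h
    · exact measure_mono (Set.preimage_mono (Set.Iic_subset_Iic.2 h.le))
    · exact prob_le_one
  · -- the decreasing sequence a + 1/(n+1)
    have hinter : (⋂ n : ℕ, e ⁻¹' Set.Iic (a + ((n : ℝ) + 1)⁻¹)) = e ⁻¹' Set.Iic a := by
      ext y
      simp only [Set.mem_iInter, Set.mem_preimage, Set.mem_Iic]
      constructor
      · intro h
        by_contra hc
        push_neg at hc
        obtain ⟨n, hn⟩ := exists_nat_one_div_lt (sub_pos.2 hc)
        have := h n
        rw [one_div] at hn
        linarith
      · intro h n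
        have : (0:ℝ) < ((n : ℝ) + 1)⁻¹ := by positivity
        linarith
    have htend : Filter.Tendsto (fun n : ℕ => μ (e ⁻¹' Set.Iic (a + ((n : ℝ) + 1)⁻¹)))
        Filter.atTop (nhds (μ (e ⁻¹' Set.Iic a))) := by
      rw [← hinter]
      exact tendsto_measure_iInter_atTop
        (fun n => (he.measurable measurableSet_Iic).nullMeasurableSet)
        (fun n m hnm => Set.preimage_mono (Set.Iic_subset_Iic.2 (by
          have : ((m : ℝ) + 1)⁻¹ ≤ ((n : ℝ) + 1)⁻¹ := by
            apply inv_anti₀ (by positivity)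
            exact_mod_cast add_le_add_left (Nat.cast_le.2 hnm) 1
          linarith)))
        ⟨0, measure_ne_top _ _⟩
    refine ge_of_tendsto' htend fun n => ?_
    obtain ⟨q, hq1, hq2⟩ := exists_rat_btwn (show a < a + ((n : ℝ) + 1)⁻¹ by
      have : (0:ℝ) < ((n : ℝ) + 1)⁻¹ := by positivity
      linarith)
    refine iInf_le_of_le q ?_
    rw [if_pos hq1]
    exact measure_mono (Set.preimage_mono (Set.Iic_subset_Iic.2 hq2.le))

/-- The main pointwise computation: for a non-atomic probability measure the sublevel set
of the CDF at level `t` has measure exactly `t`. -/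
lemma stmt7_aux_main (e : Y → ℝ) (he : MeasurableEmbedding e)
    (μ : Measure Y) [IsProbabilityMeasure μ] (hμ : ∀ y : Y, μ {y} = 0)
    (t : ℝ) (ht0 : 0 ≤ t) (ht1 : t ≤ 1) :
    μ {y | μ (e ⁻¹' Set.Iic (e y)) ≤ ENNReal.ofReal t} = ENNReal.ofReal t := by
  classical
  set T : ENNReal := ENNReal.ofReal t with hT
  set f : ℝ → ENNReal := fun x => μ (e ⁻¹' Set.Iic x) with hf
  have hmono : Monotone f := fun x x' h =>
    measure_mono (Set.preimage_mono (Set.Iic_subset_Iic.2 h))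
  have hsing : ∀ x : ℝ, μ (e ⁻¹' {x}) = 0 := by
    intro x
    by_cases hx : ∃ y, e y = x
    · obtain ⟨y, rfl⟩ := hx
      have : e ⁻¹' {e y} = {y} := by
        ext z; simp [he.injective.eq_iff]
      rw [this]; exact hμ y
    · have : e ⁻¹' {x} = ∅ := by
        ext z; simp only [Set.mem_preimage, Set.mem_singleton_iff, Set.mem_empty_iff_false,
          iff_false]
        exact fun h => hx ⟨z, h⟩
      rw [this]; exact measure_empty
  set S : Set ℝ := {x | f x ≤ T} with hS
  have hAset : {y | μ (e ⁻¹' Set.Iic (e y)) ≤ T} = {y | e y ∈ S} := rfl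
  -- limits at ±∞
  have hbot : Filter.Tendsto (fun n : ℕ => f (-(n : ℝ))) Filter.atTop (nhds 0) := by
    have hinter : (⋂ n : ℕ, e ⁻¹' Set.Iic (-(n : ℝ))) = ∅ := by
      ext y
      simp only [Set.mem_iInter, Set.mem_preimage, Set.mem_Iic, Set.mem_empty_iff_false,
        iff_false, not_forall]
      obtain ⟨n, hn⟩ := exists_nat_gt (-(e y))
      exact ⟨n, by push_neg; linarith⟩
    have := tendsto_measure_iInter_atTop (μ := μ)
      (s := fun n : ℕ => e ⁻¹' Set.Iic (-(n : ℝ)))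
      (fun n => (he.measurable measurableSet_Iic).nullMeasurableSet)
      (fun n m hnm => Set.preimage_mono (Set.Iic_subset_Iic.2 (by
        simp only [neg_le_neg_iff]; exact_mod_cast hnm)))
      ⟨0, measure_ne_top _ _⟩
    rwa [hinter, measure_empty] at this
  have htop : Filter.Tendsto (fun n : ℕ => f (n : ℝ)) Filter.atTop (nhds 1) := by
    have hunion : (⋃ n : ℕ, e ⁻¹' Set.Iic ((n : ℝ))) = Set.univ := by
      ext y
      simp only [Set.mem_iUnion, Set.mem_preimage, Set.mem_Iic, Set.mem_univ, iff_true]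
      obtain ⟨n, hn⟩ := exists_nat_gt (e y)
      exact ⟨n, hn.le⟩
    have := tendsto_measure_iUnion_atTop (μ := μ)
      (s := fun n : ℕ => e ⁻¹' Set.Iic ((n : ℝ)))
      (fun n m hnm => Set.preimage_mono (Set.Iic_subset_Iic.2 (by exact_mod_cast hnm)))
    rwa [hunion, measure_univ] at this
  by_cases hne : S.Nonempty
  · by_cases hbdd : BddAbove S
    · -- main case: S = Iic (sSup S), and f (sSup S) = T
      set s := sSup S with hs
      have hlt_mem : ∀ x, x < s → x ∈ S := by
        intro x hx
        obtain ⟨y, hyS, hy⟩ := exists_lt_of_lt_csSup hne hx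
        exact le_trans (hmono hy.le) hyS
      have h1 : μ (e ⁻¹' Set.Iio s) ≤ T := by
        have hunion : e ⁻¹' Set.Iio s = ⋃ n : ℕ, e ⁻¹' Set.Iic (s - ((n : ℝ) + 1)⁻¹) := by
          ext y
          simp only [Set.mem_preimage, Set.mem_Iio, Set.mem_iUnion, Set.mem_Iic]
          constructor
          · intro h
            obtain ⟨n, hn⟩ := exists_nat_one_div_lt (sub_pos.2 h)
            rw [one_div] at hn
            exact ⟨n, by linarith⟩
          · rintro ⟨n, hn⟩
            have : (0:ℝ) < ((n : ℝ) + 1)⁻¹ := by positivity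
            linarith
        have htend := tendsto_measure_iUnion_atTop (μ := μ)
          (s := fun n : ℕ => e ⁻¹' Set.Iic (s - ((n : ℝ) + 1)⁻¹))
          (fun n m hnm => Set.preimage_mono (Set.Iic_subset_Iic.2 (by
            have : ((m : ℝ) + 1)⁻¹ ≤ ((n : ℝ) + 1)⁻¹ := by
              apply inv_anti₀ (by positivity)
              exact_mod_cast add_le_add_left (Nat.cast_le.2 hnm) 1
            linarith)))
        rw [← hunion] at htend
        refine le_of_tendsto' htend fun n => ?_
        have hmem : s - ((n : ℝ) + 1)⁻¹ ∈ S := by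
          apply hlt_mem
          have : (0:ℝ) < ((n : ℝ) + 1)⁻¹ := by positivity
          linarith
        exact hmem
      have h2 : f s ≤ T := by
        have hsub : Set.Iic s ⊆ Set.Iio s ∪ {s} := by
          intro x hx
          rcases lt_or_eq_of_le (Set.mem_Iic.1 hx) with h | h
          · exact Or.inl h
          · exact Or.inr (by simp [h])
        calc f s ≤ μ (e ⁻¹' Set.Iio s ∪ e ⁻¹' {s}) := by
              refine measure_mono ?_
              rw [← Set.preimage_union]
              exact Set.preimage_mono hsub
          _ ≤ μ (e ⁻¹' Set.Iio s) + μ (e ⁻¹' {s}) := measure_union_le _ _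
          _ = μ (e ⁻¹' Set.Iio s) := by rw [hsing s, add_zero]
          _ ≤ T := h1
      have h3 : T ≤ f s := by
        have hinter : (⋂ n : ℕ, e ⁻¹' Set.Iic (s + ((n : ℝ) + 1)⁻¹)) = e ⁻¹' Set.Iic s := by
          ext y
          simp only [Set.mem_iInter, Set.mem_preimage, Set.mem_Iic]
          constructor
          · intro h
            by_contra hc
            push_neg at hc
            obtain ⟨n, hn⟩ := exists_nat_one_div_lt (sub_pos.2 hc)
            rw [one_div] at hn
            have := h n
            linarith
          · intro h n
            have : (0:ℝ) < ((n : ℝ) + 1)⁻¹ := by positivity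
            linarith
        have htend := tendsto_measure_iInter_atTop (μ := μ)
          (s := fun n : ℕ => e ⁻¹' Set.Iic (s + ((n : ℝ) + 1)⁻¹))
          (fun n => (he.measurable measurableSet_Iic).nullMeasurableSet)
          (fun n m hnm => Set.preimage_mono (Set.Iic_subset_Iic.2 (by
            have : ((m : ℝ) + 1)⁻¹ ≤ ((n : ℝ) + 1)⁻¹ := by
              apply inv_anti₀ (by positivity)
              exact_mod_cast add_le_add_left (Nat.cast_le.2 hnm) 1
            linarith)))
          ⟨0, measure_ne_top _ _⟩
        rw [hinter] at htend
        refine ge_of_tendsto' htend fun n => ?_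
        have hpos : (0:ℝ) < ((n : ℝ) + 1)⁻¹ := by positivity
        have hnotmem : s + ((n : ℝ) + 1)⁻¹ ∉ S := by
          intro hmem
          have := le_csSup hbdd hmem
          linarith
        exact (not_le.1 hnotmem).le
      have hfsT : f s = T := le_antisymm h2 h3
      have hSeq : S = Set.Iic s := by
        ext x
        simp only [Set.mem_Iic]
        constructor
        · intro hx; exact le_csSup hbdd hx
        · intro hx; exact le_trans (hmono hx) h2
      rw [hAset]
      have : {y | e y ∈ S} = e ⁻¹' Set.Iic s := by rw [hSeq]; rfl
      rw [this]
      exact hfsT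
    · -- S unbounded above : S = univ and T = 1
      have hall : ∀ x, x ∈ S := by
        intro x
        obtain ⟨y, hyS, hy⟩ := not_bddAbove_iff.1 hbdd x
        exact le_trans (hmono hy.le) hyS
      have hT1 : T = 1 := by
        refine le_antisymm ?_ (le_of_tendsto' htop fun n => hall ((n : ℝ)))
        rw [hT]
        exact ENNReal.ofReal_le_one.2 ht1
      rw [hAset]
      have : {y | e y ∈ S} = Set.univ := by
        ext y; simp [hall]
      rw [this, measure_univ, hT1]
  · -- S empty : T = 0
    have hall : ∀ x, T < f x := by
      intro x
      by_contra h
      exact hne ⟨x, not_lt.1 h⟩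
    have hT0 : T = 0 := by
      have := ge_of_tendsto' hbot fun n => (hall (-(n : ℝ))).le
      exact le_antisymm this zero_le
    rw [hAset]
    have : {y | e y ∈ S} = ∅ := by
      ext y
      simp only [Set.mem_setOf_eq, Set.mem_empty_iff_false, iff_false]
      exact fun h => hne ⟨e y, h⟩
    rw [this, measure_empty, hT0]

end Aux

/-- Borel construction of sets of prescribed measure: there is a jointly Borel
function `F : [0,1] × P(Y) × Y → {0,1}` whose section `{y : F(t,μ,y) = 1}` has
`μ`-measure exactly `t` for every `t ∈ [0,1]` and every non-atomic Borel
probability measure `μ` on the standard Borel space `Y`. -/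
theorem stmt7 {Y : Type*} [MeasurableSpace Y] [StandardBorelSpace Y] :
    ∃ F : ℝ → ProbabilityMeasure Y → Y → Bool,
      Measurable (fun p : ℝ × ProbabilityMeasure Y × Y => F p.1 p.2.1 p.2.2) ∧
      ∀ t ∈ Set.Icc (0 : ℝ) 1, ∀ μ : ProbabilityMeasure Y,
        (∀ y : Y, (μ : Measure Y) {y} = 0) →
        (μ : Measure Y) {y | F t μ y = true} = ENNReal.ofReal t := by
  classical
  obtain ⟨e, he⟩ := exists_measurableEmbedding_real Y
  refine ⟨fun t μ y =>
      if (μ : Measure Y) (e ⁻¹' Set.Iic (e y)) ≤ ENNReal.ofReal t then true else false,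
    ?_, ?_⟩
  · -- measurability
    have hg : Measurable (fun p : ℝ × ProbabilityMeasure Y × Y =>
        (p.2.1 : Measure Y) (e ⁻¹' Set.Iic (e p.2.2))) := by
      have heq : (fun p : ℝ × ProbabilityMeasure Y × Y =>
          (p.2.1 : Measure Y) (e ⁻¹' Set.Iic (e p.2.2))) =
          fun p => ⨅ q : ℚ, if e p.2.2 < (q : ℝ) then
            (p.2.1 : Measure Y) (e ⁻¹' Set.Iic ((q : ℝ))) else 1 := by
        funext p
        exact stmt7_aux_iInf e he (p.2.1 : Measure Y) (e p.2.2)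
      rw [heq]
      refine Measurable.iInf fun q => ?_
      have hcoe : Measurable (fun μ : ProbabilityMeasure Y => (μ : Measure Y)) :=
        measurable_subtype_coe
      refine Measurable.ite ?_ ?_ measurable_const
      · exact measurableSet_lt ((he.measurable.comp measurable_snd).comp measurable_snd)
          measurable_const
      · exact (Measure.measurable_coe (he.measurable measurableSet_Iic)).comp
          (hcoe.comp (measurable_fst.comp measurable_snd))
    have hset : MeasurableSet {p : ℝ × ProbabilityMeasure Y × Y |
        (p.2.1 : Measure Y) (e ⁻¹' Set.Iic (e p.2.2)) ≤ ENNReal.ofReal p.1} :=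
      measurableSet_le hg (ENNReal.measurable_ofReal.comp measurable_fst)
    exact Measurable.ite hset measurable_const measurable_const
  · intro t ht μ hμ
    have : {y | (if (μ : Measure Y) (e ⁻¹' Set.Iic (e y)) ≤ ENNReal.ofReal t
        then true else false) = true} =
        {y | (μ : Measure Y) (e ⁻¹' Set.Iic (e y)) ≤ ENNReal.ofReal t} := by
      ext y
      by_cases h : (μ : Measure Y) (e ⁻¹' Set.Iic (e y)) ≤ ENNReal.ofReal t <;> simp [h]
    rw [this]
    exact stmt7_aux_main e he (μ : Measure Y) hμ t ht.1 ht.2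
end

section
/- Let X be a one-step mixing shift of finite type. Let a = a₀…a_{p−1} be an X-word and b = b₀…b_{q−1} an X-word such that the symbols a₀,…,a_{p−1}, b₀,…,b_{q−1} are pairwise distinct and, with a' a suffix of a, the word a a b a' is an X-word. Then for every positive multiple m of |b a' a²|, the word w := b a' (b a' a)^m has no self-overlap: for every 0 < k < |w|, the cylinders [w]_X and σ^{−k}[w]_X are disjoint. -/
/-- The shift map on bi-infinite sequences. -/
def shiftMap {A : Type*} (x : ℤ → A) : ℤ → A := fun n => x (n + 1)

/-- `w` is an `X`-word: it is read at coordinates `0, …, |w|−1` of some point of `X`. -/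
def IsWordOf {A : Type*} (X : Set (ℤ → A)) (w : List A) : Prop :=
  ∃ x ∈ X, ∀ i : Fin w.length, x ((i : ℕ) : ℤ) = w.get i

/-- The cylinder `[w]_X` of points of `X` spelling out `w` at coordinates `0, …, |w|−1`. -/
def cylOf {A : Type*} (X : Set (ℤ → A)) (w : List A) : Set (ℤ → A) :=
  {x ∈ X | ∀ i : Fin w.length, x ((i : ℕ) : ℤ) = w.get i}

private lemma shift_iter {A : Type*} (k : ℕ) (x : ℤ → A) (n : ℤ) :
    (shiftMap^[k] x) n = x (n + k) := by
  induction k generalizing x n with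
  | zero => simp
  | succ k ih =>
    rw [Function.iterate_succ, Function.comp_apply, ih]
    simp only [shiftMap]
    congr 1
    push_cast
    ring

private lemma rep_len {A : Type*} (m : ℕ) (cp : List A) :
    ((List.replicate m cp).flatten).length = m * cp.length := by
  simp [List.length_flatten]

private lemma rep_get {A : Type*} (cp : List A) (hc : 0 < cp.length) :
    ∀ (m i : ℕ) (h : i < m * cp.length),
      ((List.replicate m cp).flatten)[i]'(h.trans_eq (rep_len m cp).symm) =
        cp[i % cp.length]'(Nat.mod_lt _ hc)
  | 0, i, h => by omega
  | (m+1), i, h => by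
    simp only [List.replicate_succ, List.flatten_cons]
    by_cases hi : i < cp.length
    · rw [List.getElem_append_left hi]
      congr 1
      exact (Nat.mod_eq_of_lt hi).symm
    · rw [List.getElem_append_right (le_of_not_gt hi),
        rep_get cp hc m (i - cp.length) (by rw [Nat.succ_mul] at h; omega)]
      congr 1
      exact (Nat.mod_eq_sub_mod (le_of_not_gt hi)).symm

/-- In a one-step mixing SFT `X`, given words `a`, `b` with pairwise distinct symbols
such that `a a b a'` is an `X`-word (`a'` a suffix of `a`), the word
`w = b a' (b a' a)^m` (for `m` a positive multiple of `|b a' a²|`) has no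
self-overlap: `[w]_X ∩ σ^{−k}[w]_X = ∅` for all `0 < k < |w|`. -/
theorem stmt12 {A : Type*} (X : Set (ℤ → A))
    (hinv : ∀ x ∈ X, shiftMap x ∈ X ∧ (fun n : ℤ => x (n - 1)) ∈ X)
    (E : Set (A × A)) (hSFT : X = {x | ∀ n : ℤ, (x n, x (n + 1)) ∈ E})
    (hmix : ∃ Nmix : ℕ, ∀ u v : List A, IsWordOf X u → IsWordOf X v →
      ∀ n, Nmix ≤ n → ∃ t : List A, t.length = n ∧ IsWordOf X (u ++ t ++ v))
    (a b : List A) (ha : a ≠ []) (hb : b ≠ [])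
    (p' : ℕ) (hp' : 1 ≤ p') (hp'le : p' ≤ a.length) (a' : List A) (ha' : a' = a.drop p')
    (hnodup : (a ++ b).Nodup)
    (haaba' : IsWordOf X (a ++ a ++ b ++ a'))
    (m : ℕ) (hm : 0 < m) (hmult : (b ++ a' ++ a ++ a).length ∣ m)
    (w : List A) (hw : w = b ++ a' ++ (List.replicate m (b ++ a' ++ a)).flatten) :
    ∀ k : ℕ, 0 < k → k < w.length →
      cylOf X w ∩ (shiftMap^[k]) ⁻¹' (cylOf X w) = ∅ := by
  intro k hk hklt
  rw [Set.eq_empty_iff_forall_notMem]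
  rintro x ⟨hx1, hx2⟩
  set u : List A := b ++ a' with hu
  set cp : List A := u ++ a with hcp
  have hb0 : 0 < b.length := List.length_pos_iff.mpr hb
  have ha0 : 0 < a.length := List.length_pos_iff.mpr ha
  have hQval : u.length = b.length + a'.length := by simp [hu]
  have hPval : cp.length = u.length + a.length := by simp [hcp]
  have hQP : u.length < cp.length := by omega
  have hP0 : 0 < cp.length := by omega
  have hwlen : w.length = u.length + m * cp.length := by
    rw [hw, List.length_append, rep_len]
  have hdisj : a.Disjoint b := fun _ hx hy => (List.nodup_append.mp hnodup).2.2 _ hx _ hy rfl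
  have hbnd : b.Nodup := (List.nodup_append.mp hnodup).2.1
  have hx1' := hx1.2
  have hx2' := hx2.2
  have key : ∀ i (h : i + k < w.length), w[i + k]'h = w[i]'(by omega) := by
    intro i h
    have e1 := hx1' ⟨i + k, h⟩
    have e2 := hx2' ⟨i, by omega⟩
    simp only [List.get_eq_getElem] at e1 e2
    rw [shift_iter] at e2
    have hcast : (((i + k : ℕ) : ℕ) : ℤ) = ((i : ℕ) : ℤ) + (k : ℤ) := by
      push_cast
      ring
    rw [← e1, ← e2, hcast]
  have wval1 : ∀ i (h : i < u.length),
      w[i]'(by omega) = cp[i]'(by omega) := by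
    intro i h
    rw [List.getElem_of_eq hw (by omega), List.getElem_append_left h,
      List.getElem_of_eq hcp (by omega), List.getElem_append_left h]
  have wval2 : ∀ i (h1 : u.length ≤ i) (h2 : i < w.length),
      w[i]'h2 = cp[(i - u.length) % cp.length]'(Nat.mod_lt _ hP0) := by
    intro i h1 h2
    rw [List.getElem_of_eq hw h2, List.getElem_append_right h1]
    exact rep_get cp hP0 m (i - u.length) (by omega)
  have hc0 : cp[0]'hP0 = b[0]'hb0 := by
    rw [List.getElem_of_eq hcp hP0, List.getElem_append_left (by omega),
      List.getElem_of_eq hu (by omega), List.getElem_append_left hb0]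
  have hcQ : cp[u.length]'hQP = a[0]'ha0 := by
    rw [List.getElem_of_eq hcp hQP, List.getElem_append_right le_rfl]
    congr 1
    omega
  have hcb : ∀ j (h : j < cp.length), cp[j]'h = cp[0]'hP0 → j = 0 := by
    intro j h he
    rw [hc0] at he
    by_cases hjb : j < b.length
    · have hje : cp[j]'h = b[j]'hjb := by
        rw [List.getElem_of_eq hcp h, List.getElem_append_left (by omega),
          List.getElem_of_eq hu (by omega), List.getElem_append_left hjb]
      rw [hje] at he
      exact hbnd.getElem_inj_iff.mp he
    · exfalso
      have hmema : cp[j]'h ∈ a := by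
        by_cases hju : j < u.length
        · have hje : cp[j]'h = a'[j - b.length]'(by omega) := by
            rw [List.getElem_of_eq hcp h, List.getElem_append_left hju,
              List.getElem_of_eq hu hju,
              List.getElem_append_right (le_of_not_gt hjb)]
          have hsub : ∀ y, y ∈ a' → y ∈ a := by
            intro y hy
            rw [ha'] at hy
            exact List.mem_of_mem_drop hy
          exact hsub _ (hje ▸ List.getElem_mem _)
        · have hje : cp[j]'h = a[j - u.length]'(by omega) := by
            rw [List.getElem_of_eq hcp h,
              List.getElem_append_right (le_of_not_gt hju)]
          exact hje ▸ List.getElem_mem _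
      have hmemb : cp[j]'h ∈ b := he ▸ List.getElem_mem hb0
      exact hdisj hmema hmemb
  have hk1 : w[k]'hklt = cp[0]'hP0 := by
    have h0 := key 0 (by omega)
    simp only [Nat.zero_add] at h0
    rw [h0]
    exact wval1 0 (by omega)
  have hQk : u.length ≤ k := by
    by_contra h'
    have := hcb k (by omega) (by rw [← wval1 k (by omega)]; exact hk1)
    omega
  have hmod : (k - u.length) % cp.length = 0 :=
    hcb ((k - u.length) % cp.length) (Nat.mod_lt _ hP0)
      (by rw [← wval2 k hQk hklt]; exact hk1)
  obtain ⟨j, hj⟩ : cp.length ∣ (k - u.length) := Nat.dvd_of_mod_eq_zero hmod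
  have hkform : k = u.length + cp.length * j := by omega
  have hjm : j < m := by
    rw [hwlen] at hklt
    by_contra h'
    have h2 : cp.length * m ≤ cp.length * j := Nat.mul_le_mul_left _ (by omega)
    rw [Nat.mul_comm] at h2
    omega
  have hQklt : u.length + k < w.length := by
    rw [hwlen, hkform]
    have h2 : cp.length * (j + 1) ≤ cp.length * m := Nat.mul_le_mul_left _ (by omega)
    nlinarith
  have e := key u.length hQklt
  have eL : w[u.length + k]'hQklt = a[0]'ha0 := by
    rw [wval2 (u.length + k) (by omega) hQklt, ← hcQ]
    congr 1
    rw [hkform]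
    have h3 : u.length + (u.length + cp.length * j) - u.length
        = u.length + cp.length * j := by omega
    rw [h3, Nat.add_mul_mod_self_left, Nat.mod_eq_of_lt hQP]
  have eR : w[u.length]'(by omega) = b[0]'hb0 := by
    rw [wval2 u.length le_rfl (by omega)]
    simp only [Nat.sub_self, Nat.zero_mod]
    exact hc0
  rw [eL, eR] at e
  exact hdisj (e ▸ List.getElem_mem ha0) (List.getElem_mem hb0)
end

section
/- Let X be a mixing shift of finite type with topological entropy h_top(X) > 0, and let w be an X-word of length L such that no two occurrences of w in points of X overlap. Let X_w = ⋂_{n∈ℤ} σ^{−n}(X \ [w]_X) be the subshift of points avoiding w, and suppose there is an equal-length word w̃ such that replacing occurrences of w by w̃ produces X-words in which neither w nor w̃ overlaps itself or the other. Then h_top(X) ≤ h_top(X_w) + (log 2)/L. -/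
open Filter Classical

/-- `w` occurs in `x` at position `i`. -/
def occursAt {A : Type*} {L : ℕ} (w : Fin L → A) (x : ℤ → A) (i : ℤ) : Prop :=
  ∀ j : Fin L, x (i + (j : ℕ)) = w j

/-- `w` is an `X`-word (read at positions `0,…,n−1` of some point of `X`). -/
def isFinWord {A : Type*} (X : Set (ℤ → A)) {n : ℕ} (w : Fin n → A) : Prop :=
  ∃ x ∈ X, ∀ i : Fin n, x ((i : ℕ) : ℤ) = w i

/-- Topological entropy of a subshift: the exponential growth rate of the number of
admissible words. -/
noncomputable def subshiftEntropy {A : Type*} [Fintype A] (X : Set (ℤ → A)) : ℝ :=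
  Filter.limsup
    (fun n : ℕ => Real.log (Nat.card {w : Fin n → A // isFinWord X w}) / n) Filter.atTop

/-- The point obtained from `x` by replacing every occurrence of `w` by the
equal-length word `w̃`. -/
noncomputable def replaceWord {A : Type*} {L : ℕ} (w wt : Fin L → A) (x : ℤ → A) :
    ℤ → A := fun n =>
  if h : ∃ i : ℤ, occursAt w x i ∧ i ≤ n ∧ n < i + L then
    wt ⟨(n - h.choose).toNat, by
      obtain ⟨-, hi, hn⟩ := h.choose_spec; omega⟩
  else x n

/-! ### auxiliary definitions -/

noncomputable def cbool (p : Prop) : Bool := @decide p (Classical.propDecidable p)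

lemma cbool_iff (p : Prop) : cbool p = true ↔ p := by
  unfold cbool
  exact @decide_eq_true_iff p _

section Aux

variable {A : Type*} {L : ℕ}

lemma shift_mem {X : Set (ℤ → A)}
    (hinv : ∀ x ∈ X, (fun n : ℤ => x (n + 1)) ∈ X ∧ (fun n : ℤ => x (n - 1)) ∈ X)
    {x : ℤ → A} (hx : x ∈ X) (m : ℤ) : (fun n => x (n + m)) ∈ X := by
  induction m using Int.induction_on with
  | zero => simpa using hx
  | succ k ih =>
      have h2 := (hinv _ ih).1
      have : (fun n : ℤ => x (n + 1 + (k : ℤ))) = (fun n : ℤ => x (n + ((k : ℤ) + 1))) := by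
        funext n; ring_nf
      simpa [this] using h2
  | pred k ih =>
      have h2 := (hinv _ ih).2
      have : (fun n : ℤ => x (n - 1 + (-(k : ℤ)))) = (fun n : ℤ => x (n + (-(k : ℤ) - 1))) := by
        funext n; ring_nf
      simpa [this] using h2

variable (w wt : Fin L → A)

lemma occ_sep {X : Set (ℤ → A)}
    (hinv : ∀ x ∈ X, (fun n : ℤ => x (n + 1)) ∈ X ∧ (fun n : ℤ => x (n - 1)) ∈ X)
    (hov : ∀ u ∈ ({w, wt} : Set (Fin L → A)), ∀ v ∈ ({w, wt} : Set (Fin L → A)),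
      ∀ x ∈ X, ∀ k : ℤ, 0 < k → k < L → ¬ (occursAt u x 0 ∧ occursAt v x k))
    {x : ℤ → A} (hx : x ∈ X) {a b : Fin L → A}
    (ha : a ∈ ({w, wt} : Set (Fin L → A))) (hb : b ∈ ({w, wt} : Set (Fin L → A)))
    {i i' : ℤ} (h1 : occursAt a x i) (h2 : occursAt b x i')
    (hlt : i < i') (hlt2 : i' < i + L) : False := by
  have hx' : (fun n => x (n + i)) ∈ X := shift_mem hinv hx i
  refine hov a ha b hb _ hx' (i' - i) (by omega) (by omega) ⟨fun j => ?_, fun j => ?_⟩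
  · show x (0 + (j : ℕ) + i) = a j
    rw [show (0 + (j : ℕ) + i : ℤ) = i + (j : ℕ) by ring]; exact h1 j
  · show x (i' - i + (j : ℕ) + i) = b j
    rw [show (i' - i + (j : ℕ) + i : ℤ) = i' + (j : ℕ) by ring]; exact h2 j

lemma replace_not_occ {x : ℤ → A} {q : ℤ}
    (h : ¬ ∃ i : ℤ, occursAt w x i ∧ i ≤ q ∧ q < i + L) :
    replaceWord w wt x q = x q := dif_neg h

lemma replace_on_occ {X : Set (ℤ → A)}
    (hinv : ∀ x ∈ X, (fun n : ℤ => x (n + 1)) ∈ X ∧ (fun n : ℤ => x (n - 1)) ∈ X)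
    (hov : ∀ u ∈ ({w, wt} : Set (Fin L → A)), ∀ v ∈ ({w, wt} : Set (Fin L → A)),
      ∀ x ∈ X, ∀ k : ℤ, 0 < k → k < L → ¬ (occursAt u x 0 ∧ occursAt v x k))
    {x : ℤ → A} (hx : x ∈ X) {i : ℤ} (hi : occursAt w x i) :
    occursAt wt (replaceWord w wt x) i := by
  intro j
  have hex : ∃ i' : ℤ, occursAt w x i' ∧ i' ≤ i + (j : ℕ) ∧ i + (j : ℕ) < i' + L :=
    ⟨i, hi, by omega, by omega⟩
  show replaceWord w wt x (i + (j : ℕ)) = wt j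
  unfold replaceWord
  rw [dif_pos hex]
  have hs := hex.choose_spec
  have hw : w ∈ ({w, wt} : Set (Fin L → A)) := Set.mem_insert _ _
  have hci : hex.choose = i := by
    rcases lt_trichotomy hex.choose i with h | h | h
    · exact absurd (occ_sep w wt hinv hov hx hw hw hs.1 hi h (by omega)) (fun f => f.elim)
    · exact h
    · exact absurd (occ_sep w wt hinv hov hx hw hw hi hs.1 h (by omega)) (fun f => f.elim)
  refine congrArg wt (Fin.ext ?_)
  show (i + (j : ℕ) - hex.choose).toNat = (j : ℕ)
  omega

end Aux

section Enc

variable {A : Type*} {L : ℕ} (hL : 1 ≤ L) (w wt : Fin L → A) {n : ℕ}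

/-- `wt` occurs in the word `v` at position `i`, fully inside the window. -/
def Tmem (v : Fin n → A) (i : ℕ) : Prop :=
  i + L ≤ n ∧ ∀ j : Fin L, ∀ hj : i + (j : ℕ) < n, v ⟨i + (j : ℕ), hj⟩ = wt j

/-- look up the bit of the block containing `i`. -/
def Bfun (bits : Fin (n / L + 1) → Bool) (i : ℕ) : Bool :=
  if h : i / L < n / L + 1 then bits ⟨i / L, h⟩ else false

noncomputable def decode (v : Fin n → A) (a b : Fin L) (bits : Fin (n / L + 1) → Bool)
    (p : Fin n) : A :=
  if h1 : (p : ℕ) < (a : ℕ) then w ⟨(p : ℕ) + L - a, by have := a.2; have := p.2; omega⟩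
  else if h2 : n ≤ (p : ℕ) + (b : ℕ) then w ⟨(p : ℕ) + (b : ℕ) - n, by have := b.2; have := p.2; omega⟩
  else if h3 : ∃ i : ℕ, Tmem wt v i ∧ Bfun bits i = true ∧ i ≤ (p : ℕ) ∧ (p : ℕ) < i + L then
    w ⟨(p : ℕ) - h3.choose, by obtain ⟨-, -, h4, h5⟩ := h3.choose_spec; omega⟩
  else v p

noncomputable def encode (X : Set (ℤ → A))
    (up : {u : Fin n → A // isFinWord X u}) :
    (Fin n → A) × (Fin L × Fin L) × (Fin (n / L + 1) → Bool) :=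
  ( fun q : Fin n => replaceWord w wt up.2.choose ((q : ℕ) : ℤ),
    ( (if h : ∃ i : ℤ, occursAt w up.2.choose i ∧ i < 0 ∧ 0 < i + L then
        ⟨(h.choose + L).toNat, by obtain ⟨-, h1, h2⟩ := h.choose_spec; omega⟩
      else ⟨0, hL⟩ : Fin L),
      (if h : ∃ i : ℤ, occursAt w up.2.choose i ∧ (n : ℤ) - L < i ∧ i < n then
        ⟨((n : ℤ) - h.choose).toNat, by obtain ⟨-, h1, h2⟩ := h.choose_spec; omega⟩
      else ⟨0, hL⟩ : Fin L) ),
    fun b => cbool (∃ i : ℕ, occursAt w up.2.choose (i : ℤ) ∧ i + L ≤ n ∧ i / L = (b : ℕ)) )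

end Enc

section Main

variable {A : Type*} {L : ℕ}

lemma decode_spec (hL : 1 ≤ L) (w wt : Fin L → A) {X : Set (ℤ → A)}
    (hinv : ∀ x ∈ X, (fun n : ℤ => x (n + 1)) ∈ X ∧ (fun n : ℤ => x (n - 1)) ∈ X)
    (hov : ∀ u ∈ ({w, wt} : Set (Fin L → A)), ∀ v ∈ ({w, wt} : Set (Fin L → A)),
      ∀ x ∈ X, ∀ k : ℤ, 0 < k → k < L → ¬ (occursAt u x 0 ∧ occursAt v x k))
    (hrepl : ∀ x ∈ X, replaceWord w wt x ∈ X ∧ ∀ i : ℤ, ¬ occursAt w (replaceWord w wt x) i)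
    {n : ℕ} (hn : 2 * L ≤ n) {x : ℤ → A} (hx : x ∈ X)
    (v : Fin n → A) (hv : ∀ q : Fin n, v q = replaceWord w wt x ((q : ℕ) : ℤ))
    (a b : Fin L) (bits : Fin (n / L + 1) → Bool)
    (hA : ∀ i : ℤ, occursAt w x i → i < 0 → 0 < i + L → (a : ℕ) = (i + L).toNat)
    (hA' : (a : ℕ) ≠ 0 → ∃ i : ℤ, occursAt w x i ∧ i < 0 ∧ 0 < i + L ∧
      (a : ℕ) = (i + L).toNat)
    (hB : ∀ i : ℤ, occursAt w x i → (n : ℤ) - L < i → i < n → (b : ℕ) = ((n : ℤ) - i).toNat)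
    (hB' : (b : ℕ) ≠ 0 → ∃ i : ℤ, occursAt w x i ∧ (n : ℤ) - L < i ∧ i < n ∧
      (b : ℕ) = ((n : ℤ) - i).toNat)
    (hbits : ∀ i : ℕ, i + L ≤ n →
      (Bfun bits i = true ↔ ∃ i'' : ℕ, occursAt w x (i'' : ℤ) ∧ i'' + L ≤ n ∧ i'' / L = i / L))
    (p : Fin n) :
    decode w wt v a b bits p = x ((p : ℕ) : ℤ) := by
  set y := replaceWord w wt x with hydef
  have hy : y ∈ X := (hrepl x hx).1
  have hyw : ∀ i : ℤ, ¬ occursAt w y i := (hrepl x hx).2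
  have hwmem : w ∈ ({w, wt} : Set (Fin L → A)) := Set.mem_insert _ _
  have hwtmem : wt ∈ ({w, wt} : Set (Fin L → A)) := Set.mem_insert_of_mem _ rfl
  have hsepx : ∀ {i i' : ℤ}, occursAt w x i → occursAt w x i' → i < i' → i + L ≤ i' := by
    intro i i' h1 h2 hlt
    by_contra hcon
    exact occ_sep w wt hinv hov hx hwmem hwmem h1 h2 hlt (by omega)
  have hsepy : ∀ {i i' : ℤ}, occursAt wt y i → occursAt wt y i' → i < i' → i + L ≤ i' := by
    intro i i' h1 h2 hlt
    by_contra hcon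
    exact occ_sep w wt hinv hov hy hwtmem hwtmem h1 h2 hlt (by omega)
  have hocc : ∀ {i : ℤ}, occursAt w x i → occursAt wt y i := by
    intro i hi; exact replace_on_occ w wt hinv hov hx hi
  have hval : ∀ i : ℤ, occursAt w x i → i ≤ (p : ℕ) → ((p : ℕ) : ℤ) < i + L →
      ∀ hpf : (((p : ℕ) : ℤ) - i).toNat < L,
      x ((p : ℕ) : ℤ) = w ⟨(((p : ℕ) : ℤ) - i).toNat, hpf⟩ := by
    intro i hi h1 h2 hpf
    have h5 := hi ⟨(((p : ℕ) : ℤ) - i).toNat, hpf⟩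
    rw [← h5]
    congr 1
    simp only [Fin.val_mk]
    omega
  have hTocc : ∀ i0 : ℕ, Tmem wt v i0 → occursAt wt y (i0 : ℤ) := by
    intro i0 hT j
    obtain ⟨h1, h2⟩ := hT
    have hj2 := j.2
    have h3 := h2 j (by omega)
    rw [hv] at h3
    rw [← h3, hydef]
    try congr 1
    try simp only [Fin.val_mk]
    try push_cast
    try ring
  have hoccT : ∀ i0 : ℕ, i0 + L ≤ n → occursAt wt y (i0 : ℤ) → Tmem wt v i0 := by
    intro i0 h1 h2
    refine ⟨h1, fun j hj => ?_⟩
    have h3 := h2 j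
    rw [hv, ← h3, hydef]
    try congr 1
    try simp only [Fin.val_mk]
    try push_cast
    try ring
  have hblock : ∀ i1 i2 : ℕ, occursAt wt y (i1 : ℤ) → occursAt wt y (i2 : ℤ) →
      i1 / L = i2 / L → i1 = i2 := by
    intro i1 i2 h1 h2 hq
    have e1 := Nat.div_add_mod i1 L
    have e2 := Nat.div_add_mod i2 L
    have m1 : i1 % L < L := Nat.mod_lt _ (by omega)
    have m2 : i2 % L < L := Nat.mod_lt _ (by omega)
    rw [hq] at e1
    rcases lt_trichotomy (i1 : ℤ) (i2 : ℤ) with h | h | h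
    · have := hsepy h1 h2 h
      generalize L * (i2 / L) = M at e1 e2
      omega
    · exact_mod_cast h
    · have := hsepy h2 h1 h
      generalize L * (i2 / L) = M at e1 e2
      omega
  rw [decode]
  by_cases hcov : ∃ i : ℤ, occursAt w x i ∧ i ≤ ((p : ℕ) : ℤ) ∧ ((p : ℕ) : ℤ) < i + L
  · obtain ⟨i, hi, hip, hpi⟩ := hcov
    rcases lt_or_ge i 0 with hc | hc
    · have ha := hA i hi hc (by omega)
      rw [dif_pos (show (p : ℕ) < (a : ℕ) by omega)]
      rw [hval i hi hip hpi (by omega)]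
      exact congrArg w (Fin.ext (by simp only [Fin.val_mk]; omega))
    rcases le_or_gt (i + L) (n : ℤ) with hc2 | hc2
    · have hc1 : ¬ ((p : ℕ) < (a : ℕ)) := by
        intro hlt
        obtain ⟨i0, hi0, h1, h2, h3⟩ := hA' (by omega)
        have := hsepx hi0 hi (by omega)
        omega
      rw [dif_neg hc1]
      have hc2' : ¬ (n ≤ (p : ℕ) + (b : ℕ)) := by
        intro hle
        have hb1 : (b : ℕ) ≠ 0 := by
          have := p.2; omega
        obtain ⟨i1, hi1, h1, h2, h3⟩ := hB' hb1
        have := hsepx hi hi1 (by omega)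
        omega
      rw [dif_neg hc2']
      set iN : ℕ := i.toNat with hiNdef
      have hiN : (iN : ℤ) = i := by omega
      have hyT : occursAt wt y (iN : ℤ) := by rw [hiN]; exact hocc hi
      have hTi : Tmem wt v iN := hoccT iN (by omega) hyT
      have hBi : Bfun bits iN = true := by
        rw [hbits iN (by omega)]
        exact ⟨iN, by rw [hiN]; exact hi, by omega, rfl⟩
      have hex3 : ∃ i0 : ℕ, Tmem wt v i0 ∧ Bfun bits i0 = true ∧ i0 ≤ (p : ℕ) ∧
          (p : ℕ) < i0 + L := ⟨iN, hTi, hBi, by omega, by omega⟩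
      rw [dif_pos hex3]
      obtain ⟨hT', hB', hle', hlt'⟩ := hex3.choose_spec
      have hchoose : hex3.choose = iN := by
        have h1 := hTocc _ hT'
        rcases lt_trichotomy ((hex3.choose : ℕ) : ℤ) ((iN : ℕ) : ℤ) with h | h | h
        · have := hsepy h1 hyT h; omega
        · exact_mod_cast h
        · have := hsepy hyT h1 h; omega
      rw [hval i hi hip hpi (by omega)]
      exact congrArg w (Fin.ext (by simp only [Fin.val_mk]; omega))
    · have hb := hB i hi (by omega) (by omega)
      have hc1 : ¬ ((p : ℕ) < (a : ℕ)) := by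
        have := a.2; omega
      rw [dif_neg hc1]
      rw [dif_pos (show n ≤ (p : ℕ) + (b : ℕ) by omega)]
      rw [hval i hi hip hpi (by omega)]
      exact congrArg w (Fin.ext (by simp only [Fin.val_mk]; omega))
  · have hxyp : y ((p : ℕ) : ℤ) = x ((p : ℕ) : ℤ) := by
      rw [hydef]
      exact replace_not_occ w wt hcov
    have hc1 : ¬ ((p : ℕ) < (a : ℕ)) := by
      intro hlt
      obtain ⟨i0, hi0, h1, h2, h3⟩ := hA' (by omega)
      exact hcov ⟨i0, hi0, by omega, by omega⟩
    rw [dif_neg hc1]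
    have hc2 : ¬ (n ≤ (p : ℕ) + (b : ℕ)) := by
      intro hle
      have hb1 : (b : ℕ) ≠ 0 := by have := p.2; omega
      obtain ⟨i1, hi1, h1, h2, h3⟩ := hB' hb1
      exact hcov ⟨i1, hi1, by omega, by omega⟩
    rw [dif_neg hc2]
    have hc3 : ¬ ∃ i0 : ℕ, Tmem wt v i0 ∧ Bfun bits i0 = true ∧ i0 ≤ (p : ℕ) ∧
        (p : ℕ) < i0 + L := by
      rintro ⟨i0, hT0, hB0, hle0, hlt0⟩
      obtain ⟨i'', hi'', h1, h2⟩ := (hbits i0 hT0.1).mp hB0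
      have : i'' = i0 := hblock i'' i0 (hocc hi'') (hTocc _ hT0) h2
      subst this
      exact hcov ⟨(i'' : ℤ), hi'', by omega, by omega⟩
    rw [dif_neg hc3]
    rw [hv, hxyp]

end Main

section Main2

variable {A : Type*} {L : ℕ}

lemma decode_encode (hL : 1 ≤ L) (w wt : Fin L → A) {X : Set (ℤ → A)}
    (hinv : ∀ x ∈ X, (fun n : ℤ => x (n + 1)) ∈ X ∧ (fun n : ℤ => x (n - 1)) ∈ X)
    (hov : ∀ u ∈ ({w, wt} : Set (Fin L → A)), ∀ v ∈ ({w, wt} : Set (Fin L → A)),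
      ∀ x ∈ X, ∀ k : ℤ, 0 < k → k < L → ¬ (occursAt u x 0 ∧ occursAt v x k))
    (hrepl : ∀ x ∈ X, replaceWord w wt x ∈ X ∧ ∀ i : ℤ, ¬ occursAt w (replaceWord w wt x) i)
    {n : ℕ} (hn : 2 * L ≤ n) (up : {u : Fin n → A // isFinWord X u}) (p : Fin n) :
    decode w wt (encode hL w wt X up).1 (encode hL w wt X up).2.1.1
      (encode hL w wt X up).2.1.2 (encode hL w wt X up).2.2 p = up.1 p := by
  have hspec := up.2.choose_spec
  set x := up.2.choose with hxdef
  obtain ⟨hx, hxu⟩ := hspec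
  have hwmem : w ∈ ({w, wt} : Set (Fin L → A)) := Set.mem_insert _ _
  have hsepx : ∀ {i i' : ℤ}, occursAt w x i → occursAt w x i' → i < i' → i + L ≤ i' := by
    intro i i' h1 h2 hlt
    by_contra hcon
    exact occ_sep w wt hinv hov hx hwmem hwmem h1 h2 hlt (by omega)
  simp only [encode, ← hxdef]
  rw [decode_spec hL w wt hinv hov hrepl hn hx _ (fun q => rfl) _ _ _ ?hA ?hA' ?hB ?hB' ?hbits]
  · exact hxu p
  case hA =>
    intro i hi h1 h2
    have hEL : ∃ i : ℤ, occursAt w x i ∧ i < 0 ∧ 0 < i + L := ⟨i, hi, h1, h2⟩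
    rw [dif_pos hEL]
    obtain ⟨hc1, hc2, hc3⟩ := hEL.choose_spec
    have heq : hEL.choose = i := by
      rcases lt_trichotomy hEL.choose i with h | h | h
      · have := hsepx hc1 hi h; omega
      · exact h
      · have := hsepx hi hc1 h; omega
    simp only [Fin.val_mk]
    omega
  case hA' =>
    intro h
    by_cases hEL : ∃ i : ℤ, occursAt w x i ∧ i < 0 ∧ 0 < i + L
    · obtain ⟨hc1, hc2, hc3⟩ := hEL.choose_spec
      refine ⟨hEL.choose, hc1, hc2, hc3, ?_⟩
      rw [dif_pos hEL]
    · rw [dif_neg hEL] at h; simp at h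
  case hB =>
    intro i hi h1 h2
    have hER : ∃ i : ℤ, occursAt w x i ∧ (n : ℤ) - L < i ∧ i < n := ⟨i, hi, h1, h2⟩
    rw [dif_pos hER]
    obtain ⟨hc1, hc2, hc3⟩ := hER.choose_spec
    have heq : hER.choose = i := by
      rcases lt_trichotomy hER.choose i with h | h | h
      · have := hsepx hc1 hi h; omega
      · exact h
      · have := hsepx hi hc1 h; omega
    simp only [Fin.val_mk]
    omega
  case hB' =>
    intro h
    by_cases hER : ∃ i : ℤ, occursAt w x i ∧ (n : ℤ) - L < i ∧ i < n
    · obtain ⟨hc1, hc2, hc3⟩ := hER.choose_spec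
      refine ⟨hER.choose, hc1, hc2, hc3, ?_⟩
      rw [dif_pos hER]
    · rw [dif_neg hER] at h; simp at h
  case hbits =>
    intro i hi
    have hdiv : i / L < n / L + 1 := by
      have := Nat.div_le_div_right (c := L) (show i ≤ n by omega)
      omega
    rw [Bfun, dif_pos hdiv, cbool_iff]
    try simp only [Fin.val_mk]

end Main2

section Count

variable {A : Type*} [Fintype A] {L : ℕ}

lemma main_count {X : Set (ℤ → A)}
    (hinv : ∀ x ∈ X, (fun n : ℤ => x (n + 1)) ∈ X ∧ (fun n : ℤ => x (n - 1)) ∈ X)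
    (hL : 1 ≤ L) (w wt : Fin L → A)
    (hov : ∀ u ∈ ({w, wt} : Set (Fin L → A)), ∀ v ∈ ({w, wt} : Set (Fin L → A)),
      ∀ x ∈ X, ∀ k : ℤ, 0 < k → k < L → ¬ (occursAt u x 0 ∧ occursAt v x k))
    (hrepl : ∀ x ∈ X, replaceWord w wt x ∈ X ∧ ∀ i : ℤ, ¬ occursAt w (replaceWord w wt x) i)
    (n : ℕ) (hn : 2 * L ≤ n) :
    Nat.card {u : Fin n → A // isFinWord X u} ≤
      Nat.card {v : Fin n → A // isFinWord {x ∈ X | ∀ i : ℤ, ¬ occursAt w x i} v} *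
        (L * L * 2 ^ (n / L + 1)) := by
  classical
  set Y : Set (ℤ → A) := {x ∈ X | ∀ i : ℤ, ¬ occursAt w x i} with hYdef
  have hEnc : ∀ up : {u : Fin n → A // isFinWord X u}, isFinWord Y (encode hL w wt X up).1 := by
    intro up
    obtain ⟨hx, hxu⟩ := up.2.choose_spec
    exact ⟨replaceWord w wt up.2.choose,
      ⟨(hrepl _ hx).1, (hrepl _ hx).2⟩, fun q => rfl⟩
  set F : {u : Fin n → A // isFinWord X u} →
      {v : Fin n → A // isFinWord Y v} × (Fin L × Fin L) × (Fin (n / L + 1) → Bool) :=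
    fun up => (⟨(encode hL w wt X up).1, hEnc up⟩, (encode hL w wt X up).2) with hFdef
  have hFinj : Function.Injective F := by
    intro u1 u2 h
    have h1 : (encode hL w wt X u1).1 = (encode hL w wt X u2).1 :=
      congrArg (fun z => z.1.1) h
    have h21 : (encode hL w wt X u1).2.1.1 = (encode hL w wt X u2).2.1.1 :=
      congrArg (fun z => z.2.1.1) h
    have h22 : (encode hL w wt X u1).2.1.2 = (encode hL w wt X u2).2.1.2 :=
      congrArg (fun z => z.2.1.2) h
    have h23 : (encode hL w wt X u1).2.2 = (encode hL w wt X u2).2.2 :=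
      congrArg (fun z => z.2.2) h
    apply Subtype.ext
    funext p
    rw [← decode_encode hL w wt hinv hov hrepl hn u1 p,
        ← decode_encode hL w wt hinv hov hrepl hn u2 p, h1, h21, h22, h23]
  have hcard := Nat.card_le_card_of_injective F hFinj
  calc Nat.card {u : Fin n → A // isFinWord X u} ≤ _ := hcard
    _ = Nat.card {v : Fin n → A // isFinWord Y v} * (L * L * 2 ^ (n / L + 1)) := by
        rw [Nat.card_prod, Nat.card_prod, Nat.card_prod]
        have e1 : Nat.card (Fin L) = L := by simp
        have e2 : Nat.card (Fin (n / L + 1) → Bool) = 2 ^ (n / L + 1) := by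
          rw [Nat.card_fun]; simp
        rw [e1, e2]

end Count

/-- If `X` is a mixing SFT with positive entropy, `w` a non-self-overlapping `X`-word
of length `L`, and `w̃` an equal-length word such that replacing occurrences of `w`
by `w̃` produces points of `X` avoiding `w`, with no overlaps among `w, w̃`, then
`h_top(X) ≤ h_top(X_w) + (log 2)/L`, where `X_w` is the subshift of points of `X`
avoiding `w`. -/
theorem stmt13 {A : Type*} [Fintype A] (X : Set (ℤ → A))
    (hinv : ∀ x ∈ X, (fun n : ℤ => x (n + 1)) ∈ X ∧ (fun n : ℤ => x (n - 1)) ∈ X)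
    (E : Set (A × A)) (hSFT : X = {x | ∀ n : ℤ, (x n, x (n + 1)) ∈ E})
    (hmix : ∃ Nmix : ℕ, ∀ (nu nv : ℕ) (u : Fin nu → A) (v : Fin nv → A),
      isFinWord X u → isFinWord X v → ∀ n, Nmix ≤ n →
        ∃ x ∈ X, (∀ i : Fin nu, x ((i : ℕ) : ℤ) = u i) ∧
          ∀ i : Fin nv, x ((nu + n + (i : ℕ) : ℕ) : ℤ) = v i)
    (hpos : 0 < subshiftEntropy X)
    (L : ℕ) (hL : 1 ≤ L) (w wt : Fin L → A) (hword : isFinWord X w)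
    (hov : ∀ u ∈ ({w, wt} : Set (Fin L → A)), ∀ v ∈ ({w, wt} : Set (Fin L → A)),
      ∀ x ∈ X, ∀ k : ℤ, 0 < k → k < L → ¬ (occursAt u x 0 ∧ occursAt v x k))
    (hrepl : ∀ x ∈ X, replaceWord w wt x ∈ X ∧ ∀ i : ℤ, ¬ occursAt w (replaceWord w wt x) i) :
    subshiftEntropy X ≤
      subshiftEntropy {x ∈ X | ∀ i : ℤ, ¬ occursAt w x i} + Real.log 2 / L := by
  classical
  obtain ⟨x0, hx0, -⟩ := hword
  rw [subshiftEntropy, subshiftEntropy]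
  set Y : Set (ℤ → A) := {x ∈ X | ∀ i : ℤ, ¬ occursAt w x i} with hYdef
  have hy0 : replaceWord w wt x0 ∈ Y := ⟨(hrepl x0 hx0).1, (hrepl x0 hx0).2⟩
  set f : ℕ → ℝ :=
    fun n => Real.log (Nat.card {u : Fin n → A // isFinWord X u}) / n with hfdef
  set g : ℕ → ℝ :=
    fun n => Real.log (Nat.card {v : Fin n → A // isFinWord Y v}) / n with hgdef
  have hXw : ∀ n : ℕ, 1 ≤ Nat.card {u : Fin n → A // isFinWord X u} := by
    intro n
    have : Nonempty {u : Fin n → A // isFinWord X u} :=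
      ⟨⟨fun i => x0 ((i : ℕ) : ℤ), x0, hx0, fun i => rfl⟩⟩
    exact Nat.card_pos
  have hYw : ∀ n : ℕ, 1 ≤ Nat.card {v : Fin n → A // isFinWord Y v} := by
    intro n
    have : Nonempty {v : Fin n → A // isFinWord Y v} :=
      ⟨⟨fun i => replaceWord w wt x0 ((i : ℕ) : ℤ), replaceWord w wt x0, hy0, fun i => rfl⟩⟩
    exact Nat.card_pos
  have hA1 : (1 : ℕ) ≤ Fintype.card A := Fintype.card_pos_iff.mpr ⟨x0 0⟩
  have hYcard : ∀ n : ℕ, Nat.card {v : Fin n → A // isFinWord Y v} ≤ Fintype.card A ^ n := by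
    intro n
    have h1 := Nat.card_le_card_of_injective
      (Subtype.val : {v : Fin n → A // isFinWord Y v} → (Fin n → A)) Subtype.val_injective
    calc Nat.card {v : Fin n → A // isFinWord Y v} ≤ Nat.card (Fin n → A) := h1
      _ = Fintype.card A ^ n := by rw [Nat.card_fun]; simp
  have hg0 : ∀ n, 0 ≤ g n := by
    intro n
    apply div_nonneg _ (Nat.cast_nonneg n)
    apply Real.log_nonneg
    exact_mod_cast hYw n
  have hf0 : ∀ n, 0 ≤ f n := by
    intro n
    apply div_nonneg _ (Nat.cast_nonneg n)
    apply Real.log_nonneg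
    exact_mod_cast hXw n
  have hgbd : ∀ n, g n ≤ Real.log (Fintype.card A) := by
    intro n
    rcases Nat.eq_zero_or_pos n with h | h
    · subst h
      simp only [hgdef, Nat.cast_zero, div_zero]
      exact Real.log_nonneg (by exact_mod_cast hA1)
    · rw [hgdef]
      simp only
      rw [div_le_iff₀ (by exact_mod_cast h)]
      calc Real.log (Nat.card {v : Fin n → A // isFinWord Y v})
          ≤ Real.log ((Fintype.card A : ℝ) ^ n) := by
            apply Real.log_le_log (by exact_mod_cast hYw n)
            exact_mod_cast hYcard n
        _ = n * Real.log (Fintype.card A) := by rw [Real.log_pow]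
        _ = Real.log (Fintype.card A) * n := mul_comm _ _
  have hcobf : Filter.IsCoboundedUnder (· ≤ ·) Filter.atTop f :=
    Filter.isCoboundedUnder_le_of_le Filter.atTop hf0
  have hcobg : Filter.IsCoboundedUnder (· ≤ ·) Filter.atTop g :=
    Filter.isCoboundedUnder_le_of_le Filter.atTop hg0
  have hbdg : Filter.IsBoundedUnder (· ≤ ·) Filter.atTop g :=
    Filter.isBoundedUnder_of ⟨Real.log (Fintype.card A), hgbd⟩
  have hLpos : (0 : ℝ) < L := by exact_mod_cast hL
  have hlog2 : (0 : ℝ) ≤ Real.log 2 := Real.log_nonneg one_le_two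
  have hmain : ∀ ε : ℝ, 0 < ε →
      Filter.limsup f Filter.atTop ≤ Filter.limsup g Filter.atTop + Real.log 2 / L + ε := by
    intro ε hε
    have hev : ∀ᶠ n : ℕ in Filter.atTop, f n ≤ g n + (Real.log 2 / L + ε) := by
      have htend : Filter.Tendsto
          (fun n : ℕ => (Real.log ((L : ℝ) * L) + Real.log 2) / n) Filter.atTop (nhds 0) :=
        tendsto_const_div_atTop_nhds_zero_nat _
      have hev1 := htend.eventually_lt_const hε
      filter_upwards [hev1, Filter.eventually_ge_atTop (2 * L),
        Filter.eventually_ge_atTop 1] with n h1 h2 h3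
      have hnpos : (0 : ℝ) < n := by exact_mod_cast h3
      have hC : (0 : ℝ) < (L : ℝ) * L * 2 ^ (n / L + 1) := by positivity
      have hcount := main_count hinv hL w wt hov hrepl n h2
      have hlog : Real.log (Nat.card {u : Fin n → A // isFinWord X u}) ≤
          Real.log (Nat.card {v : Fin n → A // isFinWord Y v}) +
            (Real.log ((L : ℝ) * L) + (((n / L : ℕ) : ℝ) + 1) * Real.log 2) := by
        calc Real.log (Nat.card {u : Fin n → A // isFinWord X u})
            ≤ Real.log ((Nat.card {v : Fin n → A // isFinWord Y v}) *
                ((L : ℝ) * L * 2 ^ (n / L + 1))) := by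
              apply Real.log_le_log (by exact_mod_cast hXw n)
              calc (Nat.card {u : Fin n → A // isFinWord X u} : ℝ)
                  ≤ ((Nat.card {v : Fin n → A // isFinWord Y v} *
                      (L * L * 2 ^ (n / L + 1)) : ℕ) : ℝ) := by exact_mod_cast hcount
                _ = (Nat.card {v : Fin n → A // isFinWord Y v}) *
                      ((L : ℝ) * L * 2 ^ (n / L + 1)) := by push_cast; ring
          _ = Real.log (Nat.card {v : Fin n → A // isFinWord Y v}) +
                Real.log ((L : ℝ) * L * 2 ^ (n / L + 1)) := by
              rw [Real.log_mul
                (by exact_mod_cast Nat.one_le_iff_ne_zero.mp (hYw n)) (ne_of_gt hC)]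
          _ = Real.log (Nat.card {v : Fin n → A // isFinWord Y v}) +
                (Real.log ((L : ℝ) * L) + (((n / L : ℕ) : ℝ) + 1) * Real.log 2) := by
              rw [Real.log_mul (by positivity) (by positivity), Real.log_pow]
              push_cast
              ring
      have hdiv : f n ≤ g n +
          (Real.log ((L : ℝ) * L) + (((n / L : ℕ) : ℝ) + 1) * Real.log 2) / n := by
        rw [hfdef, hgdef]
        simp only
        rw [← add_div]
        exact (div_le_div_iff_of_pos_right hnpos).mpr hlog
      have key : ((n / L : ℕ) : ℝ) * Real.log 2 / n ≤ Real.log 2 / L := by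
        rw [div_le_div_iff₀ hnpos hLpos]
        have h4 : ((n / L : ℕ) : ℝ) * L ≤ n := by exact_mod_cast Nat.div_mul_le_self n L
        nlinarith
      have split : (Real.log ((L : ℝ) * L) + (((n / L : ℕ) : ℝ) + 1) * Real.log 2) / n
          = (Real.log ((L : ℝ) * L) + Real.log 2) / n +
            ((n / L : ℕ) : ℝ) * Real.log 2 / n := by
        ring
      rw [split] at hdiv
      have := h1.le
      linarith
    have hbd' : Filter.IsBoundedUnder (· ≤ ·) Filter.atTop
        (fun n => g n + (Real.log 2 / L + ε)) :=
      Filter.isBoundedUnder_of ⟨Real.log (Fintype.card A) + (Real.log 2 / L + ε),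
        fun n => by have := hgbd n; linarith⟩
    have h5 := Filter.limsup_le_limsup hev hcobf hbd'
    have h6 := limsup_add_const Filter.atTop g (Real.log 2 / L + ε) hbdg hcobg
    rw [h6] at h5
    linarith
  by_contra hcon
  push_neg at hcon
  have hgap : 0 < (Filter.limsup f Filter.atTop -
      (Filter.limsup g Filter.atTop + Real.log 2 / L)) / 2 := by linarith
  have := hmain _ hgap
  linarith
end

section
/- Let (X, S) be a Borel dynamical system that is almost Borel strictly universal for the class B(t) of Borel systems with all ergodic invariant measure entropies < t. Then for any nonempty set I ⊆ ℝ, the product system (X × I, S × id) is almost Borel isomorphic to (X, S). -/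
open MeasureTheory

/-- A (standard) Borel dynamical system: a Borel automorphism of a standard Borel space. -/
structure BorelSys : Type 1 where
  carrier : Type
  mble : MeasurableSpace carrier
  std : @StandardBorelSpace carrier mble
  map : carrier ≃ carrier
  meas : @Measurable carrier carrier mble mble map
  meas_symm : @Measurable carrier carrier mble mble map.symm

attribute [instance] BorelSys.mble BorelSys.std

/-- The set of periodic points of an automorphism. -/
def perSet {α : Type*} (S : α ≃ α) : Set α := {x | ∃ n, 1 ≤ n ∧ (⇑S)^[n] x = x}

/-- A set is almost full if it has full measure for every aperiodic ergodic
invariant probability measure (i.e. its complement is almost null). -/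
def AlmostFull {α : Type*} [MeasurableSpace α] (S : α ≃ α) (B : Set α) : Prop :=
  ∀ μ : Measure α, IsProbabilityMeasure μ → Ergodic S μ → μ (perSet S) = 0 → μ B = 1

/-- `Z` almost Borel embeds into `W`. -/
def ABEmbeds (Z W : BorelSys) : Prop :=
  ∃ (X' : Set Z.carrier) (f : Z.carrier → W.carrier),
    MeasurableSet X' ∧ (∀ x ∈ X', Z.map x ∈ X' ∧ Z.map.symm x ∈ X') ∧
    AlmostFull Z.map X' ∧ Measurable f ∧ Set.InjOn f X' ∧
    ∀ x ∈ X', f (Z.map x) = W.map (f x)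

/-- `Z` and `W` are almost Borel isomorphic. -/
def ABIso (Z W : BorelSys) : Prop :=
  ∃ (X' : Set Z.carrier) (Y' : Set W.carrier)
    (f : Z.carrier → W.carrier) (g : W.carrier → Z.carrier),
    MeasurableSet X' ∧ MeasurableSet Y' ∧
    (∀ x ∈ X', Z.map x ∈ X' ∧ Z.map.symm x ∈ X') ∧
    (∀ y ∈ Y', W.map y ∈ Y' ∧ W.map.symm y ∈ Y') ∧
    AlmostFull Z.map X' ∧ AlmostFull W.map Y' ∧
    Measurable f ∧ Measurable g ∧ f '' X' = Y' ∧
    (∀ x ∈ X', g (f x) = x) ∧ (∀ y ∈ Y', f (g y) = y) ∧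
    ∀ x ∈ X', f (Z.map x) = W.map (f x)

/-- Entropy of `μ` relative to a finite partition coded by `P : α → Fin k`. -/
noncomputable def partitionEntropy {α : Type*} [MeasurableSpace α] (S : α → α)
    (μ : Measure α) {k : ℕ} (P : α → Fin k) : ℝ :=
  Filter.limsup (fun n : ℕ =>
    (∑ w : Fin (n + 1) → Fin k,
      Real.negMulLog ((μ {x | ∀ i : Fin (n + 1), P (S^[(i : ℕ)] x) = w i}).toReal)) / n)
    Filter.atTop

/-- Kolmogorov–Sinai entropy: supremum over finite measurable partitions. -/
noncomputable def kolSinai {α : Type*} [MeasurableSpace α] (S : α → α)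
    (μ : Measure α) : ENNReal :=
  ⨆ (k : ℕ) (P : {P : α → Fin k // Measurable P}), ENNReal.ofReal (partitionEntropy S μ P.1)

/-- The class `B(t)` of Borel systems all of whose ergodic invariant probability
measures have entropy `< t`. -/
def inClassB (t : ENNReal) (Z : BorelSys) : Prop :=
  ∀ μ : Measure Z.carrier, IsProbabilityMeasure μ → Ergodic Z.map μ → kolSinai Z.map μ < t

namespace Stmt16Aux

variable {A B : Type*} [MeasurableSpace A] [MeasurableSpace B]

set_option linter.unusedSectionVars false

lemma prob_of_compl_null (μ : Measure A) [IsProbabilityMeasure μ] {s : Set A}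
    (h : μ sᶜ = 0) : μ s = 1 := by
  refine le_antisymm prob_le_one ?_
  calc (1 : ENNReal) = μ Set.univ := measure_univ.symm
    _ ≤ μ s + μ sᶜ := by
        rw [← Set.union_compl_self s]; exact measure_union_le _ _
    _ = μ s := by rw [h, add_zero]

lemma meas_inter_full (μ : Measure A) {s t : Set A} (h : μ tᶜ = 0) :
    μ (s ∩ t) = μ s :=
  measure_inter_conull' (measure_mono_null (fun _ hx => hx.2) h)

lemma inter_one (μ : Measure A) [IsProbabilityMeasure μ] {s t : Set A}
    (ht : MeasurableSet t) (hs1 : μ s = 1) (ht1 : μ t = 1) : μ (s ∩ t) = 1 := by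
  rw [meas_inter_full μ ((prob_compl_eq_zero_iff ht).mpr ht1)]; exact hs1

lemma iInter_one (μ : Measure A) [IsProbabilityMeasure μ] {s : ℕ → Set A}
    (hm : ∀ n, MeasurableSet (s n)) (h1 : ∀ n, μ (s n) = 1) : μ (⋂ n, s n) = 1 := by
  apply prob_of_compl_null
  rw [Set.compl_iInter]
  refine le_antisymm ?_ zero_le
  calc μ (⋃ n, (s n)ᶜ) ≤ ∑' n, μ (s n)ᶜ := measure_iUnion_le _
    _ = 0 := by
        simp only [fun n => (prob_compl_eq_zero_iff (hm n)).mpr (h1 n)]; simp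

lemma inv_of_pair {T : A ≃ A} {X : Set A} (h : ∀ x ∈ X, T x ∈ X ∧ T.symm x ∈ X) :
    ⇑T ⁻¹' X = X := by
  ext x
  simp only [Set.mem_preimage]
  constructor
  · intro hTx
    have := (h _ hTx).2
    rwa [Equiv.symm_apply_apply] at this
  · intro hx; exact (h x hx).1

lemma pair_of_inv {T : A ≃ A} {X : Set A} (h : ⇑T ⁻¹' X = X) :
    ∀ x ∈ X, T x ∈ X ∧ T.symm x ∈ X := by
  intro x hx
  constructor
  · rw [← h] at hx; exact hx
  · rw [← h]; simpa [Set.mem_preimage] using hx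

lemma measurableSet_eq_fn {f g : B → A} [StandardBorelSpace A]
    (hf : Measurable f) (hg : Measurable g) : MeasurableSet {x | f x = g x} := by
  letI := upgradeStandardBorel A
  exact (hf.prodMk hg) isClosed_diagonal.measurableSet

lemma measurableSet_perSet {T : A ≃ A} [StandardBorelSpace A] (hT : Measurable ⇑T) :
    MeasurableSet (perSet T) := by
  have he : perSet T = ⋃ n : ℕ, {x | (⇑T)^[n + 1] x = x} := by
    ext x
    simp only [perSet, Set.mem_setOf_eq, Set.mem_iUnion]
    constructor
    · rintro ⟨n, hn, h⟩
      exact ⟨n - 1, by rwa [Nat.sub_add_cancel hn]⟩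
    · rintro ⟨n, h⟩
      exact ⟨n + 1, by omega, h⟩
  rw [he]
  exact MeasurableSet.iUnion fun n => measurableSet_eq_fn (hT.iterate (n + 1)) measurable_id

/-- Pushforward of an ergodic measure along an a.e. defined equivariant map. -/
lemma push_erg (T : A ≃ A) (U : B ≃ B) (hUm : Measurable ⇑U)
    {X' : Set A} (hX'm : MeasurableSet X') (hX'inv : ⇑T ⁻¹' X' = X')
    {f : A → B} (hfm : Measurable f) (hfeq : ∀ x ∈ X', f (T x) = U (f x))
    (μ : Measure A) [IsProbabilityMeasure μ] (herg : Ergodic ⇑T μ) (hfull : μ X' = 1) :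
    IsProbabilityMeasure (μ.map f) ∧ Ergodic ⇑U (μ.map f) := by
  have hXc : μ X'ᶜ = 0 := (prob_compl_eq_zero_iff hX'm).mpr hfull
  have hμi : ∀ s : Set A, μ (s ∩ X') = μ s := fun s => meas_inter_full μ hXc
  have key : ∀ E : Set B, f ⁻¹' (⇑U ⁻¹' E) ∩ X' = (⇑T ⁻¹' (f ⁻¹' E)) ∩ X' := by
    intro E
    ext x
    simp only [Set.mem_inter_iff, Set.mem_preimage, and_congr_left_iff]
    intro hx
    rw [hfeq x hx]
  haveI hprob : IsProbabilityMeasure (μ.map f) := Measure.isProbabilityMeasure_map hfm.aemeasurable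
  have hpres : ∀ E : Set B, MeasurableSet E → μ.map f (⇑U ⁻¹' E) = μ.map f E := by
    intro E hE
    rw [Measure.map_apply hfm (hUm hE), Measure.map_apply hfm hE,
      ← hμi (f ⁻¹' (⇑U ⁻¹' E)), key, ← hμi (f ⁻¹' E)]
    have h2 : ⇑T ⁻¹' (f ⁻¹' E) ∩ X' = ⇑T ⁻¹' (f ⁻¹' E ∩ X') := by
      rw [Set.preimage_inter, hX'inv]
    rw [h2]
    exact herg.toMeasurePreserving.measure_preimage ((hfm hE).inter hX'm).nullMeasurableSet
  refine ⟨hprob, ⟨⟨hUm, ?_⟩, ⟨?_⟩⟩⟩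
  · exact Measure.ext fun E hE => by rw [Measure.map_apply hUm hE]; exact hpres E hE
  · intro E hE hUE
    have hG : ⇑T ⁻¹' (f ⁻¹' E ∩ X') = f ⁻¹' E ∩ X' := by
      rw [Set.preimage_inter, hX'inv, ← key, hUE]
    have h01 := herg.prob_eq_zero_or_one ((hfm hE).inter hX'm) hG
    have hval : μ.map f E = μ (f ⁻¹' E ∩ X') := by
      rw [Measure.map_apply hfm hE, hμi]
    rw [Filter.eventuallyConst_set']
    rcases h01 with h | h
    · left
      rw [MeasureTheory.ae_eq_empty]
      rw [hval, h]
    · right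
      rw [MeasureTheory.ae_eq_univ, (prob_compl_eq_zero_iff hE), hval, h]

lemma push_aper (T : A ≃ A) (U : B ≃ B) [StandardBorelSpace B] (hUm : Measurable ⇑U)
    {X' : Set A} (hX'm : MeasurableSet X') (hX'inv : ⇑T ⁻¹' X' = X')
    {f : A → B} (hfm : Measurable f) (hfeq : ∀ x ∈ X', f (T x) = U (f x))
    (hfinj : Set.InjOn f X')
    (μ : Measure A) [IsProbabilityMeasure μ] (hfull : μ X' = 1)
    (hper : μ (perSet T) = 0) : μ.map f (perSet U) = 0 := by
  have hXc : μ X'ᶜ = 0 := (prob_compl_eq_zero_iff hX'm).mpr hfull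
  rw [Measure.map_apply hfm (measurableSet_perSet hUm),
    ← meas_inter_full μ hXc (s := f ⁻¹' perSet U)]
  refine measure_mono_null ?_ hper
  rintro x ⟨hxE, hxX⟩
  obtain ⟨n, hn, hUn⟩ := hxE
  have hTk : ∀ k : ℕ, (⇑T)^[k] x ∈ X' := by
    intro k
    induction k with
    | zero => exact hxX
    | succ k ih =>
      rw [Function.iterate_succ_apply']
      rw [← hX'inv] at ih
      exact ih
  have hcomm : ∀ k : ℕ, f ((⇑T)^[k] x) = (⇑U)^[k] (f x) := by
    intro k
    induction k with
    | zero => rfl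
    | succ k ih =>
      rw [Function.iterate_succ_apply', Function.iterate_succ_apply', hfeq _ (hTk k), ih]
  refine ⟨n, hn, ?_⟩
  apply hfinj (hTk n) hxX
  rw [hcomm n, hUn]

/-- Dynamical Cantor–Bernstein: an almost Borel embedding of `A` into `B` together with a
(total, retractible) Borel embedding of `B` into `A` yields an almost Borel isomorphism. -/
lemma sb {A B : Type*} [MeasurableSpace A] [StandardBorelSpace A]
    [MeasurableSpace B] [StandardBorelSpace B]
    (TA : A ≃ A) (TB : B ≃ B) (hTAm : Measurable ⇑TA) (hTBm : Measurable ⇑TB)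
    (X'' : Set A) (f : A → B) (hX''m : MeasurableSet X'')
    (hX''pair : ∀ x ∈ X'', TA x ∈ X'' ∧ TA.symm x ∈ X'')
    (hX''af : AlmostFull TA X'') (hfm : Measurable f) (hfinj : Set.InjOn f X'')
    (hfeq : ∀ x ∈ X'', f (TA x) = TB (f x))
    (g₀ : B → A) (hg₀m : Measurable g₀) (hg₀inj : Function.Injective g₀)
    (hg₀eq : ∀ b, g₀ (TB b) = TA (g₀ b))
    (r : A → B) (hrm : Measurable r) (hr : ∀ b, r (g₀ b) = b)
    (hreq : ∀ x, r (TA x) = TB (r x)) :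
    ∃ (X' : Set A) (Y' : Set B) (F : A → B) (G : B → A),
      MeasurableSet X' ∧ MeasurableSet Y' ∧
      (∀ x ∈ X', TA x ∈ X' ∧ TA.symm x ∈ X') ∧
      (∀ y ∈ Y', TB y ∈ Y' ∧ TB.symm y ∈ Y') ∧
      AlmostFull TA X' ∧ AlmostFull TB Y' ∧
      Measurable F ∧ Measurable G ∧ F '' X' = Y' ∧
      (∀ x ∈ X', G (F x) = x) ∧ (∀ y ∈ Y', F (G y) = y) ∧
      ∀ x ∈ X', F (TA x) = TB (F x) := by
  classical
  have hX''inv : ⇑TA ⁻¹' X'' = X'' := inv_of_pair hX''pair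
  have hfeqs : ∀ x ∈ X'', f (TA.symm x) = TB.symm (f x) := by
    intro x hx
    have h1 : TA.symm x ∈ X'' := (hX''pair x hx).2
    have h2 := hfeq _ h1
    rw [Equiv.apply_symm_apply] at h2
    rw [h2, Equiv.symm_apply_apply]
  -- stabilization sequences
  set Q : ℕ → Set A × Set B := fun n => Nat.rec (X'', Set.univ)
    (fun _ p => (p.1 ∩ f ⁻¹' p.2, p.2 ∩ g₀ ⁻¹' (p.1 ∩ f ⁻¹' p.2))) n with hQ
  have hQs : ∀ n, Q (n + 1)
      = ((Q n).1 ∩ f ⁻¹' (Q n).2, (Q n).2 ∩ g₀ ⁻¹' ((Q n).1 ∩ f ⁻¹' (Q n).2)) :=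
    fun n => rfl
  have hprops : ∀ n, (MeasurableSet (Q n).1 ∧ MeasurableSet (Q n).2) ∧
      (⇑TA ⁻¹' (Q n).1 = (Q n).1 ∧ ⇑TB ⁻¹' (Q n).2 = (Q n).2) ∧
      (Q n).1 ⊆ X'' ∧ (AlmostFull TA (Q n).1 ∧ AlmostFull TB (Q n).2) := by
    intro n
    induction n with
    | zero =>
      exact ⟨⟨hX''m, .univ⟩, ⟨hX''inv, Set.preimage_univ⟩, subset_rfl, hX''af,
        fun μ hμ _ _ => by haveI := hμ; exact measure_univ⟩
    | succ n ih =>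
      obtain ⟨⟨hXm, hBm⟩, ⟨hXinv, hBinv⟩, hXsub, hXaf, hBaf⟩ := ih
      have hX1m : MeasurableSet ((Q n).1 ∩ f ⁻¹' (Q n).2) := hXm.inter (hfm hBm)
      have hX1inv : ⇑TA ⁻¹' ((Q n).1 ∩ f ⁻¹' (Q n).2) = (Q n).1 ∩ f ⁻¹' (Q n).2 := by
        rw [Set.preimage_inter, hXinv]
        ext x
        simp only [Set.mem_inter_iff, Set.mem_preimage, and_congr_right_iff]
        intro hx
        constructor
        · intro h
          rw [hfeq x (hXsub hx)] at h
          have : f x ∈ ⇑TB ⁻¹' (Q n).2 := h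
          rwa [hBinv] at this
        · intro h
          show f (TA x) ∈ (Q n).2
          rw [hfeq x (hXsub hx)]
          rw [← hBinv] at h
          exact h
      have hX1sub : (Q n).1 ∩ f ⁻¹' (Q n).2 ⊆ X'' := Set.inter_subset_left.trans hXsub
      have hX1af : AlmostFull TA ((Q n).1 ∩ f ⁻¹' (Q n).2) := by
        intro μ hμp hμe hμa
        haveI := hμp
        have hfull := hX''af μ hμp hμe hμa
        obtain ⟨hp2, he2⟩ := push_erg TA TB hTBm hX''m hX''inv hfm hfeq μ hμe hfull
        haveI := hp2
        have ha2 := push_aper TA TB hTBm hX''m hX''inv hfm hfeq hfinj μ hfull hμa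
        have h1 : μ (f ⁻¹' (Q n).2) = 1 := by
          rw [← Measure.map_apply hfm hBm]; exact hBaf _ hp2 he2 ha2
        exact inter_one μ (hfm hBm) (hXaf μ hμp hμe hμa) h1
      have hB1m : MeasurableSet ((Q n).2 ∩ g₀ ⁻¹' ((Q n).1 ∩ f ⁻¹' (Q n).2)) :=
        hBm.inter (hg₀m hX1m)
      have hB1inv : ⇑TB ⁻¹' ((Q n).2 ∩ g₀ ⁻¹' ((Q n).1 ∩ f ⁻¹' (Q n).2))
          = (Q n).2 ∩ g₀ ⁻¹' ((Q n).1 ∩ f ⁻¹' (Q n).2) := by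
        rw [Set.preimage_inter, hBinv]
        have : ⇑TB ⁻¹' (g₀ ⁻¹' ((Q n).1 ∩ f ⁻¹' (Q n).2))
            = g₀ ⁻¹' (⇑TA ⁻¹' ((Q n).1 ∩ f ⁻¹' (Q n).2)) := by
          ext b
          simp only [Set.mem_preimage, hg₀eq]
        rw [this, hX1inv]
      have hB1af : AlmostFull TB ((Q n).2 ∩ g₀ ⁻¹' ((Q n).1 ∩ f ⁻¹' (Q n).2)) := by
        intro μ hμp hμe hμa
        haveI := hμp
        obtain ⟨hp2, he2⟩ := push_erg TB TA hTAm MeasurableSet.univ (by simp) hg₀m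
          (fun b _ => hg₀eq b) μ hμe measure_univ
        haveI := hp2
        have ha2 := push_aper TB TA hTAm MeasurableSet.univ (by simp) hg₀m
          (fun b _ => hg₀eq b) hg₀inj.injOn μ measure_univ hμa
        have h1 : μ (g₀ ⁻¹' ((Q n).1 ∩ f ⁻¹' (Q n).2)) = 1 := by
          rw [← Measure.map_apply hg₀m hX1m]; exact hX1af _ hp2 he2 ha2
        exact inter_one μ (hg₀m hX1m) (hBaf μ hμp hμe hμa) h1
      exact ⟨⟨hX1m, hB1m⟩, ⟨hX1inv, hB1inv⟩, hX1sub, hX1af, hB1af⟩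
  set Xh := ⋂ n, (Q n).1 with hXh
  set Bh := ⋂ n, (Q n).2 with hBh
  have hXhm : MeasurableSet Xh := MeasurableSet.iInter fun n => (hprops n).1.1
  have hBhm : MeasurableSet Bh := MeasurableSet.iInter fun n => (hprops n).1.2
  have hXhinv : ⇑TA ⁻¹' Xh = Xh := by
    rw [hXh, Set.preimage_iInter]
    exact Set.iInter_congr fun n => (hprops n).2.1.1
  have hBhinv : ⇑TB ⁻¹' Bh = Bh := by
    rw [hBh, Set.preimage_iInter]
    exact Set.iInter_congr fun n => (hprops n).2.1.2
  have hXhaf : AlmostFull TA Xh := fun μ hμp hμe hμa => by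
    haveI := hμp
    exact iInter_one μ (fun n => (hprops n).1.1) (fun n => (hprops n).2.2.2.1 μ hμp hμe hμa)
  have hBhaf : AlmostFull TB Bh := fun μ hμp hμe hμa => by
    haveI := hμp
    exact iInter_one μ (fun n => (hprops n).1.2) (fun n => (hprops n).2.2.2.2 μ hμp hμe hμa)
  have hXhsub : Xh ⊆ X'' := (Set.iInter_subset _ 0).trans (hprops 0).2.2.1
  have hfXh : ∀ x ∈ Xh, f x ∈ Bh := by
    intro x hx
    rw [hBh, Set.mem_iInter]
    intro n
    have hx1 : x ∈ (Q (n + 1)).1 := Set.mem_iInter.mp hx (n + 1)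
    rw [hQs n] at hx1
    exact hx1.2
  have hg₀Bh : ∀ b ∈ Bh, g₀ b ∈ Xh := by
    intro b hb
    have key : ∀ n, g₀ b ∈ (Q (n + 1)).1 := by
      intro n
      have hb1 : b ∈ (Q (n + 1)).2 := Set.mem_iInter.mp hb (n + 1)
      rw [hQs n] at hb1
      exact hb1.2
    rw [hXh, Set.mem_iInter]
    intro n
    cases n with
    | zero =>
      have := key 0
      rw [hQs 0] at this
      exact this.1
    | succ m => exact key m
  -- Schröder–Bernstein sets
  set CC : ℕ → Set A := fun n => Nat.rec (Xh \ (g₀ '' Bh)) (fun _ s => g₀ '' (f '' s)) n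
    with hCC
  have hCCs : ∀ n, CC (n + 1) = g₀ '' (f '' CC n) := fun n => rfl
  -- measurable images
  haveI := hX''m.standardBorel
  have hfE : MeasurableEmbedding (fun x : ↥X'' => f ↑x) :=
    (hfm.comp measurable_subtype_coe).measurableEmbedding
      (fun a b h => Subtype.ext (hfinj a.2 b.2 h))
  have himg : ∀ S : Set A, S ⊆ X'' → MeasurableSet S → MeasurableSet (f '' S) := by
    intro S hsub hSm
    have he : f '' S = (fun x : ↥X'' => f ↑x) '' (Subtype.val ⁻¹' S) := by
      ext b
      simp only [Set.mem_image, Set.mem_preimage, Subtype.exists, exists_and_right]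
      constructor
      · rintro ⟨x, hxS, rfl⟩
        exact ⟨x, ⟨hsub hxS, hxS⟩, rfl⟩
      · rintro ⟨x, ⟨hx2, hxS⟩, rfl⟩
        exact ⟨x, hxS, rfl⟩
    rw [he]
    exact hfE.measurableSet_image.2 (measurable_subtype_coe hSm)
  have hg₀emb : MeasurableEmbedding g₀ := hg₀m.measurableEmbedding hg₀inj
  have hg₀img : ∀ S : Set B, MeasurableSet S → MeasurableSet (g₀ '' S) :=
    fun S hS => hg₀emb.measurableSet_image.2 hS
  -- invariance of images
  have hg₀S_inv : ∀ S : Set B, ⇑TB ⁻¹' S = S → ⇑TA ⁻¹' (g₀ '' S) = g₀ '' S := by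
    intro S hS
    ext x
    simp only [Set.mem_preimage, Set.mem_image]
    constructor
    · rintro ⟨b, hb, hbeq⟩
      refine ⟨TB.symm b, ?_, ?_⟩
      · have := (pair_of_inv hS b hb).2; exact this
      · apply TA.injective
        rw [← hg₀eq, Equiv.apply_symm_apply, hbeq]
    · rintro ⟨b, hb, rfl⟩
      exact ⟨TB b, (pair_of_inv hS b hb).1, hg₀eq b⟩
  have hfS_inv : ∀ S : Set A, S ⊆ X'' → ⇑TA ⁻¹' S = S → ⇑TB ⁻¹' (f '' S) = f '' S := by
    intro S hsub hS
    ext y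
    simp only [Set.mem_preimage, Set.mem_image]
    constructor
    · rintro ⟨s, hs, hseq⟩
      refine ⟨TA.symm s, (pair_of_inv hS s hs).2, ?_⟩
      apply TB.injective
      rw [← hfeq _ (hX''pair _ (hsub hs)).2, Equiv.apply_symm_apply, hseq]
    · rintro ⟨s, hs, rfl⟩
      exact ⟨TA s, (pair_of_inv hS s hs).1, hfeq s (hsub hs)⟩
  have hCCp : ∀ n, (CC n ⊆ Xh ∧ MeasurableSet (CC n)) ∧ ⇑TA ⁻¹' CC n = CC n := by
    intro n
    induction n with
    | zero =>
      refine ⟨⟨Set.diff_subset, hXhm.diff (hg₀img _ hBhm)⟩, ?_⟩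
      show ⇑TA ⁻¹' (Xh \ (g₀ '' Bh)) = Xh \ (g₀ '' Bh)
      rw [Set.preimage_diff, hXhinv, hg₀S_inv _ hBhinv]
    | succ n ih =>
      obtain ⟨⟨hsub, hm⟩, hinv⟩ := ih
      rw [hCCs n]
      have hfsub : f '' CC n ⊆ Bh := by
        rintro y ⟨x, hx, rfl⟩
        exact hfXh x (hsub hx)
      refine ⟨⟨?_, hg₀img _ (himg _ (hsub.trans hXhsub) hm)⟩, ?_⟩
      · rintro x ⟨y, hy, rfl⟩
        exact hg₀Bh y (hfsub hy)
      · rw [hg₀S_inv _ (hfS_inv _ (hsub.trans hXhsub) hinv)]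
  set C := ⋃ n, CC n with hC
  have hCm : MeasurableSet C := MeasurableSet.iUnion fun n => (hCCp n).1.2
  have hCsub : C ⊆ Xh := Set.iUnion_subset fun n => (hCCp n).1.1
  have hCinv : ⇑TA ⁻¹' C = C := by
    rw [hC, Set.preimage_iUnion]
    exact Set.iUnion_congr fun n => (hCCp n).2
  set D := f '' C with hD
  have hDm : MeasurableSet D := himg C (hCsub.trans hXhsub) hCm
  have kf2 : ∀ b ∈ D, g₀ b ∈ C := by
    rintro b ⟨x, hxC, rfl⟩
    obtain ⟨n, hn⟩ := Set.mem_iUnion.mp hxC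
    apply Set.mem_iUnion.mpr ⟨n + 1, ?_⟩
    rw [hCCs n]
    exact ⟨f x, ⟨x, hn, rfl⟩, rfl⟩
  have kf1 : ∀ b ∈ Bh, g₀ b ∈ C → b ∈ D := by
    intro b hb hgC
    obtain ⟨n, hn⟩ := Set.mem_iUnion.mp hgC
    cases n with
    | zero => exact absurd ⟨b, hb, rfl⟩ hn.2
    | succ m =>
      rw [hCCs m] at hn
      obtain ⟨y, hy, heq⟩ := hn
      rw [hg₀inj heq] at hy
      exact Set.image_mono (Set.subset_iUnion CC m) hy
  have kf3 : Xh \ C ⊆ g₀ '' Bh := by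
    intro x hx
    by_contra hxg
    exact hx.2 (Set.mem_iUnion.mpr ⟨0, hx.1, hxg⟩)
  -- the isomorphism
  set F : A → B := fun x => if x ∈ C then f x else r x with hF
  set G : B → A := fun b => if h : ∃ x, x ∈ C ∧ f x = b then h.choose else g₀ b with hG
  have hGD : ∀ b ∈ D, G b ∈ C ∧ f (G b) = b := by
    intro b hb
    obtain ⟨x, hx, hxe⟩ := hb
    have hex : ∃ x, x ∈ C ∧ f x = b := ⟨x, hx, hxe⟩
    rw [hG]
    simp only [dif_pos hex]
    exact hex.choose_spec
  have hGD' : ∀ b ∉ D, G b = g₀ b := by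
    intro b hb
    rw [hG]
    have : ¬ ∃ x, x ∈ C ∧ f x = b := by
      rintro ⟨x, hx, rfl⟩
      exact hb ⟨x, hx, rfl⟩
    simp only [dif_neg this]
  have hCX : C ⊆ X'' := hCsub.trans hXhsub
  have hFC : ∀ x ∈ C, F x = f x := fun x hx => if_pos hx
  have hFnC : ∀ x ∉ C, F x = r x := fun x hx => if_neg hx
  have hGm : Measurable G := by
    intro E hE
    have heq : G ⁻¹' E = (f '' (C ∩ E)) ∪ (Dᶜ ∩ g₀ ⁻¹' E) := by
      ext b
      simp only [Set.mem_preimage, Set.mem_union, Set.mem_inter_iff, Set.mem_compl_iff]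
      constructor
      · intro hbE
        by_cases hbD : b ∈ D
        · left
          obtain ⟨hGC, hGf⟩ := hGD b hbD
          exact ⟨G b, ⟨hGC, hbE⟩, hGf⟩
        · right
          refine ⟨hbD, ?_⟩
          rw [← hGD' b hbD]
          exact hbE
      · rintro (⟨x, ⟨hxC, hxE⟩, rfl⟩ | ⟨hbD, hbE⟩)
        · have hbD : f x ∈ D := ⟨x, hxC, rfl⟩
          obtain ⟨hGC, hGf⟩ := hGD _ hbD
          have hGx : G (f x) = x := hfinj (hCX hGC) (hCX hxC) hGf
          rw [hGx]
          exact hxE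
        · rw [hGD' b hbD]
          exact hbE
    rw [heq]
    exact ((himg _ (Set.inter_subset_left.trans hCX) (hCm.inter hE)).union
      (hDm.compl.inter (hg₀m hE)))
  have hFm : Measurable F := Measurable.ite hCm hfm hrm
  have himgeq : F '' Xh = Bh := by
    apply Set.Subset.antisymm
    · rintro y ⟨x, hx, rfl⟩
      by_cases hxC : x ∈ C
      · rw [hFC x hxC]
        exact hfXh x hx
      · obtain ⟨b, hb, rfl⟩ := kf3 ⟨hx, hxC⟩
        rw [hFnC _ hxC, hr]
        exact hb
    · intro b hb
      by_cases hbC : g₀ b ∈ C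
      · obtain ⟨x, hxC, hxe⟩ := kf1 b hb hbC
        exact ⟨x, hCsub hxC, by rw [hFC x hxC]; exact hxe⟩
      · refine ⟨g₀ b, hg₀Bh b hb, ?_⟩
        rw [hFnC _ hbC, hr]
  have hgf : ∀ x ∈ Xh, G (F x) = x := by
    intro x hx
    by_cases hxC : x ∈ C
    · rw [hFC x hxC]
      have hbD : f x ∈ D := ⟨x, hxC, rfl⟩
      obtain ⟨hGC, hGf⟩ := hGD _ hbD
      exact hfinj (hCX hGC) (hXhsub hx) hGf
    · obtain ⟨b, hb, rfl⟩ := kf3 ⟨hx, hxC⟩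
      rw [hFnC _ hxC, hr]
      have hbD : b ∉ D := fun h => hxC (kf2 b h)
      rw [hGD' b hbD]
  have hfg : ∀ b ∈ Bh, F (G b) = b := by
    intro b hb
    by_cases hbD : b ∈ D
    · obtain ⟨hGC, hGf⟩ := hGD b hbD
      rw [hFC _ hGC, hGf]
    · rw [hGD' b hbD]
      have hgC : g₀ b ∉ C := fun h => hbD (kf1 b hb h)
      rw [hFnC _ hgC, hr]
  have hequiv : ∀ x ∈ Xh, F (TA x) = TB (F x) := by
    intro x hx
    by_cases hxC : x ∈ C
    · have hTx : TA x ∈ C := by rw [← hCinv] at hxC; exact hxC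
      rw [hFC _ hTx, hFC _ hxC]
      exact hfeq x (hCX hxC)
    · have hTx : TA x ∉ C := by
        intro h
        apply hxC
        rw [← hCinv]
        exact h
      rw [hFnC _ hTx, hFnC _ hxC]
      exact hreq x
  exact ⟨Xh, Bh, F, G, hXhm, hBhm, pair_of_inv hXhinv, pair_of_inv hBhinv, hXhaf, hBhaf,
    hFm, hGm, himgeq, hgf, hfg, hequiv⟩

end Stmt16Aux

open Stmt16Aux in
/-- If `(X, S)` is almost Borel strictly universal for `B(t)`, then for any nonempty
(Borel) `I ⊆ ℝ`, the product system `(X × I, S × id)` is almost Borel isomorphic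
to `(X, S)`. -/
theorem stmt16 (t : ENNReal) (Z : BorelSys) (hmem : inClassB t Z)
    (huniv : ∀ W : BorelSys, inClassB t W → ABEmbeds W Z)
    (I : Set ℝ) (hne : I.Nonempty) (hImeas : MeasurableSet I) :
    ABIso
      { carrier := Z.carrier × ↥I
        mble := inferInstance
        std := by haveI := hImeas.standardBorel; infer_instance
        map := (Z.map).prodCongr (Equiv.refl ↥I)
        meas := by exact Z.meas.prodMap measurable_id
        meas_symm := by exact Z.meas_symm.prodMap measurable_id }
      Z := by
  classical
  haveI hIstd : StandardBorelSpace ↥I := hImeas.standardBorel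
  haveI hInem : Nonempty ↥I := ⟨⟨hne.choose, hne.choose_spec⟩⟩
  let c₀ : ↥I := ⟨hne.choose, hne.choose_spec⟩
  let W : BorelSys :=
    { carrier := Z.carrier × ↥I
      mble := inferInstance
      std := by haveI := hImeas.standardBorel; infer_instance
      map := (Z.map).prodCongr (Equiv.refl ↥I)
      meas := by exact Z.meas.prodMap measurable_id
      meas_symm := by exact Z.meas_symm.prodMap measurable_id }
  show ABIso W Z
  have hiter : ∀ (n : ℕ) (p : Z.carrier × ↥I),
      (⇑W.map)^[n] p = ((⇑Z.map)^[n] p.1, p.2) := by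
    intro n
    induction n with
    | zero => intro p; rfl
    | succ n ih =>
      intro p
      rw [Function.iterate_succ_apply', Function.iterate_succ_apply', ih]
      rfl
  -- Step 1: the product system is in the class `B(t)`.
  have hWc : inClassB t W := by
    intro μ hμp hμe
    haveI := hμp
    obtain ⟨c, hc⟩ := hμe.ae_eq_const_of_ae_eq_comp₀
      (g := fun p : Z.carrier × ↥I => p.2) measurable_snd.nullMeasurable
      (Filter.Eventually.of_forall fun p => rfl)
    have hcc : μ {p : Z.carrier × ↥I | p.2 = c}ᶜ = 0 := by
      rw [Set.compl_setOf]
      exact hc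
    obtain ⟨hνp, hνe⟩ := push_erg W.map Z.map Z.meas MeasurableSet.univ Set.preimage_univ
      measurable_fst (fun x _ => rfl) μ hμe measure_univ
    haveI := hνp
    refine lt_of_le_of_lt ?_ (hmem _ hνp hνe)
    -- entropy comparison
    refine iSup_le fun k => iSup_le fun P => ?_
    set P' : Z.carrier → Fin k := fun z => P.1 (z, c) with hP'
    have hP'm : Measurable P' := P.2.comp measurable_prodMk_right
    have hpe : partitionEntropy (⇑W.map) μ P.1
        = partitionEntropy (⇑Z.map) (μ.map Prod.fst) P' := by
      unfold partitionEntropy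
      congr 1
      funext n
      congr 1
      refine Finset.sum_congr rfl fun w _ => ?_
      congr 2
      have hA'm : MeasurableSet {z : Z.carrier | ∀ i : Fin (n + 1), P' ((⇑Z.map)^[(i : ℕ)] z) = w i} := by
        have he : {z : Z.carrier | ∀ i : Fin (n + 1), P' ((⇑Z.map)^[(i : ℕ)] z) = w i}
            = ⋂ i : Fin (n + 1), (fun z => P' ((⇑Z.map)^[(i : ℕ)] z)) ⁻¹' {w i} := by
          ext z; simp [Set.mem_iInter]
        rw [he]
        exact MeasurableSet.iInter fun i =>
          (hP'm.comp (Z.meas.iterate _)) (measurableSet_singleton _)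
      rw [Measure.map_apply measurable_fst hA'm]
      rw [← measure_inter_conull' (measure_mono_null (fun _ hx => hx.2) hcc),
        ← measure_inter_conull' (μ := μ)
          (s := Prod.fst ⁻¹' {z : Z.carrier | ∀ i : Fin (n + 1), P' ((⇑Z.map)^[(i : ℕ)] z) = w i})
          (measure_mono_null (fun _ hx => hx.2) hcc)]
      congr 1
      ext p
      simp only [Set.mem_inter_iff, Set.mem_setOf_eq, Set.mem_preimage, and_congr_left_iff]
      intro hp2
      constructor
      · intro h i
        have hh := h i
        rw [hiter] at hh
        rw [hP', ← hp2]
        exact hh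
      · intro h i
        rw [hiter]
        have hh := h i
        rw [hP', ← hp2] at hh
        exact hh
    rw [hpe]
    exact le_iSup_of_le k (le_iSup_of_le ⟨P', hP'm⟩ le_rfl)
  -- Step 2: almost Borel embedding of the product system into `Z`.
  obtain ⟨X'', f, hX''m, hX''pair, hX''af, hfm, hfinj, hfeq⟩ := huniv W hWc
  -- Step 3: dynamical Cantor–Bernstein.
  obtain ⟨X', Y', F, G, h1, h2, h3, h4, h5, h6, h7, h8, h9, h10, h11, h12⟩ :=
    sb (A := Z.carrier × ↥I) (B := Z.carrier) W.map Z.map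
      (Z.meas.prodMap measurable_id) Z.meas X'' f hX''m hX''pair hX''af hfm hfinj hfeq
      (fun b => (b, c₀)) measurable_prodMk_right (fun a b h => congrArg Prod.fst h)
      (fun b => rfl) Prod.fst measurable_fst (fun b => rfl) (fun x => rfl)
  exact ⟨X', Y', F, G, h1, h2, h3, h4, h5, h6, h7, h8, h9, h10, h11, h12⟩
end
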